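/- arXiv:1711.02118 — 6 statements merged into one kernel-verified Lean document; each statement's English description precedes it below -/
import Mathlib

section
/- Let ν be a positive odd integer, I = ⋃_{j=1}^{(ν+1)/2} ((2j−2)π/(ν+1), (2j−1)π/(ν+1)) and I' = ⋃_{j=1}^{(ν+1)/2} ((2j−1)π/(ν+1), 2jπ/(ν+1)), both subsets of [0, π]. Then (4/π²)·∫_I ∫_{I'} sin²(θ₁) sin²(θ₂) dθ₂ dθ₁ = 1/4, and the same value 1/4 is obtained for each of the products I×I, I'×I', and I'×I. -/
open Real MeasureTheory

private lemma biUnion_sin_sq (m : ℕ) (c d : ℕ → ℝ) (hcd : ∀ j, c j ≤ d j)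
    (hmono : ∀ j k, j < k → d j ≤ c k) :
    ∫ x in ⋃ j ∈ Finset.Icc 1 m, Set.Ioo (c j) (d j), Real.sin x ^ 2
      = ∑ j ∈ Finset.Icc 1 m, ∫ x in (c j)..(d j), Real.sin x ^ 2 := by
  rw [MeasureTheory.integral_biUnion_finset]
  · exact Finset.sum_congr rfl fun j _ => by
      rw [intervalIntegral.integral_of_le (hcd j), integral_Ioc_eq_integral_Ioo]
  · intro j _; exact measurableSet_Ioo
  · intro j _ k _ hjk
    have key : ∀ a b : ℕ, a < b → Disjoint (Set.Ioo (c a) (d a)) (Set.Ioo (c b) (d b)) := by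
      intro a b h
      exact Set.Ioo_disjoint_Ioo.2 ((min_le_left _ _).trans ((hmono a b h).trans (le_max_right _ _)))
    rcases hjk.lt_or_gt with h | h
    · exact key j k h
    · exact (key k j h).symm
  · intro j _
    exact ((Continuous.intervalIntegrable (by continuity) (c j) (d j)).1).mono_set
      Set.Ioo_subset_Ioc_self

private lemma sinsq_ii (a b : ℝ) :
    IntervalIntegrable (fun x => Real.sin x ^ 2) volume a b :=
  Continuous.intervalIntegrable (by continuity) a b

private lemma sum_G_eq (m : ℕ) (hm : 1 ≤ m) :
    (∑ j ∈ Finset.Icc 1 m,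
      ∫ x in ((2*(j:ℝ)-2)*π/(2*(m:ℝ)))..((2*(j:ℝ)-1)*π/(2*(m:ℝ))), Real.sin x ^ 2) = π/4 ∧
    (∑ j ∈ Finset.Icc 1 m,
      ∫ x in ((2*(j:ℝ)-1)*π/(2*(m:ℝ)))..((2*(j:ℝ))*π/(2*(m:ℝ))), Real.sin x ^ 2) = π/4 := by
  have hm0 : (0:ℝ) < (m:ℝ) := by exact_mod_cast hm
  set G : ℕ → ℝ := fun j =>
    ∫ x in ((2*(j:ℝ)-2)*π/(2*(m:ℝ)))..((2*(j:ℝ)-1)*π/(2*(m:ℝ))), Real.sin x ^ 2 with hG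
  set H : ℕ → ℝ := fun j =>
    ∫ x in ((2*(j:ℝ)-1)*π/(2*(m:ℝ)))..((2*(j:ℝ))*π/(2*(m:ℝ))), Real.sin x ^ 2 with hH
  -- total sum
  have htot : (∑ j ∈ Finset.Icc 1 m, G j) + (∑ j ∈ Finset.Icc 1 m, H j) = π/2 := by
    rw [← Finset.sum_add_distrib]
    have step : ∀ j ∈ Finset.Icc 1 m, G j + H j =
        ∫ x in ((2*(j:ℝ)-2)*π/(2*(m:ℝ)))..((2*(j:ℝ))*π/(2*(m:ℝ))), Real.sin x ^ 2 := by
      intro j _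
      exact intervalIntegral.integral_add_adjacent_intervals (sinsq_ii _ _) (sinsq_ii _ _)
    rw [Finset.sum_congr rfl step]
    have reindex : ∑ j ∈ Finset.Icc 1 m,
        (∫ x in ((2*(j:ℝ)-2)*π/(2*(m:ℝ)))..((2*(j:ℝ))*π/(2*(m:ℝ))), Real.sin x ^ 2)
        = ∑ i ∈ Finset.range m,
        (∫ x in ((2*(i:ℝ))*π/(2*(m:ℝ)))..((2*((i:ℝ)+1))*π/(2*(m:ℝ))), Real.sin x ^ 2) := by
      refine Finset.sum_nbij' (fun j => j - 1) (fun i => i + 1) ?_ ?_ ?_ ?_ ?_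
      · intro a ha; simp only [Finset.mem_Icc] at ha; simp only [Finset.mem_range]; omega
      · intro a ha; simp only [Finset.mem_range] at ha; simp only [Finset.mem_Icc]; omega
      · intro a ha; simp only [Finset.mem_Icc] at ha; omega
      · intro a ha; omega
      · intro a ha
        simp only [Finset.mem_Icc] at ha
        have : ((a - 1 : ℕ) : ℝ) = (a : ℝ) - 1 := by
          have : (1:ℕ) ≤ a := ha.1
          push_cast [Nat.cast_sub this]; ring
        rw [this]; norm_num; ring_nf
    rw [reindex]
    have := intervalIntegral.sum_integral_adjacent_intervals
      (a := fun k : ℕ => (2*(k:ℝ))*π/(2*(m:ℝ))) (n := m)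
      (f := fun x => Real.sin x ^ 2) (μ := volume) (fun k _ => sinsq_ii _ _)
    simp only [Nat.cast_add, Nat.cast_one] at this ⊢
    rw [this]
    have h0 : (2*((0:ℕ):ℝ))*π/(2*(m:ℝ)) = 0 := by norm_num
    have h1 : (2*((m:ℕ):ℝ))*π/(2*(m:ℝ)) = π := by field_simp
    rw [h0, h1, integral_sin_sq]
    simp [Real.sin_pi]
  -- reflection: H j = G (m + 1 - j)
  have hHG : ∀ j ∈ Finset.Icc 1 m, H j = G (m + 1 - j) := by
    intro j hj
    simp only [Finset.mem_Icc] at hj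
    have hcast : ((m + 1 - j : ℕ) : ℝ) = (m:ℝ) + 1 - (j:ℝ) := by
      push_cast [Nat.cast_sub (by omega : j ≤ m + 1)]; ring
    simp only [hG, hH, hcast]
    have : ∀ x : ℝ, Real.sin x ^ 2 = Real.sin (π - x) ^ 2 := fun x => by
      rw [Real.sin_pi_sub]
    calc ∫ x in ((2*(j:ℝ)-1)*π/(2*(m:ℝ)))..((2*(j:ℝ))*π/(2*(m:ℝ))), Real.sin x ^ 2
        = ∫ x in ((2*(j:ℝ)-1)*π/(2*(m:ℝ)))..((2*(j:ℝ))*π/(2*(m:ℝ))),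
            Real.sin (π - x) ^ 2 := by
          exact intervalIntegral.integral_congr fun x _ => this x
      _ = ∫ x in (π - (2*(j:ℝ))*π/(2*(m:ℝ)))..(π - (2*(j:ℝ)-1)*π/(2*(m:ℝ))),
            Real.sin x ^ 2 := by
          exact intervalIntegral.integral_comp_sub_left (fun y => Real.sin y ^ 2) π
      _ = ∫ x in ((2*((m:ℝ)+1-(j:ℝ))-2)*π/(2*(m:ℝ)))..((2*((m:ℝ)+1-(j:ℝ))-1)*π/(2*(m:ℝ))),
            Real.sin x ^ 2 := by
          congr 1 <;> field_simp <;> ring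
  have hsumHG : (∑ j ∈ Finset.Icc 1 m, H j) = ∑ j ∈ Finset.Icc 1 m, G j := by
    rw [Finset.sum_congr rfl hHG]
    refine Finset.sum_nbij' (fun j => m + 1 - j) (fun j => m + 1 - j) ?_ ?_ ?_ ?_ ?_ <;>
      intro a ha <;> simp only [Finset.mem_Icc] at * <;> omega
  constructor
  · linarith
  · linarith

/-- 2-product Sato-Tate measure computation: for odd `ν`, each of the four products
`I×I'`, `I×I`, `I'×I'`, `I'×I` has 2-product Sato-Tate measure `1/4`. -/
theorem sato_tate_product_measure_quarter
    (ν : ℕ) (hν : Odd ν) (hν' : 0 < ν)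
    (I I' : Set ℝ)
    (hI : I = ⋃ j ∈ Finset.Icc 1 ((ν + 1) / 2),
        Set.Ioo ((2 * (j : ℝ) - 2) * π / ((ν : ℝ) + 1))
                ((2 * (j : ℝ) - 1) * π / ((ν : ℝ) + 1)))
    (hI' : I' = ⋃ j ∈ Finset.Icc 1 ((ν + 1) / 2),
        Set.Ioo ((2 * (j : ℝ) - 1) * π / ((ν : ℝ) + 1))
                (2 * (j : ℝ) * π / ((ν : ℝ) + 1))) :
    (4 / π ^ 2) * (∫ θ₁ in I, ∫ θ₂ in I', Real.sin θ₁ ^ 2 * Real.sin θ₂ ^ 2) = 1 / 4 ∧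
    (4 / π ^ 2) * (∫ θ₁ in I, ∫ θ₂ in I, Real.sin θ₁ ^ 2 * Real.sin θ₂ ^ 2) = 1 / 4 ∧
    (4 / π ^ 2) * (∫ θ₁ in I', ∫ θ₂ in I', Real.sin θ₁ ^ 2 * Real.sin θ₂ ^ 2) = 1 / 4 ∧
    (4 / π ^ 2) * (∫ θ₁ in I', ∫ θ₂ in I, Real.sin θ₁ ^ 2 * Real.sin θ₂ ^ 2) = 1 / 4 := by
  set m := (ν + 1) / 2 with hmdef
  obtain ⟨t, ht⟩ := hν
  have hm2 : ν + 1 = 2 * m := by omega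
  have hm1 : 1 ≤ m := by omega
  have hm0 : (0:ℝ) < (m:ℝ) := by exact_mod_cast hm1
  have hNcast : ((ν : ℝ) + 1) = 2 * (m:ℝ) := by
    have : ((ν + 1 : ℕ) : ℝ) = ((2 * m : ℕ) : ℝ) := by rw [hm2]
    push_cast at this; linarith
  rw [hNcast] at hI hI'
  have hpi := Real.pi_pos
  obtain ⟨hGsum, hHsum⟩ := sum_G_eq m hm1
  have hA : (∫ x in I, Real.sin x ^ 2) = π / 4 := by
    rw [hI, biUnion_sin_sq m _ _ ?hcd ?hmono]
    · exact hGsum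
    case hcd =>
      intro j
      apply div_le_div_of_nonneg_right ?_ (by positivity)
      nlinarith
    case hmono =>
      intro j k hjk
      apply div_le_div_of_nonneg_right ?_ (by positivity)
      have : (j:ℝ) + 1 ≤ (k:ℝ) := by exact_mod_cast hjk
      nlinarith
  have hB : (∫ x in I', Real.sin x ^ 2) = π / 4 := by
    rw [hI', biUnion_sin_sq m _ _ ?hcd ?hmono]
    · exact hHsum
    case hcd =>
      intro j
      apply div_le_div_of_nonneg_right ?_ (by positivity)
      nlinarith
    case hmono =>
      intro j k hjk
      apply div_le_div_of_nonneg_right ?_ (by positivity)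
      have : (j:ℝ) + 1 ≤ (k:ℝ) := by exact_mod_cast hjk
      nlinarith
  have key : ∀ (S T : Set ℝ), (∫ x in S, Real.sin x ^ 2) = π / 4 →
      (∫ x in T, Real.sin x ^ 2) = π / 4 →
      (4 / π ^ 2) * (∫ θ₁ in S, ∫ θ₂ in T, Real.sin θ₁ ^ 2 * Real.sin θ₂ ^ 2) = 1 / 4 := by
    intro S T hS hT
    have : (∫ θ₁ in S, ∫ θ₂ in T, Real.sin θ₁ ^ 2 * Real.sin θ₂ ^ 2)
        = (∫ θ₁ in S, Real.sin θ₁ ^ 2 * (π / 4)) := by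
      refine MeasureTheory.integral_congr_ae (Filter.Eventually.of_forall fun θ₁ => ?_)
      simp only [MeasureTheory.integral_const_mul, hT]
    rw [this, MeasureTheory.integral_mul_const, hS]
    have hπ : π ≠ 0 := ne_of_gt hpi
    field_simp
  exact ⟨key I I' hA hB, key I I hA hA, key I' I' hB hB, key I' I hB hA⟩
end

section
/- Let θ₁, θ₂ be functions from the set of primes to [0, π] whose pairs are equidistributed with respect to the 2-product Sato-Tate measure, i.e. for all subintervals I₁, I₂ ⊆ [0, π], lim_{x→∞} #{p prime, p ≤ x : (θ₁(p), θ₂(p)) ∈ I₁ × I₂} / #{p prime, p ≤ x} = (4/π²)·∫_{I₁}∫_{I₂} sin²(t₁) sin²(t₂) dt₂ dt₁. Let ν be a positive odd integer. Then the set of primes p with sin((ν+1)θ₁(p))·sin((ν+1)θ₂(p)) > 0 has natural density 1/2, i.e. lim_{x→∞} #{p prime, p ≤ x : sin((ν+1)θ₁(p))·sin((ν+1)θ₂(p)) > 0} / #{p prime, p ≤ x} = 1/2. -/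
open Real Filter MeasureTheory

namespace PairSignAux

noncomputable def cnt (Q : ℕ → Prop) (x : ℕ) : ℕ :=
  Nat.card {p : ℕ | p ≤ x ∧ p.Prime ∧ Q p}

noncomputable def D (x : ℕ) : ℕ := Nat.card {p : ℕ | p ≤ x ∧ p.Prime}

lemma cnt_finite (Q : ℕ → Prop) (x : ℕ) : {p : ℕ | p ≤ x ∧ p.Prime ∧ Q p}.Finite :=
  (Set.finite_Iic x).subset fun p hp => hp.1

lemma cnt_eq_ncard (Q : ℕ → Prop) (x : ℕ) :
    cnt Q x = {p : ℕ | p ≤ x ∧ p.Prime ∧ Q p}.ncard := Nat.card_coe_set_eq _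

lemma cnt_mono {Q Q' : ℕ → Prop} (h : ∀ p, p.Prime → Q p → Q' p) (x : ℕ) :
    cnt Q x ≤ cnt Q' x := by
  rw [cnt_eq_ncard, cnt_eq_ncard]
  exact Set.ncard_le_ncard (fun p hp => ⟨hp.1, hp.2.1, h p hp.2.1 hp.2.2⟩) (cnt_finite _ x)

lemma cnt_congr {Q Q' : ℕ → Prop} (h : ∀ p, p.Prime → (Q p ↔ Q' p)) (x : ℕ) :
    cnt Q x = cnt Q' x :=
  le_antisymm (cnt_mono (fun p hp hq => (h p hp).1 hq) x)
    (cnt_mono (fun p hp hq => (h p hp).2 hq) x)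

lemma cnt_add {Q Q' : ℕ → Prop} (h : ∀ p, p.Prime → ¬(Q p ∧ Q' p)) (x : ℕ) :
    cnt (fun p => Q p ∨ Q' p) x = cnt Q x + cnt Q' x := by
  rw [cnt_eq_ncard, cnt_eq_ncard, cnt_eq_ncard]
  have hs : {p : ℕ | p ≤ x ∧ p.Prime ∧ (Q p ∨ Q' p)} =
      {p : ℕ | p ≤ x ∧ p.Prime ∧ Q p} ∪ {p : ℕ | p ≤ x ∧ p.Prime ∧ Q' p} := by
    ext p; simp only [Set.mem_setOf_eq, Set.mem_union]; tauto
  rw [hs, Set.ncard_union_eq ?_ (cnt_finite _ _) (cnt_finite _ _)]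
  rw [Set.disjoint_left]
  rintro p ⟨_, hp, hq⟩ ⟨_, _, hq'⟩
  exact h p hp ⟨hq, hq'⟩

lemma cnt_union_le (Q Q' : ℕ → Prop) (x : ℕ) :
    cnt (fun p => Q p ∨ Q' p) x ≤ cnt Q x + cnt Q' x := by
  rw [cnt_eq_ncard, cnt_eq_ncard, cnt_eq_ncard]
  have hs : {p : ℕ | p ≤ x ∧ p.Prime ∧ (Q p ∨ Q' p)} =
      {p : ℕ | p ≤ x ∧ p.Prime ∧ Q p} ∪ {p : ℕ | p ≤ x ∧ p.Prime ∧ Q' p} := by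
    ext p; simp only [Set.mem_setOf_eq, Set.mem_union]; tauto
  rw [hs]
  exact Set.ncard_union_le _ _

def HasDensity (Q : ℕ → Prop) (c : ℝ) : Prop :=
  Tendsto (fun x : ℕ => (cnt Q x : ℝ) / (D x : ℝ)) atTop (nhds c)

lemma ratio_nonneg (Q : ℕ → Prop) (x : ℕ) : 0 ≤ (cnt Q x : ℝ) / (D x : ℝ) := by positivity

lemma ratio_mono {Q Q' : ℕ → Prop} (h : ∀ p, p.Prime → Q p → Q' p) (x : ℕ) :
    (cnt Q x : ℝ) / (D x : ℝ) ≤ (cnt Q' x : ℝ) / (D x : ℝ) := by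
  rw [div_eq_mul_inv, div_eq_mul_inv]
  exact mul_le_mul_of_nonneg_right (by exact_mod_cast cnt_mono h x) (by positivity)

lemma HasDensity.congr' {Q Q' : ℕ → Prop} {c : ℝ} (h : ∀ p, p.Prime → (Q p ↔ Q' p))
    (hQ : HasDensity Q c) : HasDensity Q' c :=
  hQ.congr fun x => by rw [cnt_congr h x]

lemma hasDensity_zero_of_subset {Q Q' : ℕ → Prop} (h : ∀ p, p.Prime → Q p → Q' p)
    (hQ' : HasDensity Q' 0) : HasDensity Q 0 :=
  squeeze_zero (fun x => ratio_nonneg Q x) (fun x => ratio_mono h x) hQ'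

lemma HasDensity.union {Q Q' : ℕ → Prop} {c c' : ℝ} (h : ∀ p, p.Prime → ¬(Q p ∧ Q' p))
    (hQ : HasDensity Q c) (hQ' : HasDensity Q' c') :
    HasDensity (fun p => Q p ∨ Q' p) (c + c') := by
  refine (hQ.add hQ').congr fun x => ?_
  rw [cnt_add h x]
  push_cast
  rw [add_div]

lemma hasDensity_union_zero {Q Q' : ℕ → Prop} (hQ : HasDensity Q 0) (hQ' : HasDensity Q' 0) :
    HasDensity (fun p => Q p ∨ Q' p) 0 := by
  refine squeeze_zero (fun x => ratio_nonneg _ x) (fun x => ?_) (by simpa using hQ.add hQ')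
  rw [← add_div]
  rw [div_eq_mul_inv, div_eq_mul_inv]
  exact mul_le_mul_of_nonneg_right (by exact_mod_cast cnt_union_le Q Q' x) (by positivity)

lemma HasDensity.diff {Q Q' : ℕ → Prop} {c : ℝ} (hsub : ∀ p, p.Prime → Q' p → Q p)
    (hQ : HasDensity Q c) (hQ' : HasDensity Q' 0) :
    HasDensity (fun p => Q p ∧ ¬ Q' p) c := by
  have key : ∀ x : ℕ, (cnt (fun p => Q p ∧ ¬ Q' p) x : ℝ) / (D x : ℝ)
      = (cnt Q x : ℝ) / (D x : ℝ) - (cnt Q' x : ℝ) / (D x : ℝ) := by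
    intro x
    have hQeq : cnt Q x = cnt Q' x + cnt (fun p => Q p ∧ ¬ Q' p) x := by
      rw [← cnt_add (fun p hp hq => hq.2.2 hq.1) x]
      exact cnt_congr (fun p hp => by have := hsub p hp; tauto) x
    rw [hQeq]
    push_cast
    rw [add_div]
    ring
  have h2 := hQ.sub hQ'
  rw [sub_zero] at h2
  exact h2.congr fun x => (key x).symm

lemma hasDensity_false : HasDensity (fun _ => False) 0 := by
  have h0 : ∀ x : ℕ, cnt (fun _ => False) x = 0 := fun x => by
    rw [cnt_eq_ncard]; simp
  have : (fun x : ℕ => (cnt (fun _ => False) x : ℝ) / (D x : ℝ)) = fun _ => 0 := by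
    funext x; rw [h0]; simp
  rw [HasDensity, this]
  exact tendsto_const_nhds

lemma hasDensity_exists_mem {ι : Type*} [DecidableEq ι] (s : Finset ι) (Q : ι → ℕ → Prop)
    (c : ι → ℝ)
    (hd : ∀ i ∈ s, ∀ j ∈ s, i ≠ j → ∀ p, p.Prime → ¬(Q i p ∧ Q j p))
    (hc : ∀ i ∈ s, HasDensity (Q i) (c i)) :
    HasDensity (fun p => ∃ i ∈ s, Q i p) (∑ i ∈ s, c i) := by
  induction s using Finset.induction_on with
  | empty => exact hasDensity_false.congr' (fun p _ => by simp)
  | @insert a t ha ih =>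
    rw [Finset.sum_insert ha]
    have h1 : HasDensity (Q a) (c a) := hc a (Finset.mem_insert_self a t)
    have h2 : HasDensity (fun p => ∃ i ∈ t, Q i p) (∑ i ∈ t, c i) := by
      refine ih (fun i hi j hj hij => hd i (Finset.mem_insert_of_mem hi)
        j (Finset.mem_insert_of_mem hj) hij) (fun i hi => hc i (Finset.mem_insert_of_mem hi))
    have hdisj : ∀ p, p.Prime → ¬(Q a p ∧ ∃ i ∈ t, Q i p) := by
      rintro p hp ⟨hqa, i, hi, hqi⟩
      exact hd a (Finset.mem_insert_self a t) i (Finset.mem_insert_of_mem hi)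
        (fun he => ha (he ▸ hi)) p hp ⟨hqa, hqi⟩
    exact (h1.union hdisj h2).congr' (fun p _ => by
      constructor
      · rintro (h | ⟨i, hi, h⟩)
        · exact ⟨a, Finset.mem_insert_self a t, h⟩
        · exact ⟨i, Finset.mem_insert_of_mem hi, h⟩
      · rintro ⟨i, hi, h⟩
        rcases Finset.mem_insert.mp hi with rfl | hi
        · exact Or.inl h
        · exact Or.inr ⟨i, hi, h⟩)

end PairSignAux

namespace PairSignAux

lemma sin_add_nat_mul_pi (x : ℝ) (n : ℕ) : Real.sin (x + n * π) = (-1)^n * Real.sin x := by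
  rw [show x + (n:ℝ) * π = (n:ℝ) * π - (-x) by ring, Real.sin_nat_mul_pi_sub, Real.sin_neg]
  ring

lemma exists_cell (m : ℕ) {u : ℝ} (h0 : 0 ≤ u) (h1 : u ≤ m * π) (hs : Real.sin u ≠ 0) :
    ∃ j : ℕ, j < m ∧ (j:ℝ) * π < u ∧ u < ((j:ℝ)+1) * π ∧
      Real.sin u = (-1)^j * Real.sin (u - j * π) ∧ 0 < Real.sin (u - j * π) := by
  have hπ := Real.pi_pos
  set j := ⌊u / π⌋₊ with hj
  have hj1 : (j:ℝ) * π ≤ u := by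
    have h := Nat.floor_le (show (0:ℝ) ≤ u / π by positivity)
    calc (j:ℝ) * π ≤ (u / π) * π := mul_le_mul_of_nonneg_right h hπ.le
      _ = u := by field_simp
  have hj2 : u < ((j:ℝ)+1) * π := by
    have h := Nat.lt_floor_add_one (u / π)
    have := (div_lt_iff₀ hπ).mp h
    push_cast at this ⊢
    linarith
  have hne : u ≠ (j:ℝ) * π := by
    intro he
    exact hs (by rw [he, Real.sin_nat_mul_pi])
  have hjlt : (j:ℝ) * π < u := lt_of_le_of_ne hj1 (Ne.symm hne)
  have hjm : j < m := by
    by_contra hge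
    push_neg at hge
    have : (m:ℝ) * π ≤ (j:ℝ) * π := by
      have : (m:ℝ) ≤ (j:ℝ) := by exact_mod_cast hge
      nlinarith
    linarith
  refine ⟨j, hjm, hjlt, hj2, ?_, ?_⟩
  · conv_lhs => rw [show u = (u - j * π) + j * π by ring]
    exact sin_add_nat_mul_pi _ _
  · exact Real.sin_pos_of_pos_of_lt_pi (by linarith) (by linarith)

lemma sin_in_cell (j : ℕ) {u : ℝ} (h1 : (j:ℝ) * π < u) (h2 : u < ((j:ℝ)+1) * π) :
    Real.sin u = (-1)^j * Real.sin (u - j * π) ∧ 0 < Real.sin (u - j * π) := by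
  constructor
  · conv_lhs => rw [show u = (u - j * π) + j * π by ring]
    exact sin_add_nat_mul_pi _ _
  · exact Real.sin_pos_of_pos_of_lt_pi (by linarith) (by linarith)

lemma sin_sign_iff (m : ℕ) {u : ℝ} (h0 : 0 ≤ u) (h1 : u ≤ m * π) :
    (0 < Real.sin u ↔ ∃ j : ℕ, j < m ∧ Even j ∧ (j:ℝ) * π < u ∧ u < ((j:ℝ)+1) * π) ∧
    (Real.sin u < 0 ↔ ∃ j : ℕ, j < m ∧ ¬ Even j ∧ (j:ℝ) * π < u ∧ u < ((j:ℝ)+1) * π) := by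
  constructor
  · constructor
    · intro h
      obtain ⟨j, hjm, hl, hr, heq, hpos⟩ := exists_cell m h0 h1 (ne_of_gt h)
      refine ⟨j, hjm, ?_, hl, hr⟩
      by_contra ho
      rw [heq, (Nat.not_even_iff_odd.mp ho).neg_one_pow] at h
      nlinarith
    · rintro ⟨j, hjm, hje, hl, hr⟩
      obtain ⟨heq, hpos⟩ := sin_in_cell j hl hr
      rw [heq, hje.neg_one_pow]
      linarith
  · constructor
    · intro h
      obtain ⟨j, hjm, hl, hr, heq, hpos⟩ := exists_cell m h0 h1 (ne_of_lt h)
      refine ⟨j, hjm, ?_, hl, hr⟩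
      intro he
      rw [heq, he.neg_one_pow] at h
      nlinarith
    · rintro ⟨j, hjm, hjo, hl, hr⟩
      obtain ⟨heq, hpos⟩ := sin_in_cell j hl hr
      rw [heq, (Nat.not_even_iff_odd.mp hjo).neg_one_pow]
      nlinarith

end PairSignAux

namespace PairSignAux

noncomputable def cellc (m j : ℕ) : ℝ :=
  (2/π) * ∫ t in ((j:ℝ) * π / m)..(((j:ℝ)+1) * π / m), Real.sin t ^ 2

lemma sum_cellc (m : ℕ) (hm : 0 < m) : ∑ j ∈ Finset.range m, cellc m j = 1 := by
  have hπ := Real.pi_pos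
  have hm' : (0:ℝ) < m := by exact_mod_cast hm
  set a : ℕ → ℝ := fun j => (j:ℝ) * π / m with ha
  have hcell : ∀ j, cellc m j = (2/π) * ∫ t in a j..a (j+1), Real.sin t ^ 2 := by
    intro j
    simp only [cellc, ha, Nat.cast_add, Nat.cast_one]
  have hsum := intervalIntegral.sum_integral_adjacent_intervals (a := a) (n := m)
    (f := fun t => Real.sin t ^ 2) (μ := volume)
    (fun k _ => (Real.continuous_sin.pow 2).intervalIntegrable _ _)
  have ha0 : a 0 = 0 := by simp [ha]
  have ham : a m = π := by simp only [ha]; field_simp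
  calc ∑ j ∈ Finset.range m, cellc m j
      = (2/π) * ∑ j ∈ Finset.range m, ∫ t in a j..a (j+1), Real.sin t ^ 2 := by
        rw [Finset.mul_sum]; exact Finset.sum_congr rfl fun j _ => hcell j
    _ = (2/π) * ∫ t in (a 0)..(a m), Real.sin t ^ 2 := by rw [hsum]
    _ = 1 := by
        rw [ha0, ham, integral_sin_sq]
        simp [Real.sin_pi]

lemma cellc_symm (m j : ℕ) (hm : 0 < m) (hj : j < m) : cellc m (m-1-j) = cellc m j := by
  have hπ := Real.pi_pos
  have hm' : (0:ℝ) < m := by exact_mod_cast hm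
  have hc : ((m-1-j : ℕ) : ℝ) = (m:ℝ) - 1 - j := by
    rw [Nat.cast_sub (by omega), Nat.cast_sub (by omega)]
    norm_num
  rw [cellc, cellc, integral_sin_sq, integral_sin_sq, hc]
  have e1 : ((m:ℝ) - 1 - j) * π / m = π - (((j:ℝ)+1) * π / m) := by field_simp; ring
  have e2 : (((m:ℝ) - 1 - j) + 1) * π / m = π - ((j:ℝ) * π / m) := by field_simp; ring
  rw [e1, e2, Real.sin_pi_sub, Real.sin_pi_sub, Real.cos_pi_sub, Real.cos_pi_sub]
  ring

lemma sum_even_cellc (m : ℕ) (hm : 0 < m) (hme : m % 2 = 0) :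
    ∑ j ∈ (Finset.range m).filter (fun j => Even j), cellc m j = 1/2 ∧
    ∑ j ∈ (Finset.range m).filter (fun j => ¬ Even j), cellc m j = 1/2 := by
  have htot : (∑ j ∈ (Finset.range m).filter (fun j => Even j), cellc m j)
      + ∑ j ∈ (Finset.range m).filter (fun j => ¬ Even j), cellc m j = 1 := by
    rw [Finset.sum_filter_add_sum_filter_not]
    exact sum_cellc m hm
  have hsymm : (∑ j ∈ (Finset.range m).filter (fun j => Even j), cellc m j)
      = ∑ j ∈ (Finset.range m).filter (fun j => ¬ Even j), cellc m j := by
    refine Finset.sum_nbij' (i := fun j => m - 1 - j) (j := fun j => m - 1 - j)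
      ?_ ?_ ?_ ?_ ?_
    · intro a haa
      simp only [Finset.mem_filter, Finset.mem_range, Nat.even_iff] at haa ⊢
      omega
    · intro a haa
      simp only [Finset.mem_filter, Finset.mem_range, Nat.even_iff] at haa ⊢
      omega
    · intro a haa
      simp only [Finset.mem_filter, Finset.mem_range] at haa
      omega
    · intro a haa
      simp only [Finset.mem_filter, Finset.mem_range] at haa
      omega
    · intro a haa
      simp only [Finset.mem_filter, Finset.mem_range] at haa
      exact (cellc_symm m a hm haa.1).symm
  constructor <;> linarith

lemma sum_pairs (m : ℕ) (hm : 0 < m) (hme : m % 2 = 0) :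
    ∑ jk ∈ (Finset.range m ×ˢ Finset.range m).filter
      (fun jk => (Even jk.1 ↔ Even jk.2)), cellc m jk.1 * cellc m jk.2 = 1/2 := by
  classical
  set E := (Finset.range m).filter (fun j => Even j) with hE
  set O := (Finset.range m).filter (fun j => ¬ Even j) with hO
  have hset : (Finset.range m ×ˢ Finset.range m).filter (fun jk => (Even jk.1 ↔ Even jk.2))
      = E ×ˢ E ∪ O ×ˢ O := by
    ext ⟨j, k⟩
    simp only [Finset.mem_filter, Finset.mem_product, Finset.mem_union, Finset.mem_range,
      hE, hO]
    tauto
  have hdisj : Disjoint (E ×ˢ E) (O ×ˢ O) := by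
    rw [Finset.disjoint_left]
    rintro ⟨j, k⟩ h1 h2
    simp only [Finset.mem_product, Finset.mem_filter, hE, hO] at h1 h2
    exact h2.1.2 h1.1.2
  obtain ⟨he, ho⟩ := sum_even_cellc m hm hme
  rw [hset, Finset.sum_union hdisj, Finset.sum_product, Finset.sum_product]
  have h1 : ∀ (S : Finset ℕ), (∑ j ∈ S, ∑ k ∈ S, cellc m j * cellc m k)
      = (∑ j ∈ S, cellc m j) * (∑ k ∈ S, cellc m k) := by
    intro S
    rw [Finset.sum_mul_sum]
  rw [h1, h1, he, ho]
  norm_num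

end PairSignAux

open PairSignAux

/-- Analytic core of Theorem 1.2 (positive case): under pair Sato-Tate equidistribution of
the angles, primes `p` with `sin((ν+1)θ₁(p))·sin((ν+1)θ₂(p)) > 0` have natural density `1/2`. -/
theorem pair_sign_density_pos
    (θ₁ θ₂ : ℕ → ℝ)
    (hθ₁ : ∀ p : ℕ, p.Prime → θ₁ p ∈ Set.Icc 0 π)
    (hθ₂ : ∀ p : ℕ, p.Prime → θ₂ p ∈ Set.Icc 0 π)
    (hequi : ∀ a₁ b₁ a₂ b₂ : ℝ,
      0 ≤ a₁ → a₁ ≤ b₁ → b₁ ≤ π → 0 ≤ a₂ → a₂ ≤ b₂ → b₂ ≤ π →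
      Tendsto (fun x : ℕ =>
        (Nat.card {p : ℕ | p ≤ x ∧ p.Prime ∧
          θ₁ p ∈ Set.Icc a₁ b₁ ∧ θ₂ p ∈ Set.Icc a₂ b₂} : ℝ) /
        (Nat.card {p : ℕ | p ≤ x ∧ p.Prime} : ℝ)) atTop
        (nhds ((4 / π ^ 2) *
          ∫ t₁ in Set.Icc a₁ b₁, ∫ t₂ in Set.Icc a₂ b₂,
            Real.sin t₁ ^ 2 * Real.sin t₂ ^ 2)))
    (ν : ℕ) (hν : Odd ν) (hν' : 0 < ν) :
    Tendsto (fun x : ℕ =>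
      (Nat.card {p : ℕ | p ≤ x ∧ p.Prime ∧
        0 < Real.sin (((ν : ℝ) + 1) * θ₁ p) * Real.sin (((ν : ℝ) + 1) * θ₂ p)} : ℝ) /
      (Nat.card {p : ℕ | p ≤ x ∧ p.Prime} : ℝ)) atTop (nhds (1 / 2)) := by
  classical
  have hπ := Real.pi_pos
  set m : ℕ := ν + 1 with hmdef
  have hm : 0 < m := Nat.succ_pos ν
  have hme : m % 2 = 0 := by
    obtain ⟨r, hr⟩ := hν; omega
  have hm' : (0:ℝ) < m := by exact_mod_cast hm
  have hcast : ((ν:ℝ) + 1) = (m:ℝ) := by rw [hmdef]; push_cast; ring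
  set a : ℕ → ℝ := fun j => (j:ℝ) * π / m with ha
  have hamono : ∀ {i j : ℕ}, i ≤ j → a i ≤ a j := by
    intro i j hij
    have hij' : (i:ℝ) ≤ (j:ℝ) := by exact_mod_cast hij
    rw [ha]; dsimp only
    rw [div_le_div_iff₀ hm' hm']
    exact mul_le_mul_of_nonneg_right (mul_le_mul_of_nonneg_right hij' hπ.le) hm'.le
  have ha0 : ∀ j, 0 ≤ a j := fun j => by rw [ha]; positivity
  have haπ : ∀ j, j ≤ m → a j ≤ π := by
    intro j hj
    have hj' : (j:ℝ) ≤ (m:ℝ) := by exact_mod_cast hj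
    rw [ha]; dsimp only
    rw [div_le_iff₀ hm']
    nlinarith
  -- closed boxes
  have hIcc : ∀ u v : ℝ, u ≤ v →
      ∫ t in Set.Icc u v, Real.sin t ^ 2 = ∫ t in u..v, Real.sin t ^ 2 := by
    intro u v h
    rw [MeasureTheory.integral_Icc_eq_integral_Ioc, intervalIntegral.integral_of_le h]
  have hclosed : ∀ j k : ℕ, j < m → k < m →
      HasDensity
        (fun p => θ₁ p ∈ Set.Icc (a j) (a (j+1)) ∧ θ₂ p ∈ Set.Icc (a k) (a (k+1)))
        (cellc m j * cellc m k) := by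
    intro j k hj hk
    have h := hequi (a j) (a (j+1)) (a k) (a (k+1)) (ha0 j) (hamono (Nat.le_succ j))
      (haπ (j+1) hj) (ha0 k) (hamono (Nat.le_succ k)) (haπ (k+1) hk)
    have hval : (4 / π ^ 2) * ∫ t₁ in Set.Icc (a j) (a (j+1)),
        ∫ t₂ in Set.Icc (a k) (a (k+1)), Real.sin t₁ ^ 2 * Real.sin t₂ ^ 2
        = cellc m j * cellc m k := by
      have h1 : ∫ t₁ in Set.Icc (a j) (a (j+1)), (∫ t₂ in Set.Icc (a k) (a (k+1)),
          Real.sin t₁ ^ 2 * Real.sin t₂ ^ 2)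
          = (∫ t₁ in Set.Icc (a j) (a (j+1)), Real.sin t₁ ^ 2)
            * ∫ t₂ in Set.Icc (a k) (a (k+1)), Real.sin t₂ ^ 2 := by
        simp_rw [MeasureTheory.integral_const_mul]
        rw [MeasureTheory.integral_mul_const]
      have hcell : ∀ i : ℕ, cellc m i = (2/π) * ∫ t in (a i)..(a (i+1)), Real.sin t ^ 2 := by
        intro i
        have h0 : a i = (i:ℝ) * π / m := rfl
        have h1' : a (i+1) = ((i:ℝ)+1) * π / m := by
          show ((i+1 : ℕ):ℝ) * π / m = _
          push_cast
          ring
        rw [cellc, h0, h1']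
      rw [h1, hIcc _ _ (hamono (Nat.le_succ j)), hIcc _ _ (hamono (Nat.le_succ k)),
        hcell j, hcell k]
      have hπ' : π ≠ 0 := Real.pi_ne_zero
      have habs : ∀ I J : ℝ, (4/π^2) * (I * J) = ((2/π) * I) * ((2/π) * J) := by
        intro I J
        field_simp
        ring
      exact habs _ _
    rw [← hval]
    exact h
  -- degenerate boxes
  have hz : ∀ (f : ℝ → ℝ) (t : ℝ), ∫ x in Set.Icc t t, f x = 0 := by
    intro f t
    rw [show (volume.restrict (Set.Icc t t)) = 0 from
      Measure.restrict_eq_zero.mpr (by simp), integral_zero_measure]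
  have hbd1 : ∀ t : ℝ, 0 ≤ t → t ≤ π → HasDensity (fun p => θ₁ p = t) 0 := by
    intro t h0 h1
    have h := hequi t t 0 π h0 le_rfl h1 le_rfl hπ.le le_rfl
    have hval : (4 / π ^ 2) * ∫ t₁ in Set.Icc t t, ∫ t₂ in Set.Icc 0 π,
        Real.sin t₁ ^ 2 * Real.sin t₂ ^ 2 = 0 := by
      rw [hz]; ring
    rw [hval] at h
    exact hasDensity_zero_of_subset
      (fun p hp hq => ⟨by simp [hq], hθ₂ p hp⟩) h
  have hbd2 : ∀ t : ℝ, 0 ≤ t → t ≤ π → HasDensity (fun p => θ₂ p = t) 0 := by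
    intro t h0 h1
    have h := hequi 0 π t t le_rfl hπ.le le_rfl h0 le_rfl h1
    have hval : (4 / π ^ 2) * ∫ t₁ in Set.Icc 0 π, ∫ t₂ in Set.Icc t t,
        Real.sin t₁ ^ 2 * Real.sin t₂ ^ 2 = 0 := by
      have : ∀ t₁ : ℝ, ∫ t₂ in Set.Icc t t, Real.sin t₁ ^ 2 * Real.sin t₂ ^ 2 = 0 :=
        fun t₁ => hz _ t
      simp only [this]
      simp
    rw [hval] at h
    exact hasDensity_zero_of_subset
      (fun p hp hq => ⟨hθ₁ p hp, by simp [hq]⟩) h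
  -- open boxes
  have hopen : ∀ j k : ℕ, j < m → k < m →
      HasDensity
        (fun p => θ₁ p ∈ Set.Ioo (a j) (a (j+1)) ∧ θ₂ p ∈ Set.Ioo (a k) (a (k+1)))
        (cellc m j * cellc m k) := by
    intro j k hj hk
    have hbd : HasDensity (fun p => θ₁ p = a j ∨ (θ₁ p = a (j+1) ∨
        (θ₂ p = a k ∨ θ₂ p = a (k+1)))) 0 :=
      hasDensity_union_zero (hbd1 _ (ha0 j) (haπ j hj.le))
        (hasDensity_union_zero (hbd1 _ (ha0 (j+1)) (haπ (j+1) hj))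
          (hasDensity_union_zero (hbd2 _ (ha0 k) (haπ k hk.le))
            (hbd2 _ (ha0 (k+1)) (haπ (k+1) hk))))
    have hB : HasDensity (fun p =>
        (θ₁ p ∈ Set.Icc (a j) (a (j+1)) ∧ θ₂ p ∈ Set.Icc (a k) (a (k+1))) ∧
        ¬ (θ₁ p ∈ Set.Ioo (a j) (a (j+1)) ∧ θ₂ p ∈ Set.Ioo (a k) (a (k+1)))) 0 := by
      refine hasDensity_zero_of_subset ?_ hbd
      rintro p hp ⟨⟨h1, h2⟩, hno⟩
      by_contra hne
      push_neg at hne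
      obtain ⟨e1, e2, e3, e4⟩ := hne
      exact hno ⟨⟨lt_of_le_of_ne h1.1 (Ne.symm e1), lt_of_le_of_ne h1.2 e2⟩,
        ⟨lt_of_le_of_ne h2.1 (Ne.symm e3), lt_of_le_of_ne h2.2 e4⟩⟩
    have hd := (hclosed j k hj hk).diff (fun p _ hb => hb.1) hB
    refine hd.congr' fun p _ => ?_
    have himp : (θ₁ p ∈ Set.Ioo (a j) (a (j+1)) ∧ θ₂ p ∈ Set.Ioo (a k) (a (k+1))) →
        (θ₁ p ∈ Set.Icc (a j) (a (j+1)) ∧ θ₂ p ∈ Set.Icc (a k) (a (k+1))) :=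
      fun h => ⟨Set.Ioo_subset_Icc_self h.1, Set.Ioo_subset_Icc_self h.2⟩
    tauto
  -- sign characterization
  have hsin : ∀ θ : ℝ, θ ∈ Set.Icc 0 π →
      ((0 < Real.sin ((m:ℝ) * θ) ↔
        ∃ j, j < m ∧ Even j ∧ θ ∈ Set.Ioo (a j) (a (j+1))) ∧
       (Real.sin ((m:ℝ) * θ) < 0 ↔
        ∃ j, j < m ∧ ¬ Even j ∧ θ ∈ Set.Ioo (a j) (a (j+1)))) := by
    intro θ hθ
    have h0 : 0 ≤ (m:ℝ) * θ := mul_nonneg hm'.le hθ.1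
    have h1 : (m:ℝ) * θ ≤ m * π := mul_le_mul_of_nonneg_left hθ.2 hm'.le
    have key := sin_sign_iff m h0 h1
    have hIoo : ∀ j : ℕ, (((j:ℝ) * π < (m:ℝ) * θ ∧ (m:ℝ) * θ < ((j:ℝ)+1) * π) ↔
        θ ∈ Set.Ioo (a j) (a (j+1))) := by
      intro j
      have h0' : a j = (j:ℝ) * π / m := rfl
      have h1' : a (j+1) = ((j:ℝ)+1) * π / m := by
        show ((j+1 : ℕ):ℝ) * π / m = _
        push_cast
        ring
      rw [Set.mem_Ioo, h0', h1', div_lt_iff₀ hm', lt_div_iff₀ hm']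
      constructor <;> rintro ⟨u1, u2⟩ <;> exact ⟨by nlinarith, by nlinarith⟩
    constructor
    · rw [key.1]
      exact exists_congr fun j => by rw [← hIoo j]
    · rw [key.2]
      exact exists_congr fun j => by rw [← hIoo j]
  -- assemble
  set s : Finset (ℕ × ℕ) := (Finset.range m ×ˢ Finset.range m).filter
    (fun jk => (Even jk.1 ↔ Even jk.2)) with hs
  set O : ℕ × ℕ → ℕ → Prop := fun jk p =>
    θ₁ p ∈ Set.Ioo (a jk.1) (a (jk.1+1)) ∧ θ₂ p ∈ Set.Ioo (a jk.2) (a (jk.2+1)) with hO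
  have hcell_inj : ∀ (j j' : ℕ) (t : ℝ), t ∈ Set.Ioo (a j) (a (j+1)) →
      t ∈ Set.Ioo (a j') (a (j'+1)) → j = j' := by
    intro j j' t h h'
    by_contra hne
    rcases Nat.lt_or_ge j j' with hlt | hge
    · have hle : a (j+1) ≤ a j' := hamono hlt
      have := h.2
      have := h'.1
      linarith
    · have hlt : j' < j := lt_of_le_of_ne hge (fun he => hne he.symm)
      have hle : a (j'+1) ≤ a j := hamono hlt
      have := h.1
      have := h'.2
      linarith
  have hd : ∀ i ∈ s, ∀ jk ∈ s, i ≠ jk → ∀ p, p.Prime → ¬(O i p ∧ O jk p) := by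
    rintro ⟨j, k⟩ _ ⟨j', k'⟩ _ hne p _ ⟨⟨h1, h2⟩, ⟨h1', h2'⟩⟩
    exact hne (Prod.ext (hcell_inj _ _ _ h1 h1') (hcell_inj _ _ _ h2 h2'))
  have hc : ∀ jk ∈ s, HasDensity (O jk) (cellc m jk.1 * cellc m jk.2) := by
    rintro ⟨j, k⟩ hmem
    simp only [hs, Finset.mem_filter, Finset.mem_product, Finset.mem_range] at hmem
    exact hopen j k hmem.1.1 hmem.1.2
  have hmain := hasDensity_exists_mem s O (fun jk => cellc m jk.1 * cellc m jk.2) hd hc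
  have hiff : ∀ p, p.Prime → ((∃ jk ∈ s, O jk p) ↔
      0 < Real.sin (((ν:ℝ)+1) * θ₁ p) * Real.sin (((ν:ℝ)+1) * θ₂ p)) := by
    intro p hp
    rw [hcast, mul_pos_iff]
    obtain ⟨c1p, c1n⟩ := hsin (θ₁ p) (hθ₁ p hp)
    obtain ⟨c2p, c2n⟩ := hsin (θ₂ p) (hθ₂ p hp)
    rw [c1p, c1n, c2p, c2n]
    constructor
    · rintro ⟨⟨j, k⟩, hmem, hjk⟩
      simp only [hs, Finset.mem_filter, Finset.mem_product, Finset.mem_range] at hmem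
      obtain ⟨⟨hjm, hkm⟩, hpar⟩ := hmem
      obtain ⟨hj, hk⟩ := hjk
      by_cases hje : Even j
      · exact Or.inl ⟨⟨j, hjm, hje, hj⟩, ⟨k, hkm, hpar.mp hje, hk⟩⟩
      · exact Or.inr ⟨⟨j, hjm, hje, hj⟩, ⟨k, hkm, fun hke => hje (hpar.mpr hke), hk⟩⟩
    · rintro (⟨⟨j, hjm, hje, hj⟩, ⟨k, hkm, hke, hk⟩⟩ |
        ⟨⟨j, hjm, hje, hj⟩, ⟨k, hkm, hke, hk⟩⟩)
      · refine ⟨(j, k), ?_, ⟨hj, hk⟩⟩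
        simp only [hs, Finset.mem_filter, Finset.mem_product, Finset.mem_range]
        exact ⟨⟨hjm, hkm⟩, iff_of_true hje hke⟩
      · refine ⟨(j, k), ?_, ⟨hj, hk⟩⟩
        simp only [hs, Finset.mem_filter, Finset.mem_product, Finset.mem_range]
        exact ⟨⟨hjm, hkm⟩, iff_of_false hje hke⟩
  have hfinal := hmain.congr' hiff
  rw [hs, sum_pairs m hm hme] at hfinal
  exact hfinal
end

section
/- Let θ₁, θ₂ be functions from the set of primes to [0, π] whose pairs are equidistributed with respect to the 2-product Sato-Tate measure, i.e. for all subintervals I₁, I₂ ⊆ [0, π], lim_{x→∞} #{p prime, p ≤ x : (θ₁(p), θ₂(p)) ∈ I₁ × I₂} / #{p prime, p ≤ x} = (4/π²)·∫_{I₁}∫_{I₂} sin²(t₁) sin²(t₂) dt₂ dt₁. Let ν be a positive odd integer. Then the set of primes p with sin((ν+1)θ₁(p))·sin((ν+1)θ₂(p)) < 0 has natural density 1/2, i.e. lim_{x→∞} #{p prime, p ≤ x : sin((ν+1)θ₁(p))·sin((ν+1)θ₂(p)) < 0} / #{p prime, p ≤ x} = 1/2. -/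
open Real Filter MeasureTheory intervalIntegral

/-! ### Counting infrastructure -/

open Classical in
noncomputable def pcnt (Q : ℕ → Prop) (x : ℕ) : ℕ :=
  ((Finset.range (x+1)).filter (fun p => p.Prime ∧ Q p)).card

open Classical in
lemma pcnt_eq (Q : ℕ → Prop) (x : ℕ) :
    (Nat.card {p : ℕ | p ≤ x ∧ p.Prime ∧ Q p} : ℝ) = pcnt Q x := by
  have : {p : ℕ | p ≤ x ∧ p.Prime ∧ Q p} =
      ↑((Finset.range (x+1)).filter (fun p => p.Prime ∧ Q p)) := by
    ext p; simp [Nat.lt_succ_iff, and_assoc]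
  rw [this, Nat.card_coe_set_eq, Set.ncard_coe_finset, pcnt]

open Classical in
lemma pcnt_eq' (x : ℕ) :
    (Nat.card {p : ℕ | p ≤ x ∧ p.Prime} : ℝ) = pcnt (fun _ => True) x := by
  rw [show {p : ℕ | p ≤ x ∧ p.Prime} = {p : ℕ | p ≤ x ∧ p.Prime ∧ True} by simp]
  exact pcnt_eq _ x

open Classical in
lemma pcnt_congr {Q R : ℕ → Prop} (h : ∀ p, p.Prime → (Q p ↔ R p)) (x : ℕ) :
    pcnt Q x = pcnt R x := by
  unfold pcnt; congr 1; apply Finset.filter_congr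
  intro p _; exact and_congr_right fun hp => h p hp

open Classical in
lemma pcnt_mono {Q R : ℕ → Prop} (h : ∀ p, p.Prime → Q p → R p) (x : ℕ) :
    pcnt Q x ≤ pcnt R x := by
  unfold pcnt; apply Finset.card_le_card
  intro p hp; simp only [Finset.mem_filter] at *
  exact ⟨hp.1, hp.2.1, h p hp.2.1 hp.2.2⟩

open Classical in
lemma pcnt_or_le (Q R : ℕ → Prop) (x : ℕ) :
    pcnt (fun p => Q p ∨ R p) x ≤ pcnt Q x + pcnt R x := by
  unfold pcnt
  refine le_trans (Finset.card_le_card (s := _)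
    (t := ((Finset.range (x+1)).filter (fun p => p.Prime ∧ Q p)) ∪
        ((Finset.range (x+1)).filter (fun p => p.Prime ∧ R p))) ?_)
    (Finset.card_union_le _ _)
  intro p hp
  simp only [Finset.mem_filter, Finset.mem_union] at *
  tauto

open Classical in
lemma pcnt_exists_eq {ι : Type*} (s : Finset ι) (Q : ι → ℕ → Prop)
    (hdisj : ∀ i ∈ s, ∀ j ∈ s, i ≠ j → ∀ p, p.Prime → Q i p → ¬ Q j p) (x : ℕ) :
    pcnt (fun p => ∃ i ∈ s, Q i p) x = ∑ i ∈ s, pcnt (Q i) x := by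
  unfold pcnt
  rw [← Finset.card_biUnion]
  · congr 1; ext p
    simp only [Finset.mem_biUnion, Finset.mem_filter]
    constructor
    · rintro ⟨hr, hp, i, hi, hq⟩; exact ⟨i, hi, hr, hp, hq⟩
    · rintro ⟨i, hi, hr, hp, hq⟩; exact ⟨hr, hp, i, hi, hq⟩
  · intro i hi j hj hij
    simp only [Finset.disjoint_left, Finset.mem_filter]
    rintro p ⟨hr, hp, hq⟩ ⟨-, -, hq'⟩
    exact hdisj i hi j hj hij p hp hq hq'

/-! ### Integral computations -/

noncomputable def Jv (a b : ℝ) : ℝ := ∫ t in a..b, Real.sin t ^ 2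

lemma J_reflect (a b : ℝ) : Jv a b = Jv (π - b) (π - a) := by
  unfold Jv
  rw [← integral_comp_sub_left (fun t => Real.sin t ^ 2) π]
  simp [Real.sin_pi_sub]

lemma J_total : Jv 0 π = π / 2 := by
  unfold Jv; rw [integral_sin_sq]; simp

lemma J_sum (n : ℕ) (a : ℕ → ℝ) :
    ∑ k ∈ Finset.range n, Jv (a k) (a (k+1)) = Jv (a 0) (a n) :=
  sum_integral_adjacent_intervals fun _ _ =>
    (Real.continuous_sin.pow 2).intervalIntegrable _ _

lemma icc_double_integral (a₁ b₁ a₂ b₂ : ℝ) (h₁ : a₁ ≤ b₁) (h₂ : a₂ ≤ b₂) :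
    (∫ t₁ in Set.Icc a₁ b₁, ∫ t₂ in Set.Icc a₂ b₂, Real.sin t₁ ^ 2 * Real.sin t₂ ^ 2)
      = Jv a₁ b₁ * Jv a₂ b₂ := by
  have inner : ∀ t₁ : ℝ, (∫ t₂ in Set.Icc a₂ b₂, Real.sin t₁ ^ 2 * Real.sin t₂ ^ 2)
      = Real.sin t₁ ^ 2 * Jv a₂ b₂ := by
    intro t₁
    rw [MeasureTheory.integral_const_mul, Jv, integral_of_le h₂, integral_Icc_eq_integral_Ioc]
  simp_rw [inner]
  rw [MeasureTheory.integral_mul_const]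
  congr 1
  rw [Jv, integral_of_le h₁, integral_Icc_eq_integral_Ioc]

/-! ### The subdivision points -/

noncomputable def cc (n j : ℕ) : ℝ := j * π / n

lemma cc_nonneg (n j : ℕ) : 0 ≤ cc n j := by
  unfold cc; positivity

lemma cc_mono (n : ℕ) {a b : ℕ} (h : a ≤ b) : cc n a ≤ cc n b := by
  unfold cc
  apply div_le_div_of_nonneg_right _ (Nat.cast_nonneg n)
  exact mul_le_mul_of_nonneg_right (Nat.cast_le.mpr h) Real.pi_pos.le

lemma cc_le_pi (n j : ℕ) (hn : 0 < n) (hj : j ≤ n) : cc n j ≤ π := by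
  unfold cc
  rw [div_le_iff₀ (by exact_mod_cast hn : (0:ℝ) < n)]
  have hj' : (j:ℝ) ≤ n := Nat.cast_le.mpr hj
  nlinarith [Real.pi_pos]

lemma cc_reflect (n j : ℕ) (hj : j < n) :
    π - cc n (j+1) = cc n (n-1-j) ∧ π - cc n j = cc n (n-1-j+1) := by
  have hn0 : 0 < n := lt_of_le_of_lt (Nat.zero_le j) hj
  have hn' : (0:ℝ) < n := Nat.cast_pos.mpr hn0
  have h1 : ((n-1-j : ℕ) : ℝ) = (n:ℝ) - 1 - j := by
    have : n - 1 - j = n - (j+1) := by omega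
    rw [this, Nat.cast_sub hj]
    push_cast; ring
  have h2 : ((n-1-j+1 : ℕ) : ℝ) = (n:ℝ) - j := by
    have : n - 1 - j + 1 = n - j := by omega
    rw [this, Nat.cast_sub hj.le]
  constructor
  · unfold cc; rw [h1]; push_cast; field_simp; ring
  · unfold cc; rw [h2]; field_simp

lemma J_symm (n j : ℕ) (hj : j < n) :
    Jv (cc n j) (cc n (j+1)) = Jv (cc n (n-1-j)) (cc n (n-1-j+1)) := by
  rw [J_reflect, (cc_reflect n j hj).1, (cc_reflect n j hj).2]

lemma parity_sum_eq (n : ℕ) (hn : Even n) :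
    ∑ j ∈ (Finset.range n).filter (fun j => Even j), Jv (cc n j) (cc n (j+1)) =
    ∑ j ∈ (Finset.range n).filter (fun j => ¬ Even j), Jv (cc n j) (cc n (j+1)) := by
  apply Finset.sum_nbij' (i := fun j => n-1-j) (j := fun j => n-1-j)
  · intro a ha
    simp only [Finset.mem_filter, Finset.mem_range] at *
    obtain ⟨h1, h2⟩ := ha
    have hne := hn
    simp only [Nat.even_iff] at h2 hne ⊢
    omega
  · intro a ha
    simp only [Finset.mem_filter, Finset.mem_range] at *
    obtain ⟨h1, h2⟩ := ha
    have hne := hn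
    simp only [Nat.even_iff] at h2 hne ⊢
    omega
  · intro a ha
    simp only [Finset.mem_filter, Finset.mem_range] at ha
    omega
  · intro a ha
    simp only [Finset.mem_filter, Finset.mem_range] at ha
    omega
  · intro a ha
    simp only [Finset.mem_filter, Finset.mem_range] at ha
    exact J_symm n a ha.1

lemma parity_sum_val (n : ℕ) (hn : Even n) (hn0 : 0 < n) :
    (∑ j ∈ (Finset.range n).filter (fun j => Even j), Jv (cc n j) (cc n (j+1)) = π/4) ∧
    (∑ j ∈ (Finset.range n).filter (fun j => ¬ Even j), Jv (cc n j) (cc n (j+1)) = π/4) := by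
  have htot : ∑ j ∈ Finset.range n, Jv (cc n j) (cc n (j+1)) = π/2 := by
    rw [J_sum]
    have h0 : cc n 0 = 0 := by unfold cc; simp
    have hn' : cc n n = π := by
      unfold cc; field_simp
    rw [h0, hn', J_total]
  have hsplit : ∑ j ∈ Finset.range n, Jv (cc n j) (cc n (j+1)) =
      (∑ j ∈ (Finset.range n).filter (fun j => Even j), Jv (cc n j) (cc n (j+1))) +
      (∑ j ∈ (Finset.range n).filter (fun j => ¬ Even j), Jv (cc n j) (cc n (j+1))) :=
    (Finset.sum_filter_add_sum_filter_not _ _ _).symm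
  have heq := parity_sum_eq n hn
  constructor <;> linarith

/-! ### Sign analysis -/

lemma sign_on_interval (n j : ℕ) (hn : 0 < n) (θ : ℝ)
    (h1 : (j : ℝ) * π / n < θ) (h2 : θ < ((j : ℝ) + 1) * π / n) :
    (Even j → 0 < Real.sin (n * θ)) ∧ (Odd j → Real.sin (n * θ) < 0) := by
  have hn' : (0:ℝ) < n := Nat.cast_pos.mpr hn
  have key : Real.sin ((n:ℝ) * θ) = (-1) ^ j * Real.sin ((n:ℝ) * θ - j * π) := by
    have h := Real.sin_add_int_mul_pi ((n:ℝ) * θ - j * π) (j : ℤ)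
    push_cast at h
    rw [sub_add_cancel] at h
    exact_mod_cast h
  have hlow : (j:ℝ) * π < (n:ℝ) * θ := by
    rw [div_lt_iff₀ hn'] at h1; linarith [mul_comm θ (n:ℝ)]
  have hhigh : (n:ℝ) * θ - j * π < π := by
    rw [lt_div_iff₀ hn'] at h2; nlinarith
  have hpos : 0 < Real.sin ((n:ℝ) * θ - j * π) :=
    Real.sin_pos_of_pos_of_lt_pi (by linarith) hhigh
  constructor
  · intro hj; rw [key, hj.neg_one_pow, one_mul]; exact hpos
  · intro hj; rw [key, hj.neg_one_pow]; nlinarith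

lemma exists_interval (n : ℕ) (hn : 0 < n) (θ : ℝ) (h0 : 0 ≤ θ) (hπ : θ ≤ π)
    (hs : Real.sin ((n:ℝ) * θ) ≠ 0) :
    ∃ j, j < n ∧ (j : ℝ) * π / n < θ ∧ θ < ((j : ℝ) + 1) * π / n := by
  have hn' : (0:ℝ) < n := Nat.cast_pos.mpr hn
  have hπ' := Real.pi_pos
  set ψ := (n:ℝ) * θ / π with hψ
  have hψ0 : 0 ≤ ψ := by positivity
  set j := ⌊ψ⌋₊ with hj
  have hne : (j : ℝ) ≠ ψ := by
    intro h
    apply hs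
    have : (n:ℝ) * θ = j * π := by
      rw [hψ, eq_div_iff hπ'.ne'] at h; linarith
    rw [this, Real.sin_nat_mul_pi]
  have hlow : (j : ℝ) < ψ := lt_of_le_of_ne (Nat.floor_le hψ0) hne
  have hhigh : ψ < (j : ℝ) + 1 := Nat.lt_floor_add_one ψ
  have hψn : ψ ≤ n := by
    rw [hψ, div_le_iff₀ hπ']
    nlinarith
  have hjn : j < n := by
    rcases lt_or_ge j n with h | h
    · exact h
    · exfalso
      have : (n : ℝ) ≤ j := Nat.cast_le.mpr h
      linarith
  refine ⟨j, hjn, ?_, ?_⟩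
  · rw [div_lt_iff₀ hn']
    rw [hψ, lt_div_iff₀ hπ'] at hlow
    nlinarith
  · rw [lt_div_iff₀ hn']
    rw [hψ, div_lt_iff₀ hπ'] at hhigh
    nlinarith

lemma Ioo_disj (n a b : ℕ) (hab : a ≠ b) (θ : ℝ)
    (h1 : θ ∈ Set.Ioo (cc n a) (cc n (a+1))) (h2 : θ ∈ Set.Ioo (cc n b) (cc n (b+1))) :
    False := by
  rcases Nat.lt_or_ge a b with h | h
  · have : cc n (a+1) ≤ cc n b := cc_mono n h
    exact absurd (h1.2.trans_le (this.trans h2.1.le)) (lt_irrefl θ)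
  · have hba : b < a := lt_of_le_of_ne h (Ne.symm hab)
    have : cc n (b+1) ≤ cc n a := cc_mono n hba
    exact absurd (h2.2.trans_le (this.trans h1.1.le)) (lt_irrefl θ)

lemma cc_succ (n j : ℕ) : cc n (j+1) = ((j:ℝ)+1) * π / n := by
  unfold cc; push_cast; ring

lemma sign_on_interval' (n j : ℕ) (hn : 0 < n) (θ : ℝ)
    (h : θ ∈ Set.Ioo (cc n j) (cc n (j+1))) :
    (Even j → 0 < Real.sin (n * θ)) ∧ (Odd j → Real.sin (n * θ) < 0) := by
  refine sign_on_interval n j hn θ h.1 ?_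
  rw [← cc_succ]; exact h.2

lemma exists_interval' (n : ℕ) (hn : 0 < n) (θ : ℝ) (h0 : 0 ≤ θ) (hπ : θ ≤ π)
    (hs : Real.sin ((n:ℝ) * θ) ≠ 0) :
    ∃ j, j < n ∧ θ ∈ Set.Ioo (cc n j) (cc n (j+1)) := by
  obtain ⟨j, hjn, h1, h2⟩ := exists_interval n hn θ h0 hπ hs
  exact ⟨j, hjn, h1, by rw [cc_succ]; exact h2⟩

/-- Analytic core of Theorem 1.2 (positive case): under pair Sato-Tate equidistribution of
the angles, primes `p` with `sin((ν+1)θ₁(p))·sin((ν+1)θ₂(p)) < 0` have natural density `1/2`. -/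
theorem pair_sign_density_neg
    (θ₁ θ₂ : ℕ → ℝ)
    (hθ₁ : ∀ p : ℕ, p.Prime → θ₁ p ∈ Set.Icc 0 π)
    (hθ₂ : ∀ p : ℕ, p.Prime → θ₂ p ∈ Set.Icc 0 π)
    (hequi : ∀ a₁ b₁ a₂ b₂ : ℝ,
      0 ≤ a₁ → a₁ ≤ b₁ → b₁ ≤ π → 0 ≤ a₂ → a₂ ≤ b₂ → b₂ ≤ π →
      Tendsto (fun x : ℕ =>
        (Nat.card {p : ℕ | p ≤ x ∧ p.Prime ∧
          θ₁ p ∈ Set.Icc a₁ b₁ ∧ θ₂ p ∈ Set.Icc a₂ b₂} : ℝ) /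
        (Nat.card {p : ℕ | p ≤ x ∧ p.Prime} : ℝ)) atTop
        (nhds ((4 / π ^ 2) *
          ∫ t₁ in Set.Icc a₁ b₁, ∫ t₂ in Set.Icc a₂ b₂,
            Real.sin t₁ ^ 2 * Real.sin t₂ ^ 2)))
    (ν : ℕ) (hν : Odd ν) (hν' : 0 < ν) :
    Tendsto (fun x : ℕ =>
      (Nat.card {p : ℕ | p ≤ x ∧ p.Prime ∧
        Real.sin (((ν : ℝ) + 1) * θ₁ p) * Real.sin (((ν : ℝ) + 1) * θ₂ p) < 0} : ℝ) /
      (Nat.card {p : ℕ | p ≤ x ∧ p.Prime} : ℝ)) atTop (nhds (1 / 2)) := by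
  classical
  set n : ℕ := ν + 1 with hn_def
  have hn0 : 0 < n := Nat.succ_pos ν
  have hneven : Even n := hν.add_one
  have hcast : ((ν : ℝ) + 1) = (n : ℝ) := by push_cast [hn_def]; ring
  -- rectangles
  set ORect : ℕ × ℕ → ℕ → Prop := fun q p =>
    θ₁ p ∈ Set.Ioo (cc n q.1) (cc n (q.1+1)) ∧ θ₂ p ∈ Set.Ioo (cc n q.2) (cc n (q.2+1))
    with hORect
  set P : Finset (ℕ × ℕ) :=
    ((Finset.range n) ×ˢ (Finset.range n)).filter (fun q => ¬ (Even q.1 ↔ Even q.2))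
    with hP_def
  -- membership facts for P
  have hPmem : ∀ q : ℕ × ℕ, q ∈ P ↔ q.1 < n ∧ q.2 < n ∧ ¬ (Even q.1 ↔ Even q.2) := by
    intro q
    simp [hP_def, Finset.mem_filter, Finset.mem_product, and_assoc]
  -- Step 1: pointwise equivalence
  have hpoint : ∀ p, p.Prime →
      (Real.sin (((ν : ℝ) + 1) * θ₁ p) * Real.sin (((ν : ℝ) + 1) * θ₂ p) < 0 ↔
        ∃ q ∈ P, ORect q p) := by
    intro p hp
    rw [hcast]
    constructor
    · intro hlt
      have hs1 : Real.sin ((n:ℝ) * θ₁ p) ≠ 0 := by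
        intro h; rw [h] at hlt; simp at hlt
      have hs2 : Real.sin ((n:ℝ) * θ₂ p) ≠ 0 := by
        intro h; rw [h] at hlt; simp at hlt
      obtain ⟨j, hjn, hjm⟩ := exists_interval' n hn0 (θ₁ p) (hθ₁ p hp).1 (hθ₁ p hp).2 hs1
      obtain ⟨k, hkn, hkm⟩ := exists_interval' n hn0 (θ₂ p) (hθ₂ p hp).1 (hθ₂ p hp).2 hs2
      have hsj := sign_on_interval' n j hn0 (θ₁ p) hjm
      have hsk := sign_on_interval' n k hn0 (θ₂ p) hkm
      have hpar : ¬ (Even j ↔ Even k) := by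
        intro hiff
        rcases Nat.even_or_odd j with he | ho
        · have h1 := hsj.1 he
          have h2 := hsk.1 (hiff.mp he)
          nlinarith
        · have h1 := hsj.2 ho
          have h2 := hsk.2 (by rw [← Nat.not_even_iff_odd] at *; exact fun h => ho (hiff.mpr h))
          nlinarith
      exact ⟨(j, k), (hPmem (j,k)).mpr ⟨hjn, hkn, hpar⟩, hjm, hkm⟩
    · rintro ⟨q, hq, hq1, hq2⟩
      obtain ⟨hjn, hkn, hpar⟩ := (hPmem q).mp hq
      have hsj := sign_on_interval' n q.1 hn0 (θ₁ p) hq1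
      have hsk := sign_on_interval' n q.2 hn0 (θ₂ p) hq2
      rcases Nat.even_or_odd q.1 with he | ho
      · have hodd : Odd q.2 := by
          rw [← Nat.not_even_iff_odd]; exact fun h => hpar ⟨fun _ => h, fun _ => he⟩
        exact mul_neg_of_pos_of_neg (hsj.1 he) (hsk.2 hodd)
      · have heven : Even q.2 := by
          by_contra h
          exact hpar ⟨fun h' => absurd h' (Nat.not_even_iff_odd.mpr ho), fun h' => absurd h' h⟩
        exact mul_neg_of_neg_of_pos (hsj.2 ho) (hsk.1 heven)
  -- disjointness of the open rectangles
  have hdisj : ∀ q ∈ P, ∀ q' ∈ P, q ≠ q' → ∀ p, p.Prime → ORect q p → ¬ ORect q' p := by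
    intro q _ q' _ hqq' p _ h h'
    by_cases h1 : q.1 = q'.1
    · have h2 : q.2 ≠ q'.2 := fun h2 => hqq' (Prod.ext_iff.mpr ⟨h1, h2⟩)
      exact Ioo_disj n q.2 q'.2 h2 (θ₂ p) h.2 h'.2
    · exact Ioo_disj n q.1 q'.1 h1 (θ₁ p) h.1 h'.1
  -- limit for each open rectangle
  have hlim : ∀ q ∈ P, Tendsto (fun x => (pcnt (ORect q) x : ℝ) / (pcnt (fun _ => True) x : ℝ))
      atTop (nhds ((4 / π ^ 2) * (Jv (cc n q.1) (cc n (q.1+1)) * Jv (cc n q.2) (cc n (q.2+1))))) := by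
    intro q hq
    obtain ⟨hjn, hkn, -⟩ := (hPmem q).mp hq
    have hb : ∀ (m : ℕ), m < n → 0 ≤ cc n m ∧ cc n m ≤ cc n (m+1) ∧ cc n (m+1) ≤ π :=
      fun m hm => ⟨cc_nonneg n m, cc_mono n (Nat.le_succ m), cc_le_pi n (m+1) hn0 hm⟩
    obtain ⟨hb1, hb2, hb3⟩ := hb q.1 hjn
    obtain ⟨hc1, hc2, hc3⟩ := hb q.2 hkn
    -- closed rectangle limit
    have hC : Tendsto (fun x => (pcnt (fun p =>
        θ₁ p ∈ Set.Icc (cc n q.1) (cc n (q.1+1)) ∧ θ₂ p ∈ Set.Icc (cc n q.2) (cc n (q.2+1))) x : ℝ) /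
        (pcnt (fun _ => True) x : ℝ)) atTop
        (nhds ((4 / π ^ 2) * (Jv (cc n q.1) (cc n (q.1+1)) * Jv (cc n q.2) (cc n (q.2+1))))) := by
      have := hequi (cc n q.1) (cc n (q.1+1)) (cc n q.2) (cc n (q.2+1)) hb1 hb2 hb3 hc1 hc2 hc3
      rw [icc_double_integral _ _ _ _ hb2 hc2] at this
      refine this.congr fun x => ?_
      rw [pcnt_eq, pcnt_eq']
    -- boundary limits
    have hE : ∀ c : ℝ, 0 ≤ c → c ≤ π →
        Tendsto (fun x => (pcnt (fun p => θ₁ p = c) x : ℝ) / (pcnt (fun _ => True) x : ℝ))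
          atTop (nhds 0) := by
      intro c h0 h1
      have := hequi c c 0 π h0 le_rfl h1 le_rfl Real.pi_pos.le le_rfl
      have hz : ((4:ℝ) / π ^ 2) * (∫ t₁ in Set.Icc c c, ∫ t₂ in Set.Icc 0 π,
          Real.sin t₁ ^ 2 * Real.sin t₂ ^ 2) = 0 := by
        rw [Set.Icc_self, Measure.restrict_eq_zero.mpr (measure_singleton c),
          integral_zero_measure, mul_zero]
      rw [hz] at this
      refine this.congr fun x => ?_
      rw [pcnt_eq, pcnt_eq']
      congr 1
      rw [pcnt_congr (R := fun p => θ₁ p = c)]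
      intro p hp
      constructor
      · rintro ⟨h, -⟩; exact le_antisymm h.2 h.1
      · intro h; exact ⟨⟨h.ge, h.le⟩, hθ₂ p hp⟩
    have hE' : ∀ c : ℝ, 0 ≤ c → c ≤ π →
        Tendsto (fun x => (pcnt (fun p => θ₂ p = c) x : ℝ) / (pcnt (fun _ => True) x : ℝ))
          atTop (nhds 0) := by
      intro c h0 h1
      have := hequi 0 π c c le_rfl Real.pi_pos.le le_rfl h0 le_rfl h1
      have hz : ((4:ℝ) / π ^ 2) * (∫ t₁ in Set.Icc (0:ℝ) π, ∫ t₂ in Set.Icc c c,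
          Real.sin t₁ ^ 2 * Real.sin t₂ ^ 2) = 0 := by
        have : ∀ t₁ : ℝ, (∫ t₂ in Set.Icc c c, Real.sin t₁ ^ 2 * Real.sin t₂ ^ 2) = 0 := by
          intro t₁
          rw [Set.Icc_self, Measure.restrict_eq_zero.mpr (measure_singleton c),
            integral_zero_measure]
        simp_rw [this, MeasureTheory.integral_zero, mul_zero]
      rw [hz] at this
      refine this.congr fun x => ?_
      rw [pcnt_eq, pcnt_eq']
      congr 1
      rw [pcnt_congr (R := fun p => θ₂ p = c)]
      intro p hp
      constructor
      · rintro ⟨-, h⟩; exact le_antisymm h.2 h.1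
      · intro h; exact ⟨hθ₁ p hp, ⟨h.ge, h.le⟩⟩
    have hEa := hE (cc n q.1) hb1 (hb2.trans hb3)
    have hEb := hE (cc n (q.1+1)) (hb1.trans hb2) hb3
    have hEc := hE' (cc n q.2) hc1 (hc2.trans hc3)
    have hEd := hE' (cc n (q.2+1)) (hc1.trans hc2) hc3
    -- squeeze
    set D : ℕ → ℝ := fun x => (pcnt (fun _ => True) x : ℝ) with hD
    have hD0 : ∀ x, 0 ≤ D x := fun x => Nat.cast_nonneg _
    refine tendsto_of_tendsto_of_tendsto_of_le_of_le
      (g := fun x => (pcnt (fun p =>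
        θ₁ p ∈ Set.Icc (cc n q.1) (cc n (q.1+1)) ∧ θ₂ p ∈ Set.Icc (cc n q.2) (cc n (q.2+1))) x : ℝ) / D x
        - (pcnt (fun p => θ₁ p = cc n q.1) x : ℝ) / D x
        - (pcnt (fun p => θ₁ p = cc n (q.1+1)) x : ℝ) / D x
        - (pcnt (fun p => θ₂ p = cc n q.2) x : ℝ) / D x
        - (pcnt (fun p => θ₂ p = cc n (q.2+1)) x : ℝ) / D x)
      (h := fun x => (pcnt (fun p =>
        θ₁ p ∈ Set.Icc (cc n q.1) (cc n (q.1+1)) ∧ θ₂ p ∈ Set.Icc (cc n q.2) (cc n (q.2+1))) x : ℝ) / D x)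
      ?_ ?_ ?_ ?_
    · -- lower tendsto
      have := ((((hC.sub hEa).sub hEb).sub hEc).sub hEd)
      simpa using this
    · exact hC
    · -- lower bound pointwise
      intro x
      have hkey : pcnt (fun p =>
          θ₁ p ∈ Set.Icc (cc n q.1) (cc n (q.1+1)) ∧ θ₂ p ∈ Set.Icc (cc n q.2) (cc n (q.2+1))) x ≤
          pcnt (ORect q) x + pcnt (fun p => θ₁ p = cc n q.1) x
          + pcnt (fun p => θ₁ p = cc n (q.1+1)) x + pcnt (fun p => θ₂ p = cc n q.2) x
          + pcnt (fun p => θ₂ p = cc n (q.2+1)) x := by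
        calc pcnt (fun p =>
            θ₁ p ∈ Set.Icc (cc n q.1) (cc n (q.1+1)) ∧ θ₂ p ∈ Set.Icc (cc n q.2) (cc n (q.2+1))) x
            ≤ pcnt (fun p => (((ORect q p ∨ θ₁ p = cc n q.1) ∨ θ₁ p = cc n (q.1+1))
                ∨ θ₂ p = cc n q.2) ∨ θ₂ p = cc n (q.2+1)) x := by
              apply pcnt_mono
              rintro p _ ⟨⟨ha1, ha2⟩, ⟨hb1', hb2'⟩⟩
              rcases eq_or_lt_of_le ha1 with h | h
              · exact Or.inl (Or.inl (Or.inl (Or.inr h.symm)))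
              rcases eq_or_lt_of_le ha2 with h' | h'
              · exact Or.inl (Or.inl (Or.inr h'))
              rcases eq_or_lt_of_le hb1' with h'' | h''
              · exact Or.inl (Or.inr h''.symm)
              rcases eq_or_lt_of_le hb2' with h''' | h'''
              · exact Or.inr h'''
              · exact Or.inl (Or.inl (Or.inl (Or.inl ⟨⟨h, h'⟩, ⟨h'', h'''⟩⟩)))
          _ ≤ _ := by
              refine le_trans (pcnt_or_le _ _ x) ?_
              gcongr
              refine le_trans (pcnt_or_le _ _ x) ?_
              gcongr
              refine le_trans (pcnt_or_le _ _ x) ?_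
              gcongr
              exact pcnt_or_le _ _ x
      have hkey' : (pcnt (fun p =>
          θ₁ p ∈ Set.Icc (cc n q.1) (cc n (q.1+1)) ∧ θ₂ p ∈ Set.Icc (cc n q.2) (cc n (q.2+1))) x : ℝ)
          - (pcnt (fun p => θ₁ p = cc n q.1) x : ℝ)
          - (pcnt (fun p => θ₁ p = cc n (q.1+1)) x : ℝ)
          - (pcnt (fun p => θ₂ p = cc n q.2) x : ℝ)
          - (pcnt (fun p => θ₂ p = cc n (q.2+1)) x : ℝ) ≤ (pcnt (ORect q) x : ℝ) := by
        have : (pcnt (fun p =>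
            θ₁ p ∈ Set.Icc (cc n q.1) (cc n (q.1+1)) ∧ θ₂ p ∈ Set.Icc (cc n q.2) (cc n (q.2+1))) x : ℝ) ≤
            (pcnt (ORect q) x : ℝ) + (pcnt (fun p => θ₁ p = cc n q.1) x : ℝ)
            + (pcnt (fun p => θ₁ p = cc n (q.1+1)) x : ℝ) + (pcnt (fun p => θ₂ p = cc n q.2) x : ℝ)
            + (pcnt (fun p => θ₂ p = cc n (q.2+1)) x : ℝ) := by
          exact_mod_cast hkey
        linarith
      have := div_le_div_of_nonneg_right hkey' (hD0 x)
      rw [sub_div, sub_div, sub_div, sub_div] at this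
      exact this
    · -- upper bound pointwise
      intro x
      apply div_le_div_of_nonneg_right _ (hD0 x)
      apply Nat.cast_le.mpr
      apply pcnt_mono
      rintro p _ ⟨h1, h2⟩
      exact ⟨Set.Ioo_subset_Icc_self h1, Set.Ioo_subset_Icc_self h2⟩
  -- sum of the limits
  have hsum : Tendsto (fun x => ∑ q ∈ P, (pcnt (ORect q) x : ℝ) / (pcnt (fun _ => True) x : ℝ))
      atTop (nhds (∑ q ∈ P, (4 / π ^ 2) * (Jv (cc n q.1) (cc n (q.1+1)) * Jv (cc n q.2) (cc n (q.2+1))))) :=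
    tendsto_finset_sum _ hlim
  -- value of the sum
  have hval : (∑ q ∈ P, (4 / π ^ 2) * (Jv (cc n q.1) (cc n (q.1+1)) * Jv (cc n q.2) (cc n (q.2+1)))) = 1/2 := by
    rw [← Finset.mul_sum]
    have hPsplit : P = (((Finset.range n).filter (fun j => Even j)) ×ˢ
        ((Finset.range n).filter (fun j => ¬ Even j))) ∪
        (((Finset.range n).filter (fun j => ¬ Even j)) ×ˢ
        ((Finset.range n).filter (fun j => Even j))) := by
      ext q
      simp only [hP_def, Finset.mem_filter, Finset.mem_product, Finset.mem_union, Finset.mem_range]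
      tauto
    have hdisjP : Disjoint (((Finset.range n).filter (fun j => Even j)) ×ˢ
        ((Finset.range n).filter (fun j => ¬ Even j)))
        ((((Finset.range n).filter (fun j => ¬ Even j)) ×ˢ
        ((Finset.range n).filter (fun j => Even j)))) := by
      rw [Finset.disjoint_left]
      rintro q hq hq'
      simp only [Finset.mem_filter, Finset.mem_product] at hq hq'
      exact hq'.1.2 hq.1.2
    rw [hPsplit, Finset.sum_union hdisjP]
    rw [Finset.sum_product, Finset.sum_product]
    simp_rw [← Finset.sum_mul_sum]
    obtain ⟨hEv, hOd⟩ := parity_sum_val n hneven hn0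
    rw [hEv, hOd]
    have hπ := Real.pi_ne_zero
    field_simp
    ring
  rw [← hval]
  refine hsum.congr fun x => ?_
  rw [← Finset.sum_div]
  rw [pcnt_eq, pcnt_eq']
  congr 1
  rw [pcnt_congr hpoint, pcnt_exists_eq P ORect hdisj]
  push_cast
  rfl
end

section
/- Let θ₁, θ₂ be functions from the set of primes to [0, π] whose pairs are equidistributed with respect to the 2-product Sato-Tate measure, i.e. for all subintervals I₁, I₂ ⊆ [0, π], lim_{x→∞} #{p prime, p ≤ x : (θ₁(p), θ₂(p)) ∈ I₁ × I₂} / #{p prime, p ≤ x} = (4/π²)·∫_{I₁}∫_{I₂} sin²(t₁) sin²(t₂) dt₂ dt₁. Let ν be a positive odd integer. Then there exist infinitely many primes p with sin((ν+1)θ₁(p))·sin((ν+1)θ₂(p)) > 0 and infinitely many primes p with sin((ν+1)θ₁(p))·sin((ν+1)θ₂(p)) < 0. -/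
open Real Filter MeasureTheory

lemma sq_sin_integral_pos (a b : ℝ) (h0 : 0 ≤ a) (hab : a < b) (hb : b ≤ π) :
    0 < ∫ t in Set.Icc a b, Real.sin t ^ 2 := by
  rw [MeasureTheory.integral_Icc_eq_integral_Ioc, ← intervalIntegral.integral_of_le hab.le]
  apply intervalIntegral.intervalIntegral_pos_of_pos_on
  · exact (Continuous.intervalIntegrable (by continuity) a b)
  · intro x hx
    have h1 : 0 < Real.sin x := Real.sin_pos_of_pos_of_lt_pi (lt_of_le_of_lt h0 hx.1)
      (lt_of_lt_of_le hx.2 hb)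
    positivity
  · exact hab

lemma double_integral_pos (a₁ b₁ a₂ b₂ : ℝ) (h01 : 0 ≤ a₁) (hab1 : a₁ < b₁) (hb1 : b₁ ≤ π)
    (h02 : 0 ≤ a₂) (hab2 : a₂ < b₂) (hb2 : b₂ ≤ π) :
    0 < ∫ t₁ in Set.Icc a₁ b₁, ∫ t₂ in Set.Icc a₂ b₂,
      Real.sin t₁ ^ 2 * Real.sin t₂ ^ 2 := by
  have h : ∀ t₁ : ℝ, (∫ t₂ in Set.Icc a₂ b₂, Real.sin t₁ ^ 2 * Real.sin t₂ ^ 2)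
      = Real.sin t₁ ^ 2 * ∫ t₂ in Set.Icc a₂ b₂, Real.sin t₂ ^ 2 := by
    intro t₁; exact MeasureTheory.integral_const_mul _ _
  simp_rw [h]
  rw [MeasureTheory.integral_mul_const]
  exact mul_pos (sq_sin_integral_pos a₁ b₁ h01 hab1 hb1) (sq_sin_integral_pos a₂ b₂ h02 hab2 hb2)

lemma primes_card_tendsto :
    Tendsto (fun x : ℕ => (Nat.card {p : ℕ | p ≤ x ∧ p.Prime} : ℝ)) atTop atTop := by
  have h : Tendsto (fun x : ℕ => Nat.card {p : ℕ | p ≤ x ∧ p.Prime}) atTop atTop := by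
    rw [tendsto_atTop]
    intro b
    obtain ⟨t, hts, htc⟩ := Nat.infinite_setOf_prime.exists_subset_card_eq b
    have hx0 : ∀ x : ℕ, (∀ q ∈ t, q ≤ x) → b ≤ Nat.card {p : ℕ | p ≤ x ∧ p.Prime} := by
      intro x hx
      have hsub : (↑t : Set ℕ) ⊆ {p : ℕ | p ≤ x ∧ p.Prime} := by
        intro q hq
        exact ⟨hx q hq, hts hq⟩
      have hfin : {p : ℕ | p ≤ x ∧ p.Prime}.Finite :=
        (Set.finite_Iic x).subset (fun p hp => hp.1)
      calc b = (↑t : Set ℕ).ncard := by rw [Set.ncard_coe_finset, htc]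
        _ ≤ {p : ℕ | p ≤ x ∧ p.Prime}.ncard := Set.ncard_le_ncard hsub hfin
        _ = Nat.card {p : ℕ | p ≤ x ∧ p.Prime} := rfl
    filter_upwards [eventually_ge_atTop (t.sup id)] with x hx
    exact hx0 x (fun q hq => le_trans (Finset.le_sup (f := id) hq) hx)
  exact tendsto_natCast_atTop_atTop.comp h

lemma key_infinite (θ₁ θ₂ : ℕ → ℝ) (a₁ b₁ a₂ b₂ : ℝ)
    (h01 : 0 ≤ a₁) (hab1 : a₁ < b₁) (hb1 : b₁ ≤ π)
    (h02 : 0 ≤ a₂) (hab2 : a₂ < b₂) (hb2 : b₂ ≤ π)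
    (hlim : Tendsto (fun x : ℕ =>
        (Nat.card {p : ℕ | p ≤ x ∧ p.Prime ∧
          θ₁ p ∈ Set.Icc a₁ b₁ ∧ θ₂ p ∈ Set.Icc a₂ b₂} : ℝ) /
        (Nat.card {p : ℕ | p ≤ x ∧ p.Prime} : ℝ)) atTop
        (nhds ((4 / π ^ 2) *
          ∫ t₁ in Set.Icc a₁ b₁, ∫ t₂ in Set.Icc a₂ b₂,
            Real.sin t₁ ^ 2 * Real.sin t₂ ^ 2))) :
    {p : ℕ | p.Prime ∧ θ₁ p ∈ Set.Icc a₁ b₁ ∧ θ₂ p ∈ Set.Icc a₂ b₂}.Infinite := by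
  set c : ℝ := (4 / π ^ 2) *
      ∫ t₁ in Set.Icc a₁ b₁, ∫ t₂ in Set.Icc a₂ b₂, Real.sin t₁ ^ 2 * Real.sin t₂ ^ 2 with hc
  have hcpos : 0 < c := by
    apply mul_pos
    · have := Real.pi_pos; positivity
    · exact double_integral_pos a₁ b₁ a₂ b₂ h01 hab1 hb1 h02 hab2 hb2
  by_contra hfin
  rw [Set.not_infinite] at hfin
  set k : ℝ := ({p : ℕ | p.Prime ∧ θ₁ p ∈ Set.Icc a₁ b₁ ∧ θ₂ p ∈ Set.Icc a₂ b₂}.ncard : ℝ)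
    with hk
  have hbound : ∀ x : ℕ, (Nat.card {p : ℕ | p ≤ x ∧ p.Prime ∧
      θ₁ p ∈ Set.Icc a₁ b₁ ∧ θ₂ p ∈ Set.Icc a₂ b₂} : ℝ) ≤ k := by
    intro x
    have hsub : {p : ℕ | p ≤ x ∧ p.Prime ∧ θ₁ p ∈ Set.Icc a₁ b₁ ∧ θ₂ p ∈ Set.Icc a₂ b₂} ⊆
        {p : ℕ | p.Prime ∧ θ₁ p ∈ Set.Icc a₁ b₁ ∧ θ₂ p ∈ Set.Icc a₂ b₂} :=
      fun p hp => ⟨hp.2.1, hp.2.2⟩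
    have h2 := Set.ncard_le_ncard hsub hfin
    rw [hk, Nat.card_coe_set_eq]
    exact_mod_cast h2
  have hzero : Tendsto (fun x : ℕ =>
      (Nat.card {p : ℕ | p ≤ x ∧ p.Prime ∧
        θ₁ p ∈ Set.Icc a₁ b₁ ∧ θ₂ p ∈ Set.Icc a₂ b₂} : ℝ) /
      (Nat.card {p : ℕ | p ≤ x ∧ p.Prime} : ℝ)) atTop (nhds 0) := by
    have hkd : Tendsto (fun x : ℕ => k / (Nat.card {p : ℕ | p ≤ x ∧ p.Prime} : ℝ)) atTop
        (nhds 0) := Tendsto.div_atTop tendsto_const_nhds primes_card_tendsto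
    apply squeeze_zero'
    · filter_upwards with x
      positivity
    · filter_upwards [primes_card_tendsto.eventually_ge_atTop 1] with x hx
      exact div_le_div_of_nonneg_right (hbound x) (le_trans zero_le_one hx)
    · exact hkd
  have := tendsto_nhds_unique hzero hlim
  exact absurd this.symm (ne_of_gt hcpos)

/-- Analytic core of Theorem 1.2 (positive case): under pair Sato-Tate equidistribution of
the angles, there are infinitely many primes of each sign of `sin((ν+1)θ₁(p))·sin((ν+1)θ₂(p))`. -/
theorem pair_sign_changes_infinitely
    (θ₁ θ₂ : ℕ → ℝ)
    (hθ₁ : ∀ p : ℕ, p.Prime → θ₁ p ∈ Set.Icc 0 π)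
    (hθ₂ : ∀ p : ℕ, p.Prime → θ₂ p ∈ Set.Icc 0 π)
    (hequi : ∀ a₁ b₁ a₂ b₂ : ℝ,
      0 ≤ a₁ → a₁ ≤ b₁ → b₁ ≤ π → 0 ≤ a₂ → a₂ ≤ b₂ → b₂ ≤ π →
      Tendsto (fun x : ℕ =>
        (Nat.card {p : ℕ | p ≤ x ∧ p.Prime ∧
          θ₁ p ∈ Set.Icc a₁ b₁ ∧ θ₂ p ∈ Set.Icc a₂ b₂} : ℝ) /
        (Nat.card {p : ℕ | p ≤ x ∧ p.Prime} : ℝ)) atTop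
        (nhds ((4 / π ^ 2) *
          ∫ t₁ in Set.Icc a₁ b₁, ∫ t₂ in Set.Icc a₂ b₂,
            Real.sin t₁ ^ 2 * Real.sin t₂ ^ 2)))
    (ν : ℕ) (hν : Odd ν) (hν' : 0 < ν) :
    {p : ℕ | p.Prime ∧
      0 < Real.sin (((ν : ℝ) + 1) * θ₁ p) * Real.sin (((ν : ℝ) + 1) * θ₂ p)}.Infinite ∧
    {p : ℕ | p.Prime ∧
      Real.sin (((ν : ℝ) + 1) * θ₁ p) * Real.sin (((ν : ℝ) + 1) * θ₂ p) < 0}.Infinite := by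
  have hπ := Real.pi_pos
  set m : ℝ := (ν : ℝ) + 1 with hm
  have hm2 : (2 : ℝ) ≤ m := by
    have : (1 : ℝ) ≤ (ν : ℝ) := by exact_mod_cast hν'
    linarith
  have hm0 : 0 < m := by linarith
  -- intervals
  set a₁ : ℝ := π / (3 * m) with ha₁
  set b₁ : ℝ := 2 * π / (3 * m) with hb₁
  set a₂ : ℝ := 4 * π / (3 * m) with ha₂
  set b₂ : ℝ := 5 * π / (3 * m) with hb₂
  have h01 : 0 ≤ a₁ := by positivity
  have h3m : (0:ℝ) < 3 * m := by linarith
  have hab1 : a₁ < b₁ := by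
    rw [ha₁, hb₁, div_lt_div_iff₀ h3m h3m]; nlinarith
  have hb1 : b₁ ≤ π := by
    rw [hb₁, div_le_iff₀ h3m]; nlinarith
  have h02 : 0 ≤ a₂ := by positivity
  have hab2 : a₂ < b₂ := by
    rw [ha₂, hb₂, div_lt_div_iff₀ h3m h3m]; nlinarith
  have hb2 : b₂ ≤ π := by
    rw [hb₂, div_le_iff₀ h3m]; nlinarith
  -- sign facts
  have hsinpos : ∀ t : ℝ, t ∈ Set.Icc a₁ b₁ → 0 < Real.sin (m * t) := by
    intro t ht
    apply Real.sin_pos_of_pos_of_lt_pi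
    · have h := mul_le_mul_of_nonneg_left ht.1 hm0.le
      have hma : m * a₁ = π / 3 := by rw [ha₁]; field_simp
      rw [hma] at h
      exact lt_of_lt_of_le (by positivity) h
    · have h := mul_le_mul_of_nonneg_left ht.2 hm0.le
      have hmb : m * b₁ = 2 * π / 3 := by rw [hb₁]; field_simp
      rw [hmb] at h
      exact lt_of_le_of_lt h (by linarith)
  have hsinneg : ∀ t : ℝ, t ∈ Set.Icc a₂ b₂ → Real.sin (m * t) < 0 := by
    intro t ht
    have h1 : π < m * t := by
      have h := mul_le_mul_of_nonneg_left ht.1 hm0.le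
      have hma : m * a₂ = 4 * π / 3 := by rw [ha₂]; field_simp
      rw [hma] at h
      exact lt_of_lt_of_le (by linarith) h
    have h2 : m * t < 2 * π := by
      have h := mul_le_mul_of_nonneg_left ht.2 hm0.le
      have hmb : m * b₂ = 5 * π / 3 := by rw [hb₂]; field_simp
      rw [hmb] at h
      exact lt_of_le_of_lt h (by linarith)
    have h3 : 0 < Real.sin (m * t - π) :=
      Real.sin_pos_of_pos_of_lt_pi (by linarith) (by linarith)
    rw [Real.sin_sub_pi] at h3
    exact neg_pos.mp h3
  constructor
  · have hinf := key_infinite θ₁ θ₂ a₁ b₁ a₁ b₁ h01 hab1 hb1 h01 hab1 hb1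
      (hequi a₁ b₁ a₁ b₁ h01 hab1.le hb1 h01 hab1.le hb1)
    apply hinf.mono
    intro p hp
    exact ⟨hp.1, mul_pos (hsinpos _ hp.2.1) (hsinpos _ hp.2.2)⟩
  · have hinf := key_infinite θ₁ θ₂ a₁ b₁ a₂ b₂ h01 hab1 hb1 h02 hab2 hb2
      (hequi a₁ b₁ a₂ b₂ h01 hab1.le hb1 h02 hab2.le hb2)
    apply hinf.mono
    intro p hp
    exact ⟨hp.1, mul_neg_of_pos_of_neg (hsinpos _ hp.2.1) (hsinneg _ hp.2.2)⟩
end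

section
/- Let θ₁, θ₂ be functions from the set of primes to (0, π) whose pairs are equidistributed with respect to the 2-product Sato-Tate measure, i.e. for all subintervals I₁, I₂ ⊆ [0, π], lim_{x→∞} #{p prime, p ≤ x : (θ₁(p), θ₂(p)) ∈ I₁ × I₂} / #{p prime, p ≤ x} = (4/π²)·∫_{I₁}∫_{I₂} sin²(t₁) sin²(t₂) dt₂ dt₁. Let c₁, c₂ be functions from the set of primes to [−1, 1], let ν be a positive odd integer, and for i = 1, 2 set bᵢ(p) = sin((ν+1)θᵢ(p)) − (cᵢ(p)/√p)·sin(νθᵢ(p)). Then the set of primes p with b₁(p)·b₂(p) > 0 has natural density 1/2. -/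
open Real Filter MeasureTheory



private lemma sin_lower_bound {c x : ℝ} (hc0 : 0 < c) (hc : c ≤ π / 2)
    (h1 : c ≤ x) (h2 : x ≤ π - c) : Real.sin c ≤ Real.sin x := by
  have hπ := Real.pi_pos
  rcases le_or_gt x (π / 2) with hx | hx
  · exact Real.strictMonoOn_sin.monotoneOn ⟨by linarith, hc⟩ ⟨by linarith, hx⟩ h1
  · rw [← Real.sin_pi_sub x]
    exact Real.strictMonoOn_sin.monotoneOn ⟨by linarith, hc⟩
      ⟨by linarith, by linarith⟩ (by linarith)

private lemma sum_ncard_le {ι : Type*} [DecidableEq ι] (Q : Finset ι) (S : ι → Set ℕ)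
    (T : Set ℕ) (hT : T.Finite) (hsub : ∀ q ∈ Q, S q ⊆ T)
    (hdisj : ∀ q ∈ Q, ∀ r ∈ Q, q ≠ r → Disjoint (S q) (S r)) :
    ∑ q ∈ Q, (S q).ncard ≤ T.ncard := by
  induction Q using Finset.induction generalizing T with
  | empty => simp
  | @insert a Q ha ih =>
    rw [Finset.sum_insert ha]
    have h1 : ∀ q ∈ Q, S q ⊆ T \ S a := by
      intro q hq x hx
      refine ⟨hsub q (Finset.mem_insert_of_mem hq) hx, fun hxa => ?_⟩
      exact Set.disjoint_left.mp
        (hdisj a (Finset.mem_insert_self a Q) q (Finset.mem_insert_of_mem hq)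
          (by rintro rfl; exact ha hq)) hxa hx
    have h2 := ih (T \ S a) (hT.diff) h1
      (fun q hq r hr h => hdisj q (Finset.mem_insert_of_mem hq) r
        (Finset.mem_insert_of_mem hr) h)
    have h3 : (T \ S a).ncard + (S a).ncard = T.ncard :=
      Set.ncard_diff_add_ncard_of_subset (hsub a (Finset.mem_insert_self a Q)) hT
    omega

private lemma two_ncard_le (s t T : Set ℕ) (hT : T.Finite) (hs : s ⊆ T) (ht : t ⊆ T)
    (hdisj : Disjoint s t) : s.ncard + t.ncard ≤ T.ncard := by
  rw [← Set.ncard_union_eq hdisj (hT.subset hs) (hT.subset ht)]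
  exact Set.ncard_le_ncard (Set.union_subset hs ht) hT

private lemma primes_finite (x : ℕ) : {p : ℕ | p ≤ x ∧ p.Prime}.Finite :=
  (Set.finite_Iic x).subset fun p hp => hp.1

private lemma primes_tendsto :
    Tendsto (fun x : ℕ => Nat.card {p : ℕ | p ≤ x ∧ p.Prime}) atTop atTop := by
  have hmono : Monotone (fun x : ℕ => Nat.card {p : ℕ | p ≤ x ∧ p.Prime}) := by
    intro x y hxy
    simp only [Nat.card_coe_set_eq]
    exact Set.ncard_le_ncard (fun p hp => ⟨hp.1.trans hxy, hp.2⟩) (primes_finite y)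
  apply tendsto_atTop_atTop_of_monotone hmono
  intro b
  induction b with
  | zero => exact ⟨0, Nat.zero_le _⟩
  | succ b ih =>
    obtain ⟨x, hx⟩ := ih
    obtain ⟨p, hp, hpp⟩ := Nat.exists_infinite_primes (x + 1)
    refine ⟨p, ?_⟩
    have hsub : insert p {q : ℕ | q ≤ x ∧ q.Prime} ⊆ {q : ℕ | q ≤ p ∧ q.Prime} := by
      rintro q (rfl | hq)
      · exact ⟨le_rfl, hpp⟩
      · exact ⟨hq.1.trans (by omega), hq.2⟩
    have hnotmem : p ∉ {q : ℕ | q ≤ x ∧ q.Prime} := fun h => absurd h.1 (by omega)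
    have := Set.ncard_le_ncard hsub (primes_finite p)
    rw [Set.ncard_insert_of_notMem hnotmem ((primes_finite x))] at this
    simp only [Nat.card_coe_set_eq] at hx ⊢
    omega

private lemma sum_even_odd {M : Type*} [AddCommMonoid M] (f : ℕ → M) (m : ℕ) :
    ∑ j ∈ Finset.range (2 * m), f j =
      ∑ k ∈ Finset.range m, f (2 * k) + ∑ k ∈ Finset.range m, f (2 * k + 1) := by
  induction m with
  | zero => simp
  | succ m ih =>
    rw [Nat.mul_succ, Finset.sum_range_succ, Finset.sum_range_succ,
      Finset.sum_range_succ (fun k => f (2 * k + 1)), Finset.sum_range_succ (fun k => f (2 * k)), ih]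
    abel


private lemma sign_lemma (n j : ℕ) (hn : 0 < n) {δ θ : ℝ}
    (hδ : 0 < δ) (hδ2 : 2 * δ ≤ π / n)
    (hθ1 : (j : ℝ) * (π / n) + δ ≤ θ) (hθ2 : θ ≤ ((j : ℝ) + 1) * (π / n) - δ) :
    0 < Real.sin ((n : ℝ) * δ) ∧
      Real.sin ((n : ℝ) * δ) ≤ (-1 : ℝ) ^ j * Real.sin ((n : ℝ) * θ) := by
  have hn' : (0:ℝ) < n := by exact_mod_cast hn
  have hπ := Real.pi_pos
  have hc0 : 0 < (n:ℝ) * δ := by positivity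
  have hc : (n:ℝ) * δ ≤ π / 2 := by
    have := mul_le_mul_of_nonneg_left hδ2 hn'.le
    rw [mul_div_cancel₀ π (ne_of_gt hn')] at this
    linarith
  have h1' : (n:ℝ) * ((j:ℝ) * (π / n) + δ) = (j:ℝ) * π + (n:ℝ) * δ := by
    field_simp
  have h2' : (n:ℝ) * (((j:ℝ) + 1) * (π / n) - δ) = (j:ℝ) * π + π - (n:ℝ) * δ := by
    field_simp
  have h1 : (n:ℝ) * δ ≤ (n:ℝ) * θ - (j:ℝ) * π := by
    have := mul_le_mul_of_nonneg_left hθ1 hn'.le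
    rw [h1'] at this; linarith
  have h2 : (n:ℝ) * θ - (j:ℝ) * π ≤ π - (n:ℝ) * δ := by
    have := mul_le_mul_of_nonneg_left hθ2 hn'.le
    rw [h2'] at this; linarith
  have hsin := sin_lower_bound hc0 hc h1 h2
  have hkey : Real.sin ((n:ℝ) * θ) = (-1:ℝ) ^ j * Real.sin ((n:ℝ) * θ - (j:ℝ) * π) := by
    have h := Real.sin_add_nat_mul_pi ((n:ℝ) * θ - (j:ℝ) * π) j
    rw [sub_add_cancel] at h
    exact h
  have hone : ((-1:ℝ)) ^ j * (-1:ℝ) ^ j = 1 := by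
    rw [← pow_add]; exact Even.neg_one_pow ⟨j, rfl⟩
  constructor
  · exact Real.sin_pos_of_pos_of_lt_pi hc0 (by linarith)
  · rw [hkey, ← mul_assoc, hone, one_mul]; exact hsin

private lemma quarter_sum (m : ℕ) (hm : 0 < m) (g : ℕ → ℝ)
    (hg : ∀ j, g j = ∫ x in ((j : ℝ) * (π / (2 * m)))..(((j : ℝ) + 1) * (π / (2 * m))),
      Real.sin x ^ 2) :
    ∑ k ∈ Finset.range m, g (2 * k) = π / 4 ∧
      ∑ k ∈ Finset.range m, g (2 * k + 1) = π / 4 := by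
  have hm' : (0:ℝ) < (m:ℝ) := by exact_mod_cast hm
  have hπ := Real.pi_pos
  set L : ℝ := π / (2 * m) with hL
  have hint : ∀ u v : ℝ, IntervalIntegrable (fun x => Real.sin x ^ 2) volume u v :=
    fun u v => (Real.continuous_sin.pow 2).intervalIntegrable u v
  have htot : ∑ j ∈ Finset.range (2 * m), g j = π / 2 := by
    have hadj := intervalIntegral.sum_integral_adjacent_intervals
      (a := fun k : ℕ => (k : ℝ) * L) (n := 2 * m) (f := fun x => Real.sin x ^ 2)
      (μ := volume) (fun k _ => hint _ _)
    have hsummand : ∀ j : ℕ, g j = ∫ x in ((j:ℝ) * L)..(((j+1 : ℕ) : ℝ) * L),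
        Real.sin x ^ 2 := by
      intro j; rw [hg j]; push_cast; ring_nf
    calc ∑ j ∈ Finset.range (2 * m), g j
        = ∑ j ∈ Finset.range (2 * m), ∫ x in ((j:ℝ) * L)..(((j+1 : ℕ) : ℝ) * L),
            Real.sin x ^ 2 := Finset.sum_congr rfl fun j _ => hsummand j
      _ = ∫ x in (((0:ℕ):ℝ) * L)..(((2*m : ℕ) : ℝ) * L), Real.sin x ^ 2 := hadj
      _ = ∫ x in (0:ℝ)..π, Real.sin x ^ 2 := by
          have e0 : ((0:ℕ):ℝ) * L = 0 := by norm_num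
          have e1 : ((2*m:ℕ):ℝ) * L = π := by push_cast; rw [hL]; field_simp
          rw [e0, e1]
      _ = π / 2 := by rw [integral_sin_sq]; simp
  have hrefl : ∀ j, j < 2 * m → g j = g (2 * m - 1 - j) := by
    intro j hj
    have hc : ((2 * m - 1 - j : ℕ) : ℝ) = 2 * (m:ℝ) - 1 - (j:ℝ) := by
      have h : 2 * m - 1 - j = 2 * m - (j + 1) := by omega
      rw [h, Nat.cast_sub (by omega : j + 1 ≤ 2 * m)]
      push_cast; ring
    rw [hg j, hg (2 * m - 1 - j)]
    have step1 : (∫ x in ((j:ℝ) * L)..(((j:ℝ) + 1) * L), Real.sin x ^ 2)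
        = ∫ x in ((j:ℝ) * L)..(((j:ℝ) + 1) * L), Real.sin (π - x) ^ 2 :=
      intervalIntegral.integral_congr fun x _ => by rw [Real.sin_pi_sub]
    rw [step1, intervalIntegral.integral_comp_sub_left (fun x => Real.sin x ^ 2) π]
    congr 1
    · rw [hc, hL]; field_simp; ring
    · rw [hc, hL]; field_simp; ring
  have heo : ∑ k ∈ Finset.range m, g (2 * k) = ∑ k ∈ Finset.range m, g (2 * k + 1) := by
    have h1 : ∀ k ∈ Finset.range m, g (2 * k) = g (2 * (m - 1 - k) + 1) := by
      intro k hk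
      rw [Finset.mem_range] at hk
      rw [hrefl (2 * k) (by omega)]
      congr 1
      omega
    calc ∑ k ∈ Finset.range m, g (2 * k)
        = ∑ k ∈ Finset.range m, g (2 * (m - 1 - k) + 1) := Finset.sum_congr rfl h1
      _ = ∑ k ∈ Finset.range m, g (2 * k + 1) :=
          Finset.sum_range_reflect (fun k => g (2 * k + 1)) m
  rw [sum_even_odd g m] at htot
  constructor <;> linarith

private lemma strip_bound {a b δ : ℝ} (hδ : 0 < δ) (hab : a + δ ≤ b - δ) :
    (∫ x in a..b, Real.sin x ^ 2) - 2 * δ ≤ (∫ x in (a+δ)..(b-δ), Real.sin x ^ 2) ∧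
      0 ≤ ∫ x in (a+δ)..(b-δ), Real.sin x ^ 2 := by
  have hint : ∀ u v : ℝ, IntervalIntegrable (fun x => Real.sin x ^ 2) volume u v :=
    fun u v => (Real.continuous_sin.pow 2).intervalIntegrable u v
  have e1 : (∫ x in a..(a+δ), Real.sin x ^ 2) + (∫ x in (a+δ)..b, Real.sin x ^ 2)
      = ∫ x in a..b, Real.sin x ^ 2 :=
    intervalIntegral.integral_add_adjacent_intervals (hint _ _) (hint _ _)
  have e2 : (∫ x in (a+δ)..(b-δ), Real.sin x ^ 2) + (∫ x in (b-δ)..b, Real.sin x ^ 2)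
      = ∫ x in (a+δ)..b, Real.sin x ^ 2 :=
    intervalIntegral.integral_add_adjacent_intervals (hint _ _) (hint _ _)
  have hside : ∀ u v : ℝ, u ≤ v → (∫ x in u..v, Real.sin x ^ 2) ≤ v - u := by
    intro u v huv
    calc (∫ x in u..v, Real.sin x ^ 2) ≤ ∫ x in u..v, (1:ℝ) :=
        intervalIntegral.integral_mono_on huv (hint _ _) intervalIntegrable_const
          (fun x _ => Real.sin_sq_le_one x)
      _ = v - u := by simp
  have hnn : ∀ u v : ℝ, u ≤ v → 0 ≤ ∫ x in u..v, Real.sin x ^ 2 :=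
    fun u v huv => intervalIntegral.integral_nonneg huv (fun x _ => sq_nonneg _)
  have s1 := hside a (a+δ) (by linarith)
  have s2 := hside (b-δ) b (by linarith)
  have n1 := hnn a (a+δ) (by linarith)
  have n2 := hnn (b-δ) b (by linarith)
  have n3 := hnn (a+δ) (b-δ) hab
  constructor <;> linarith


set_option maxHeartbeats 2000000 in
/-- Analytic core of Theorem 1.3 (positive case): with pair Sato-Tate equidistributed angles
`θᵢ(p) ∈ (0,π)` and `bᵢ(p) = sin((ν+1)θᵢ(p)) − (cᵢ(p)/√p)·sin(νθᵢ(p))`, the set of primes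
`p` with `b₁(p)b₂(p) > 0` has natural density `1/2`. -/
theorem half_integral_sign_density_pos
    (θ₁ θ₂ : ℕ → ℝ)
    (hθ₁ : ∀ p : ℕ, p.Prime → θ₁ p ∈ Set.Ioo 0 π)
    (hθ₂ : ∀ p : ℕ, p.Prime → θ₂ p ∈ Set.Ioo 0 π)
    (hequi : ∀ a₁ b₁ a₂ b₂ : ℝ,
      0 ≤ a₁ → a₁ ≤ b₁ → b₁ ≤ π → 0 ≤ a₂ → a₂ ≤ b₂ → b₂ ≤ π →
      Tendsto (fun x : ℕ =>
        (Nat.card {p : ℕ | p ≤ x ∧ p.Prime ∧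
          θ₁ p ∈ Set.Icc a₁ b₁ ∧ θ₂ p ∈ Set.Icc a₂ b₂} : ℝ) /
        (Nat.card {p : ℕ | p ≤ x ∧ p.Prime} : ℝ)) atTop
        (nhds ((4 / π ^ 2) *
          ∫ t₁ in Set.Icc a₁ b₁, ∫ t₂ in Set.Icc a₂ b₂,
            Real.sin t₁ ^ 2 * Real.sin t₂ ^ 2)))
    (c₁ c₂ : ℕ → ℝ)
    (hc₁ : ∀ p : ℕ, p.Prime → c₁ p ∈ Set.Icc (-1 : ℝ) 1)
    (hc₂ : ∀ p : ℕ, p.Prime → c₂ p ∈ Set.Icc (-1 : ℝ) 1)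
    (ν : ℕ) (hν : Odd ν) (hν' : 0 < ν)
    (b₁ b₂ : ℕ → ℝ)
    (hb₁ : ∀ p : ℕ, b₁ p =
      Real.sin (((ν : ℝ) + 1) * θ₁ p) - (c₁ p / Real.sqrt p) * Real.sin ((ν : ℝ) * θ₁ p))
    (hb₂ : ∀ p : ℕ, b₂ p =
      Real.sin (((ν : ℝ) + 1) * θ₂ p) - (c₂ p / Real.sqrt p) * Real.sin ((ν : ℝ) * θ₂ p)) :
    Tendsto (fun x : ℕ =>
      (Nat.card {p : ℕ | p ≤ x ∧ p.Prime ∧ 0 < b₁ p * b₂ p} : ℝ) /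
      (Nat.card {p : ℕ | p ≤ x ∧ p.Prime} : ℝ)) atTop (nhds (1 / 2)) := by
  classical
  obtain ⟨t, ht⟩ := hν
  set m : ℕ := t + 1 with hmdef
  have hm : 0 < m := Nat.succ_pos t
  set n : ℕ := ν + 1 with hndef
  have hnm : n = 2 * m := by omega
  have hn : 0 < n := by omega
  have hπ := Real.pi_pos
  have hm' : (0:ℝ) < (m:ℝ) := by exact_mod_cast hm
  have hn' : (0:ℝ) < (n:ℝ) := by exact_mod_cast hn
  have hn2m : (n:ℝ) = 2 * (m:ℝ) := by exact_mod_cast congrArg (Nat.cast : ℕ → ℝ) hnm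
  set L : ℝ := π / n with hLdef
  have hL : 0 < L := by positivity
  have hnL : (n:ℝ) * L = π := by rw [hLdef]; field_simp
  -- full-interval integrals
  set g : ℕ → ℝ := fun j => ∫ x in ((j:ℝ) * L)..(((j:ℝ) + 1) * L), Real.sin x ^ 2 with hgdef
  have hquarter := quarter_sum m hm g (by
    intro j
    have : L = π / (2 * (m:ℝ)) := by rw [hLdef, hn2m]
    rw [hgdef]; simp only [this])
  -- prime counting denominator
  have hDtopR : Tendsto (fun x : ℕ => (Nat.card {p : ℕ | p ≤ x ∧ p.Prime} : ℝ)) atTop atTop :=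
    tendsto_natCast_atTop_atTop.comp primes_tendsto
  have hDpos : ∀ᶠ x : ℕ in atTop, (0:ℝ) < (Nat.card {p : ℕ | p ≤ x ∧ p.Prime} : ℝ) :=
    hDtopR.eventually (eventually_gt_atTop 0)
  -- ε-criterion
  rw [Metric.tendsto_nhds]
  intro ε hε
  -- choice of δ
  set δ : ℝ := min (ε / (8 * m)) (L / 4) with hδdef
  have hδ0 : 0 < δ := lt_min (by positivity) (by positivity)
  have hδL4 : δ ≤ L / 4 := min_le_right _ _
  have hδε : δ ≤ ε / (8 * m) := min_le_left _ _
  have hδ2L : 2 * δ ≤ π / (n:ℝ) := by rw [← hLdef]; linarith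
  set s : ℝ := Real.sin ((n:ℝ) * δ) with hsdef
  have hs : 0 < s := by
    rw [hsdef]
    apply Real.sin_pos_of_pos_of_lt_pi (by positivity)
    nlinarith
  set N₀ : ℕ := ⌈s⁻¹ ^ 2⌉₊ with hN₀def
  have hsmall : ∀ p : ℕ, p.Prime → N₀ < p → 1 / Real.sqrt p < s := by
    intro p hp hpN
    have hp0 : (0:ℝ) < p := by exact_mod_cast hp.pos
    have h1 : s⁻¹ ^ 2 < (p:ℝ) := by
      have h2 : s⁻¹ ^ 2 ≤ (N₀ : ℝ) := Nat.le_ceil _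
      have h3 : (N₀ : ℝ) + 1 ≤ (p:ℝ) := by exact_mod_cast hpN
      linarith
    have h4 : s⁻¹ < Real.sqrt p := (Real.lt_sqrt (by positivity)).mpr h1
    have h5 : 0 < Real.sqrt p := lt_trans (by positivity) h4
    rw [div_lt_iff₀ h5]
    have := mul_lt_mul_of_pos_left h4 hs
    rwa [mul_inv_cancel₀ (ne_of_gt hs)] at this
  -- sign of b on the strips
  have hbsign : ∀ (θ c b : ℕ → ℝ),
      (∀ p : ℕ, p.Prime → c p ∈ Set.Icc (-1:ℝ) 1) →
      (∀ p : ℕ, b p =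
        Real.sin (((ν : ℝ) + 1) * θ p) - (c p / Real.sqrt p) * Real.sin ((ν : ℝ) * θ p)) →
      ∀ p : ℕ, p.Prime → N₀ < p → ∀ i : ℕ,
      θ p ∈ Set.Icc ((i:ℝ) * L + δ) (((i:ℝ) + 1) * L - δ) →
      0 < (-1:ℝ) ^ i * b p := by
    intro θ c b hc hb p hp hpN i hθi
    have hν1 : ((ν:ℝ) + 1) = (n:ℝ) := by rw [hndef]; push_cast; ring
    have hθ1 : (i:ℝ) * (π / (n:ℝ)) + δ ≤ θ p := by rw [← hLdef]; exact hθi.1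
    have hθ2 : θ p ≤ ((i:ℝ) + 1) * (π / (n:ℝ)) - δ := by rw [← hLdef]; exact hθi.2
    have hsl := sign_lemma n i hn hδ0 hδ2L hθ1 hθ2
    have hp0 : (0:ℝ) < p := by exact_mod_cast hp.pos
    have hsq : 0 < Real.sqrt p := Real.sqrt_pos.mpr hp0
    have habs : |c p / Real.sqrt p * Real.sin ((ν:ℝ) * θ p)| ≤ 1 / Real.sqrt p := by
      rw [abs_mul, abs_div, abs_of_nonneg (Real.sqrt_nonneg _)]
      have h1 : |c p| ≤ 1 := abs_le.mpr ⟨(hc p hp).1, (hc p hp).2⟩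
      have h2 : |Real.sin ((ν:ℝ) * θ p)| ≤ 1 := Real.abs_sin_le_one _
      calc |c p| / Real.sqrt p * |Real.sin ((ν:ℝ) * θ p)|
          ≤ 1 / Real.sqrt p * 1 := by
            have h0 : (0:ℝ) ≤ 1 / Real.sqrt p := by positivity
            have hd : |c p| / Real.sqrt p ≤ 1 / Real.sqrt p := by gcongr
            exact mul_le_mul hd h2 (abs_nonneg _) h0
        _ = 1 / Real.sqrt p := by ring
    have h3 : (-1:ℝ) ^ i * (c p / Real.sqrt p * Real.sin ((ν:ℝ) * θ p)) ≤ 1 / Real.sqrt p :=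
      calc (-1:ℝ) ^ i * (c p / Real.sqrt p * Real.sin ((ν:ℝ) * θ p))
          ≤ |(-1:ℝ) ^ i * (c p / Real.sqrt p * Real.sin ((ν:ℝ) * θ p))| := le_abs_self _
        _ = |c p / Real.sqrt p * Real.sin ((ν:ℝ) * θ p)| := by
            rw [abs_mul, abs_pow, abs_neg, abs_one, one_pow, one_mul]
        _ ≤ 1 / Real.sqrt p := habs
    have hsp := hsmall p hp hpN
    rw [hb p, hν1, mul_sub]
    have hmain := hsl.2
    rw [← hsdef] at hmain hsl
    linarith [hsl.1]
  have hsign₁ := hbsign θ₁ c₁ b₁ hc₁ hb₁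
  have hsign₂ := hbsign θ₂ c₂ b₂ hc₂ hb₂
  -- interval endpoints
  set A : ℕ → ℝ := fun i => (i:ℝ) * L + δ with hAdef
  set B : ℕ → ℝ := fun i => ((i:ℝ) + 1) * L - δ with hBdef
  have hAB : ∀ i : ℕ, A i ≤ B i := by
    intro i; simp only [hAdef, hBdef]
    have h0 : (0:ℝ) ≤ (i:ℝ) := Nat.cast_nonneg i
    nlinarith
  have hA0 : ∀ i : ℕ, 0 ≤ A i := by
    intro i; simp only [hAdef]; positivity
  have hBπ : ∀ i : ℕ, i < n → B i ≤ π := by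
    intro i hi
    have hc : ((i:ℝ) + 1) ≤ (n:ℝ) := by exact_mod_cast hi
    simp only [hBdef]
    nlinarith [mul_le_mul_of_nonneg_right hc hL.le]
  set Iδ : ℕ → ℝ := fun i => ∫ x in (A i)..(B i), Real.sin x ^ 2 with hIδdef
  have hIcc : ∀ a b : ℝ, a ≤ b →
      (∫ x in Set.Icc a b, Real.sin x ^ 2) = ∫ x in a..b, Real.sin x ^ 2 := by
    intro a b hab
    rw [intervalIntegral.integral_of_le hab, MeasureTheory.integral_Icc_eq_integral_Ioc]
  have hdouble : ∀ a₁ b₁ a₂ b₂ : ℝ,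
      (∫ t₁ in Set.Icc a₁ b₁, ∫ t₂ in Set.Icc a₂ b₂, Real.sin t₁ ^ 2 * Real.sin t₂ ^ 2)
        = (∫ t₁ in Set.Icc a₁ b₁, Real.sin t₁ ^ 2) *
          (∫ t₂ in Set.Icc a₂ b₂, Real.sin t₂ ^ 2) := by
    intro a₁ b₁ a₂ b₂
    have hin : ∀ t₁ : ℝ, (∫ t₂ in Set.Icc a₂ b₂, Real.sin t₁ ^ 2 * Real.sin t₂ ^ 2)
        = Real.sin t₁ ^ 2 * ∫ t₂ in Set.Icc a₂ b₂, Real.sin t₂ ^ 2 := fun t₁ =>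
      MeasureTheory.integral_const_mul _ _
    simp_rw [hin]
    exact MeasureTheory.integral_mul_const _ _
  set Dr : ℕ → ℝ := fun x => (Nat.card {p : ℕ | p ≤ x ∧ p.Prime} : ℝ) with hDrdef
  set RS : ℕ → ℕ → ℕ → Set ℕ := fun i j x => {p : ℕ | p ≤ x ∧ p.Prime ∧
      θ₁ p ∈ Set.Icc (A i) (B i) ∧ θ₂ p ∈ Set.Icc (A j) (B j)} with hRSdef
  have hrect : ∀ i j : ℕ, i < n → j < n →
      Tendsto (fun x : ℕ => (Nat.card (RS i j x) : ℝ) / Dr x) atTop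
        (nhds ((4 / π ^ 2) * (Iδ i * Iδ j))) := by
    intro i j hi hj
    have h := hequi (A i) (B i) (A j) (B j) (hA0 i) (hAB i) (hBπ i hi) (hA0 j) (hAB j) (hBπ j hj)
    rw [hdouble, hIcc _ _ (hAB i), hIcc _ _ (hAB j)] at h
    exact h
  -- strip bounds
  have hstrip : ∀ i : ℕ, g i - 2 * δ ≤ Iδ i ∧ 0 ≤ Iδ i := by
    intro i
    have hab : (i:ℝ) * L + δ ≤ ((i:ℝ) + 1) * L - δ := hAB i
    exact strip_bound hδ0 hab
  set r : ℝ := 2 * (m:ℝ) * δ with hrdef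
  have hr0 : 0 ≤ r := by positivity
  set Se : ℝ := ∑ k ∈ Finset.range m, Iδ (2 * k) with hSedef
  set So : ℝ := ∑ k ∈ Finset.range m, Iδ (2 * k + 1) with hSodef
  have hSe : π / 4 - r ≤ Se := by
    have h1 : ∑ k ∈ Finset.range m, (g (2 * k) - 2 * δ) ≤ Se :=
      Finset.sum_le_sum fun k _ => (hstrip (2 * k)).1
    rw [Finset.sum_sub_distrib, hquarter.1, Finset.sum_const, Finset.card_range,
      nsmul_eq_mul] at h1
    rw [hrdef]; linarith
  have hSo : π / 4 - r ≤ So := by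
    have h1 : ∑ k ∈ Finset.range m, (g (2 * k + 1) - 2 * δ) ≤ So :=
      Finset.sum_le_sum fun k _ => (hstrip (2 * k + 1)).1
    rw [Finset.sum_sub_distrib, hquarter.2, Finset.sum_const, Finset.card_range,
      nsmul_eq_mul] at h1
    rw [hrdef]; linarith
  have hr4 : r ≤ π / 4 := by
    have h1 : 2 * (m:ℝ) * δ ≤ 2 * (m:ℝ) * (L / 4) := by
      apply mul_le_mul_of_nonneg_left hδL4 (by positivity)
    have h2 : (2 * (m:ℝ)) * L = π := by rw [← hn2m]; exact hnL
    rw [hrdef]; nlinarith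
  have hu0 : 0 ≤ π / 4 - r := by linarith
  have hrε : 2 * r ≤ ε / 2 := by
    have h1 := mul_le_mul_of_nonneg_left hδε (by positivity : (0:ℝ) ≤ 2 * (m:ℝ))
    have h2 : 2 * (m:ℝ) * (ε / (8 * (m:ℝ))) = ε / 4 := by field_simp; ring
    rw [hrdef]; rw [h2] at h1; linarith
  have h8 : 1 / 2 - 2 * r ≤ 8 / π ^ 2 * (π / 4 - r) ^ 2 := by
    rw [div_mul_eq_mul_div, le_div_iff₀ (by positivity : (0:ℝ) < π ^ 2)]
    have hππ : (0:ℝ) ≤ π ^ 2 - 2 * π := by nlinarith [Real.pi_gt_three]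
    have key : 8 * (π / 4 - r) ^ 2 - (1 / 2 - 2 * r) * π ^ 2
        = 2 * r * (π ^ 2 - 2 * π) + 8 * r ^ 2 := by ring
    linarith [mul_nonneg hr0 hππ, sq_nonneg r, key]
  have hcpos : (0:ℝ) < 4 / π ^ 2 := by positivity
  have hVlow1 : 1 / 2 - ε / 2 ≤ 4 / π ^ 2 * (Se * Se) + 4 / π ^ 2 * (So * So) := by
    have h1 : (π / 4 - r) ^ 2 ≤ Se * Se := by nlinarith
    have h2 : (π / 4 - r) ^ 2 ≤ So * So := by nlinarith
    have e1 := mul_le_mul_of_nonneg_left h1 hcpos.le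
    have e2 := mul_le_mul_of_nonneg_left h2 hcpos.le
    have e3 : (8 / π ^ 2) * (π / 4 - r) ^ 2
        = 4 / π ^ 2 * (π / 4 - r) ^ 2 + 4 / π ^ 2 * (π / 4 - r) ^ 2 := by ring
    linarith
  have hVlow2 : 1 / 2 - ε / 2 ≤ 4 / π ^ 2 * (Se * So) + 4 / π ^ 2 * (So * Se) := by
    have h1 : (π / 4 - r) ^ 2 ≤ Se * So := by nlinarith
    have h2 : (π / 4 - r) ^ 2 ≤ So * Se := by nlinarith
    have e1 := mul_le_mul_of_nonneg_left h1 hcpos.le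
    have e2 := mul_le_mul_of_nonneg_left h2 hcpos.le
    have e3 : (8 / π ^ 2) * (π / 4 - r) ^ 2
        = 4 / π ^ 2 * (π / 4 - r) ^ 2 + 4 / π ^ 2 * (π / 4 - r) ^ 2 := by ring
    linarith
  -- counting
  set QQ : Finset (ℕ × ℕ) := Finset.range m ×ˢ Finset.range m with hQQdef
  have hQQmem : ∀ kl ∈ QQ, kl.1 < m ∧ kl.2 < m := by
    intro kl hkl
    rw [hQQdef, Finset.mem_product, Finset.mem_range, Finset.mem_range] at hkl
    exact hkl
  have hIic_card : (Set.Iic N₀).ncard = N₀ + 1 := by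
    rw [← Finset.coe_Iic, Set.ncard_coe_finset, Nat.card_Iic]
  have hRdisj : ∀ x : ℕ, ∀ i j i' j' : ℕ, (i ≠ i' ∨ j ≠ j') →
      Disjoint (RS i j x) (RS i' j' x) := by
    intro x i j i' j' hne
    have hIccdisj : ∀ (a a' : ℕ), a ≠ a' → ∀ u : ℝ,
        u ∈ Set.Icc (A a) (B a) → u ∈ Set.Icc (A a') (B a') → False := by
      intro a a' hne' u h1 h2
      rcases Nat.lt_or_ge a a' with hlt | hge
      · have hc : ((a:ℝ) + 1) ≤ (a':ℝ) := by exact_mod_cast hlt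
        have hx1 : u ≤ B a := h1.2
        have hx2 : A a' ≤ u := h2.1
        simp only [hAdef, hBdef] at hx1 hx2
        nlinarith [mul_le_mul_of_nonneg_right hc hL.le]
      · have hlt : a' < a := by omega
        have hc : ((a':ℝ) + 1) ≤ (a:ℝ) := by exact_mod_cast hlt
        have hx1 : u ≤ B a' := h2.2
        have hx2 : A a ≤ u := h1.1
        simp only [hAdef, hBdef] at hx1 hx2
        nlinarith [mul_le_mul_of_nonneg_right hc hL.le]
    rw [Set.disjoint_left]
    intro p hp hp'
    rcases hne with hne | hne
    · exact hIccdisj i i' hne (θ₁ p) hp.2.2.1 hp'.2.2.1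
    · exact hIccdisj j j' hne (θ₂ p) hp.2.2.2 hp'.2.2.2
  have hpairne : ∀ q r : ℕ × ℕ, q ≠ r → q.1 ≠ r.1 ∨ q.2 ≠ r.2 := by
    intro q rr hne
    by_contra hcc
    push_neg at hcc
    exact hne (Prod.ext hcc.1 hcc.2)
  have hpow_even : ∀ k : ℕ, ((-1:ℝ)) ^ (2 * k) = 1 := by
    intro k; rw [pow_mul]; norm_num
  have hpow_odd : ∀ k : ℕ, ((-1:ℝ)) ^ (2 * k + 1) = -1 := by
    intro k; rw [pow_succ, pow_mul]; norm_num
  have hcount_low : ∀ x : ℕ,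
      (∑ kl ∈ QQ, (RS (2 * kl.1) (2 * kl.2) x).ncard) +
      (∑ kl ∈ QQ, (RS (2 * kl.1 + 1) (2 * kl.2 + 1) x).ncard)
      ≤ {p : ℕ | p ≤ x ∧ p.Prime ∧ 0 < b₁ p * b₂ p}.ncard + 2 * (N₀ + 1) := by
    intro x
    have hfinPP : ({p : ℕ | p ≤ x ∧ p.Prime ∧ 0 < b₁ p ∧ 0 < b₂ p} ∪ Set.Iic N₀).Finite :=
      ((Set.finite_Iic x).subset (fun p hp => hp.1)).union (Set.finite_Iic N₀)
    have hfinNN : ({p : ℕ | p ≤ x ∧ p.Prime ∧ b₁ p < 0 ∧ b₂ p < 0} ∪ Set.Iic N₀).Finite :=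
      ((Set.finite_Iic x).subset (fun p hp => hp.1)).union (Set.finite_Iic N₀)
    have h1 : (∑ kl ∈ QQ, (RS (2 * kl.1) (2 * kl.2) x).ncard)
        ≤ ({p : ℕ | p ≤ x ∧ p.Prime ∧ 0 < b₁ p ∧ 0 < b₂ p} ∪ Set.Iic N₀).ncard := by
      apply sum_ncard_le QQ _ _ hfinPP
      · intro kl hkl p hp
        by_cases hpN : p ≤ N₀
        · exact Set.mem_union_right _ hpN
        · left
          refine ⟨hp.1, hp.2.1, ?_, ?_⟩
          · have := hsign₁ p hp.2.1 (by omega) (2 * kl.1) hp.2.2.1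
            rwa [hpow_even, one_mul] at this
          · have := hsign₂ p hp.2.1 (by omega) (2 * kl.2) hp.2.2.2
            rwa [hpow_even, one_mul] at this
      · intro q hq rr hr hne
        rcases hpairne q rr hne with h | h
        · exact hRdisj x _ _ _ _ (Or.inl (by omega))
        · exact hRdisj x _ _ _ _ (Or.inr (by omega))
    have h2 : (∑ kl ∈ QQ, (RS (2 * kl.1 + 1) (2 * kl.2 + 1) x).ncard)
        ≤ ({p : ℕ | p ≤ x ∧ p.Prime ∧ b₁ p < 0 ∧ b₂ p < 0} ∪ Set.Iic N₀).ncard := by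
      apply sum_ncard_le QQ _ _ hfinNN
      · intro kl hkl p hp
        by_cases hpN : p ≤ N₀
        · exact Set.mem_union_right _ hpN
        · left
          refine ⟨hp.1, hp.2.1, ?_, ?_⟩
          · have := hsign₁ p hp.2.1 (by omega) (2 * kl.1 + 1) hp.2.2.1
            rw [hpow_odd] at this; linarith
          · have := hsign₂ p hp.2.1 (by omega) (2 * kl.2 + 1) hp.2.2.2
            rw [hpow_odd] at this; linarith
      · intro q hq rr hr hne
        rcases hpairne q rr hne with h | h
        · exact hRdisj x _ _ _ _ (Or.inl (by omega))
        · exact hRdisj x _ _ _ _ (Or.inr (by omega))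
    have h3 : ({p : ℕ | p ≤ x ∧ p.Prime ∧ 0 < b₁ p ∧ 0 < b₂ p} ∪ Set.Iic N₀).ncard
        ≤ {p : ℕ | p ≤ x ∧ p.Prime ∧ 0 < b₁ p ∧ 0 < b₂ p}.ncard + (N₀ + 1) := by
      refine le_trans (Set.ncard_union_le _ _) ?_
      rw [hIic_card]
    have h4 : ({p : ℕ | p ≤ x ∧ p.Prime ∧ b₁ p < 0 ∧ b₂ p < 0} ∪ Set.Iic N₀).ncard
        ≤ {p : ℕ | p ≤ x ∧ p.Prime ∧ b₁ p < 0 ∧ b₂ p < 0}.ncard + (N₀ + 1) := by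
      refine le_trans (Set.ncard_union_le _ _) ?_
      rw [hIic_card]
    have h5 : {p : ℕ | p ≤ x ∧ p.Prime ∧ 0 < b₁ p ∧ 0 < b₂ p}.ncard +
        {p : ℕ | p ≤ x ∧ p.Prime ∧ b₁ p < 0 ∧ b₂ p < 0}.ncard
        ≤ {p : ℕ | p ≤ x ∧ p.Prime ∧ 0 < b₁ p * b₂ p}.ncard := by
      apply two_ncard_le
      · exact (Set.finite_Iic x).subset (fun p hp => hp.1)
      · exact fun p hp => ⟨hp.1, hp.2.1, mul_pos hp.2.2.1 hp.2.2.2⟩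
      · exact fun p hp => ⟨hp.1, hp.2.1, mul_pos_of_neg_of_neg hp.2.2.1 hp.2.2.2⟩
      · rw [Set.disjoint_left]
        intro p hp hp'
        linarith [hp.2.2.1, hp'.2.2.1]
    omega
  have hcount_up : ∀ x : ℕ,
      (∑ kl ∈ QQ, (RS (2 * kl.1) (2 * kl.2 + 1) x).ncard) +
      (∑ kl ∈ QQ, (RS (2 * kl.1 + 1) (2 * kl.2) x).ncard) +
      {p : ℕ | p ≤ x ∧ p.Prime ∧ 0 < b₁ p * b₂ p}.ncard
      ≤ {p : ℕ | p ≤ x ∧ p.Prime}.ncard + 2 * (N₀ + 1) := by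
    intro x
    have hfinPN : ({p : ℕ | p ≤ x ∧ p.Prime ∧ 0 < b₁ p ∧ b₂ p < 0} ∪ Set.Iic N₀).Finite :=
      ((Set.finite_Iic x).subset (fun p hp => hp.1)).union (Set.finite_Iic N₀)
    have hfinNP : ({p : ℕ | p ≤ x ∧ p.Prime ∧ b₁ p < 0 ∧ 0 < b₂ p} ∪ Set.Iic N₀).Finite :=
      ((Set.finite_Iic x).subset (fun p hp => hp.1)).union (Set.finite_Iic N₀)
    have h1 : (∑ kl ∈ QQ, (RS (2 * kl.1) (2 * kl.2 + 1) x).ncard)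
        ≤ ({p : ℕ | p ≤ x ∧ p.Prime ∧ 0 < b₁ p ∧ b₂ p < 0} ∪ Set.Iic N₀).ncard := by
      apply sum_ncard_le QQ _ _ hfinPN
      · intro kl hkl p hp
        by_cases hpN : p ≤ N₀
        · exact Set.mem_union_right _ hpN
        · left
          refine ⟨hp.1, hp.2.1, ?_, ?_⟩
          · have := hsign₁ p hp.2.1 (by omega) (2 * kl.1) hp.2.2.1
            rwa [hpow_even, one_mul] at this
          · have := hsign₂ p hp.2.1 (by omega) (2 * kl.2 + 1) hp.2.2.2
            rw [hpow_odd] at this; linarith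
      · intro q hq rr hr hne
        rcases hpairne q rr hne with h | h
        · exact hRdisj x _ _ _ _ (Or.inl (by omega))
        · exact hRdisj x _ _ _ _ (Or.inr (by omega))
    have h2 : (∑ kl ∈ QQ, (RS (2 * kl.1 + 1) (2 * kl.2) x).ncard)
        ≤ ({p : ℕ | p ≤ x ∧ p.Prime ∧ b₁ p < 0 ∧ 0 < b₂ p} ∪ Set.Iic N₀).ncard := by
      apply sum_ncard_le QQ _ _ hfinNP
      · intro kl hkl p hp
        by_cases hpN : p ≤ N₀
        · exact Set.mem_union_right _ hpN
        · left
          refine ⟨hp.1, hp.2.1, ?_, ?_⟩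
          · have := hsign₁ p hp.2.1 (by omega) (2 * kl.1 + 1) hp.2.2.1
            rw [hpow_odd] at this; linarith
          · have := hsign₂ p hp.2.1 (by omega) (2 * kl.2) hp.2.2.2
            rwa [hpow_even, one_mul] at this
      · intro q hq rr hr hne
        rcases hpairne q rr hne with h | h
        · exact hRdisj x _ _ _ _ (Or.inl (by omega))
        · exact hRdisj x _ _ _ _ (Or.inr (by omega))
    have h3 : ({p : ℕ | p ≤ x ∧ p.Prime ∧ 0 < b₁ p ∧ b₂ p < 0} ∪ Set.Iic N₀).ncard
        ≤ {p : ℕ | p ≤ x ∧ p.Prime ∧ 0 < b₁ p ∧ b₂ p < 0}.ncard + (N₀ + 1) := by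
      refine le_trans (Set.ncard_union_le _ _) ?_
      rw [hIic_card]
    have h4 : ({p : ℕ | p ≤ x ∧ p.Prime ∧ b₁ p < 0 ∧ 0 < b₂ p} ∪ Set.Iic N₀).ncard
        ≤ {p : ℕ | p ≤ x ∧ p.Prime ∧ b₁ p < 0 ∧ 0 < b₂ p}.ncard + (N₀ + 1) := by
      refine le_trans (Set.ncard_union_le _ _) ?_
      rw [hIic_card]
    have h5 : {p : ℕ | p ≤ x ∧ p.Prime ∧ 0 < b₁ p ∧ b₂ p < 0}.ncard +
        {p : ℕ | p ≤ x ∧ p.Prime ∧ b₁ p < 0 ∧ 0 < b₂ p}.ncard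
        ≤ {p : ℕ | p ≤ x ∧ p.Prime ∧ b₁ p * b₂ p < 0}.ncard := by
      apply two_ncard_le
      · exact (Set.finite_Iic x).subset (fun p hp => hp.1)
      · exact fun p hp => ⟨hp.1, hp.2.1, mul_neg_of_pos_of_neg hp.2.2.1 hp.2.2.2⟩
      · exact fun p hp => ⟨hp.1, hp.2.1, mul_neg_of_neg_of_pos hp.2.2.1 hp.2.2.2⟩
      · rw [Set.disjoint_left]
        intro p hp hp'
        linarith [hp.2.2.1, hp'.2.2.1]
    have h6 : {p : ℕ | p ≤ x ∧ p.Prime ∧ b₁ p * b₂ p < 0}.ncard +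
        {p : ℕ | p ≤ x ∧ p.Prime ∧ 0 < b₁ p * b₂ p}.ncard
        ≤ {p : ℕ | p ≤ x ∧ p.Prime}.ncard := by
      apply two_ncard_le
      · exact (Set.finite_Iic x).subset (fun p hp => hp.1)
      · exact fun p hp => ⟨hp.1, hp.2.1⟩
      · exact fun p hp => ⟨hp.1, hp.2.1⟩
      · rw [Set.disjoint_left]
        intro p hp hp'
        linarith [hp.2.2, hp'.2.2]
    omega
  -- limit statements for the four sums
  have hsum_ee : Tendsto (fun x : ℕ => ∑ kl ∈ QQ, (Nat.card (RS (2 * kl.1) (2 * kl.2) x) : ℝ) / Dr x)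
      atTop (nhds (∑ kl ∈ QQ, 4 / π ^ 2 * (Iδ (2 * kl.1) * Iδ (2 * kl.2)))) :=
    tendsto_finset_sum _ fun kl hkl =>
      hrect (2 * kl.1) (2 * kl.2) (by have := hQQmem kl hkl; omega) (by have := hQQmem kl hkl; omega)
  have hsum_oo : Tendsto (fun x : ℕ =>
      ∑ kl ∈ QQ, (Nat.card (RS (2 * kl.1 + 1) (2 * kl.2 + 1) x) : ℝ) / Dr x)
      atTop (nhds (∑ kl ∈ QQ, 4 / π ^ 2 * (Iδ (2 * kl.1 + 1) * Iδ (2 * kl.2 + 1)))) :=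
    tendsto_finset_sum _ fun kl hkl =>
      hrect (2 * kl.1 + 1) (2 * kl.2 + 1) (by have := hQQmem kl hkl; omega)
        (by have := hQQmem kl hkl; omega)
  have hsum_eo : Tendsto (fun x : ℕ =>
      ∑ kl ∈ QQ, (Nat.card (RS (2 * kl.1) (2 * kl.2 + 1) x) : ℝ) / Dr x)
      atTop (nhds (∑ kl ∈ QQ, 4 / π ^ 2 * (Iδ (2 * kl.1) * Iδ (2 * kl.2 + 1)))) :=
    tendsto_finset_sum _ fun kl hkl =>
      hrect (2 * kl.1) (2 * kl.2 + 1) (by have := hQQmem kl hkl; omega)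
        (by have := hQQmem kl hkl; omega)
  have hsum_oe : Tendsto (fun x : ℕ =>
      ∑ kl ∈ QQ, (Nat.card (RS (2 * kl.1 + 1) (2 * kl.2) x) : ℝ) / Dr x)
      atTop (nhds (∑ kl ∈ QQ, 4 / π ^ 2 * (Iδ (2 * kl.1 + 1) * Iδ (2 * kl.2)))) :=
    tendsto_finset_sum _ fun kl hkl =>
      hrect (2 * kl.1 + 1) (2 * kl.2) (by have := hQQmem kl hkl; omega)
        (by have := hQQmem kl hkl; omega)
  have hprodsum : ∀ f₁ f₂ : ℕ → ℕ,
      (∑ kl ∈ QQ, 4 / π ^ 2 * (Iδ (f₁ kl.1) * Iδ (f₂ kl.2)))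
        = 4 / π ^ 2 * ((∑ k ∈ Finset.range m, Iδ (f₁ k)) * (∑ k ∈ Finset.range m, Iδ (f₂ k))) := by
    intro f₁ f₂
    rw [hQQdef, Finset.sum_product' (f := fun k l => 4 / π ^ 2 * (Iδ (f₁ k) * Iδ (f₂ l))),
      Finset.sum_mul_sum, Finset.mul_sum]
    simp_rw [Finset.mul_sum]
  have hzero : Tendsto (fun x : ℕ => 2 * ((N₀:ℝ) + 1) / Dr x) atTop (nhds 0) :=
    Tendsto.div_atTop tendsto_const_nhds hDtopR
  -- pointwise bounds
  have hptlow : ∀ᶠ x : ℕ in atTop,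
      (∑ kl ∈ QQ, (Nat.card (RS (2 * kl.1) (2 * kl.2) x) : ℝ) / Dr x)
      + (∑ kl ∈ QQ, (Nat.card (RS (2 * kl.1 + 1) (2 * kl.2 + 1) x) : ℝ) / Dr x)
      - 2 * ((N₀:ℝ) + 1) / Dr x
      ≤ (Nat.card {p : ℕ | p ≤ x ∧ p.Prime ∧ 0 < b₁ p * b₂ p} : ℝ) / Dr x := by
    filter_upwards [hDpos] with x hD
    have hDrx : (0:ℝ) < Dr x := hD
    have hnat := hcount_low x
    have hcast : (∑ kl ∈ QQ, ((RS (2 * kl.1) (2 * kl.2) x).ncard : ℝ)) +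
        (∑ kl ∈ QQ, ((RS (2 * kl.1 + 1) (2 * kl.2 + 1) x).ncard : ℝ))
        ≤ ({p : ℕ | p ≤ x ∧ p.Prime ∧ 0 < b₁ p * b₂ p}.ncard : ℝ) + 2 * ((N₀:ℝ) + 1) := by
      exact_mod_cast hnat
    rw [← Finset.sum_div, ← Finset.sum_div, ← add_div, ← sub_div,
      div_le_div_iff_of_pos_right hDrx]
    simp only [Nat.card_coe_set_eq]
    linarith [hcast]
  have hptup : ∀ᶠ x : ℕ in atTop,
      (Nat.card {p : ℕ | p ≤ x ∧ p.Prime ∧ 0 < b₁ p * b₂ p} : ℝ) / Dr x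
      ≤ 1 - ((∑ kl ∈ QQ, (Nat.card (RS (2 * kl.1) (2 * kl.2 + 1) x) : ℝ) / Dr x)
        + (∑ kl ∈ QQ, (Nat.card (RS (2 * kl.1 + 1) (2 * kl.2) x) : ℝ) / Dr x))
      + 2 * ((N₀:ℝ) + 1) / Dr x := by
    filter_upwards [hDpos] with x hD
    have hDrx : (0:ℝ) < Dr x := hD
    have hnat := hcount_up x
    have hcast : (∑ kl ∈ QQ, ((RS (2 * kl.1) (2 * kl.2 + 1) x).ncard : ℝ)) +
        (∑ kl ∈ QQ, ((RS (2 * kl.1 + 1) (2 * kl.2) x).ncard : ℝ)) +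
        ({p : ℕ | p ≤ x ∧ p.Prime ∧ 0 < b₁ p * b₂ p}.ncard : ℝ)
        ≤ ({p : ℕ | p ≤ x ∧ p.Prime}.ncard : ℝ) + 2 * ((N₀:ℝ) + 1) := by
      exact_mod_cast hnat
    have hD1 : Dr x = ({p : ℕ | p ≤ x ∧ p.Prime}.ncard : ℝ) := by
      rw [hDrdef]; simp only [Nat.card_coe_set_eq]
    rw [← Finset.sum_div, ← Finset.sum_div, div_le_iff₀ hDrx]
    have expand : (1 - ((∑ kl ∈ QQ, (Nat.card (RS (2 * kl.1) (2 * kl.2 + 1) x) : ℝ)) / Dr x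
        + (∑ kl ∈ QQ, (Nat.card (RS (2 * kl.1 + 1) (2 * kl.2) x) : ℝ)) / Dr x)
        + 2 * ((N₀:ℝ) + 1) / Dr x) * Dr x
        = Dr x - (∑ kl ∈ QQ, (Nat.card (RS (2 * kl.1) (2 * kl.2 + 1) x) : ℝ))
          - (∑ kl ∈ QQ, (Nat.card (RS (2 * kl.1 + 1) (2 * kl.2) x) : ℝ))
          + 2 * ((N₀:ℝ) + 1) := by
      field_simp
      ring
    rw [expand, hD1]
    simp only [Nat.card_coe_set_eq]
    linarith [hcast]
  -- assemble limits
  have hGL : Tendsto (fun x : ℕ =>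
      (∑ kl ∈ QQ, (Nat.card (RS (2 * kl.1) (2 * kl.2) x) : ℝ) / Dr x)
      + (∑ kl ∈ QQ, (Nat.card (RS (2 * kl.1 + 1) (2 * kl.2 + 1) x) : ℝ) / Dr x)
      - 2 * ((N₀:ℝ) + 1) / Dr x) atTop
      (nhds (4 / π ^ 2 * (Se * Se) + 4 / π ^ 2 * (So * So) - 0)) := by
    refine Tendsto.sub (Tendsto.add ?_ ?_) hzero
    · have h := hsum_ee
      rwa [hprodsum (fun k => 2 * k) (fun k => 2 * k)] at h
    · have h := hsum_oo
      rwa [hprodsum (fun k => 2 * k + 1) (fun k => 2 * k + 1)] at h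
  rw [sub_zero] at hGL
  have hGU : Tendsto (fun x : ℕ =>
      1 - ((∑ kl ∈ QQ, (Nat.card (RS (2 * kl.1) (2 * kl.2 + 1) x) : ℝ) / Dr x)
        + (∑ kl ∈ QQ, (Nat.card (RS (2 * kl.1 + 1) (2 * kl.2) x) : ℝ) / Dr x))
      + 2 * ((N₀:ℝ) + 1) / Dr x) atTop
      (nhds (1 - (4 / π ^ 2 * (Se * So) + 4 / π ^ 2 * (So * Se)) + 0)) := by
    refine Tendsto.add (Tendsto.sub tendsto_const_nhds (Tendsto.add ?_ ?_)) hzero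
    · have h := hsum_eo
      rwa [hprodsum (fun k => 2 * k) (fun k => 2 * k + 1)] at h
    · have h := hsum_oe
      rwa [hprodsum (fun k => 2 * k + 1) (fun k => 2 * k)] at h
  rw [add_zero] at hGU
  have hev1 := hGL.eventually (eventually_gt_nhds
    (show 4 / π ^ 2 * (Se * Se) + 4 / π ^ 2 * (So * So) - ε / 4
        < 4 / π ^ 2 * (Se * Se) + 4 / π ^ 2 * (So * So) by linarith))
  have hev2 := hGU.eventually (eventually_lt_nhds
    (show 1 - (4 / π ^ 2 * (Se * So) + 4 / π ^ 2 * (So * Se))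
        < 1 - (4 / π ^ 2 * (Se * So) + 4 / π ^ 2 * (So * Se)) + ε / 4 by linarith))
  filter_upwards [hev1, hev2, hptlow, hptup] with x h1 h2 h3 h4
  rw [Real.dist_eq, abs_lt]
  have hle : Dr x = (Nat.card {p : ℕ | p ≤ x ∧ p.Prime} : ℝ) := rfl
  rw [hle] at h3 h4
  constructor
  · linarith
  · linarith
end

section
/- Let θ₁, θ₂ be functions from the set of primes to (0, π) whose pairs are equidistributed with respect to the 2-product Sato-Tate measure, i.e. for all subintervals I₁, I₂ ⊆ [0, π], lim_{x→∞} #{p prime, p ≤ x : (θ₁(p), θ₂(p)) ∈ I₁ × I₂} / #{p prime, p ≤ x} = (4/π²)·∫_{I₁}∫_{I₂} sin²(t₁) sin²(t₂) dt₂ dt₁. Let c₁, c₂ be functions from the set of primes to [−1, 1], let ν be a positive odd integer, and for i = 1, 2 set bᵢ(p) = sin((ν+1)θᵢ(p)) − (cᵢ(p)/√p)·sin(νθᵢ(p)). Then the set of primes p with b₁(p)·b₂(p) < 0 has natural density 1/2, and the set of primes p with b₁(p)·b₂(p) = 0 has natural density 0. -/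
set_option maxHeartbeats 1000000

open Real Filter MeasureTheory

lemma natCard_filter (x : ℕ) (Q : ℕ → Prop) [DecidablePred Q] :
    Nat.card {p : ℕ | p ≤ x ∧ Q p} = ((Finset.range (x+1)).filter Q).card := by
  have h : {p : ℕ | p ≤ x ∧ Q p} = ↑((Finset.range (x+1)).filter Q) := by
    ext p; simp [Nat.lt_succ_iff, and_comm]
  rw [h, Nat.card_coe_set_eq, Set.ncard_coe_finset]

lemma primeCount_tendsto :
    Tendsto (fun x : ℕ => ((Finset.range (x+1)).filter Nat.Prime).card) atTop atTop := by
  apply tendsto_atTop_atTop_of_monotone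
  · intro a b hab
    exact Finset.card_le_card (Finset.filter_subset_filter _ (by
      intro n hn; simp only [Finset.mem_range] at *; omega))
  · intro n
    obtain ⟨t, hts, htc⟩ := Nat.infinite_setOf_prime.exists_subset_card_eq n
    rcases t.exists_le with ⟨x, hx⟩
    refine ⟨x, ?_⟩
    rw [← htc]
    apply Finset.card_le_card
    intro p hp
    simp only [Finset.mem_filter, Finset.mem_range, Nat.lt_succ_iff]
    exact ⟨hx p hp, hts hp⟩

lemma sin_ge_of_mem (a x : ℝ) (ha : 0 < a) (hax : a ≤ x) (hx : x ≤ π - a) : sin a ≤ sin x := by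
  have ha2 : a ≤ π / 2 := by linarith
  rcases le_or_gt x (π / 2) with h | h
  · exact Real.strictMonoOn_sin.monotoneOn ⟨by linarith, ha2⟩ ⟨by linarith, h⟩ hax
  · rw [← Real.sin_pi_sub x]
    exact Real.strictMonoOn_sin.monotoneOn ⟨by linarith, ha2⟩ ⟨by linarith, by linarith⟩ (by linarith)

lemma sign_good (k : ℕ) (hk : 0 < k) (j : ℕ) (ε t : ℝ) (hε : 0 < ε) (hεk : ε ≤ π / (2 * k))
    (ht : t ∈ Set.Icc ((j : ℝ) * π / k + ε) (((j : ℝ) + 1) * π / k - ε)) :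
    sin (k * ε) ≤ (-1) ^ j * sin (k * t) := by
  have hkR : (0:ℝ) < k := Nat.cast_pos.mpr hk
  have hπ := Real.pi_pos
  have h1 : (k:ℝ) * ε ≤ π / 2 := by
    rw [le_div_iff₀ (by norm_num : (0:ℝ) < 2)]
    calc (k:ℝ) * ε * 2 ≤ (k:ℝ) * (π / (2*k)) * 2 := by nlinarith
    _ = π := by field_simp
  have hx1 : (k:ℝ) * ε ≤ k * t - j * π := by
    have : (j:ℝ) * π + k * ε ≤ k * t := by
      have h := mul_le_mul_of_nonneg_left ht.1 (le_of_lt hkR)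
      calc (j:ℝ) * π + k * ε = k * ((j:ℝ) * π / k + ε) := by field_simp
      _ ≤ k * t := h
    linarith
  have hx2 : (k:ℝ) * t - j * π ≤ π - k * ε := by
    have h := mul_le_mul_of_nonneg_left ht.2 (le_of_lt hkR)
    have : (k:ℝ) * t ≤ (j:ℝ) * π + π - k * ε := by
      calc (k:ℝ) * t ≤ k * (((j : ℝ) + 1) * π / k - ε) := h
      _ = (j:ℝ) * π + π - k * ε := by field_simp
    linarith
  have hsin : sin (k * t) = (-1) ^ j * sin (k * t - j * π) := by
    have h := Real.sin_add_int_mul_pi (k * t - j * π) (j : ℤ)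
    rw [zpow_natCast] at h
    rw [← h]
    push_cast
    ring_nf
  rw [hsin, ← mul_assoc, ← pow_add, Even.neg_one_pow ⟨j, by ring⟩, one_mul]
  exact sin_ge_of_mem _ _ (by positivity) hx1 hx2

lemma covering (k : ℕ) (hk : 0 < k) (ε t : ℝ) (ht : t ∈ Set.Ioo 0 π)
    (hbad : ∀ j ≤ k, t ∉ Set.Icc ((j:ℝ) * π / k - ε) ((j:ℝ) * π / k + ε)) :
    ∃ j < k, t ∈ Set.Icc ((j : ℝ) * π / k + ε) (((j : ℝ) + 1) * π / k - ε) := by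
  have hkR : (0:ℝ) < k := Nat.cast_pos.mpr hk
  have hπ := Real.pi_pos
  set j : ℕ := ⌊t * k / π⌋₊ with hj
  have htpos : 0 < t := ht.1
  have hjle : (j:ℝ) ≤ t * k / π := Nat.floor_le (by positivity)
  have hjlt : t * k / π < j + 1 := Nat.lt_floor_add_one _
  have hjk : j < k := by
    have : t * k / π < k := by
      rw [div_lt_iff₀ hπ]
      have := ht.2
      nlinarith
    exact_mod_cast Nat.floor_lt (by positivity) |>.2 this
  have h1 : (j:ℝ) * π / k ≤ t := by
    rw [div_le_iff₀ hkR]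
    calc (j:ℝ) * π ≤ (t * k / π) * π := by nlinarith
    _ = t * k := by field_simp
  have h2 : t ≤ ((j:ℝ) + 1) * π / k := by
    rw [le_div_iff₀ hkR]
    calc t * k = (t * k / π) * π := by field_simp
    _ ≤ ((j:ℝ) + 1) * π := by nlinarith
  refine ⟨j, hjk, ?_, ?_⟩
  · by_contra h
    push_neg at h
    exact hbad j (le_of_lt hjk) ⟨by linarith, by linarith⟩
  · by_contra h
    push_neg at h
    refine hbad (j+1) hjk ⟨?_, ?_⟩ <;> push_cast <;> [linarith; linarith]

lemma integral_sin_sq_Icc (a b : ℝ) (hab : a ≤ b) :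
    ∫ x in Set.Icc a b, sin x ^ 2 = (sin a * cos a - sin b * cos b + b - a) / 2 := by
  rw [MeasureTheory.integral_Icc_eq_integral_Ioc, ← intervalIntegral.integral_of_le hab,
    integral_sin_sq]

lemma integral_sin_sq_le (a b : ℝ) (hab : a ≤ b) :
    ∫ x in Set.Icc a b, sin x ^ 2 ≤ b - a := by
  have h1 : ∫ x in Set.Icc a b, sin x ^ 2 ≤ ∫ _x in Set.Icc a b, (1:ℝ) := by
    apply MeasureTheory.setIntegral_mono_on
    · apply Continuous.integrableOn_Icc; continuity
    · exact MeasureTheory.integrableOn_const measure_Icc_lt_top.ne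
    · exact measurableSet_Icc
    · intro x _; have := Real.sin_sq_le_one x; linarith
  have h2 : ∫ _x in Set.Icc a b, (1:ℝ) = b - a := by
    simp [Real.volume_Icc, ENNReal.toReal_ofReal (by linarith : (0:ℝ) ≤ b - a), hab]
  linarith

lemma integral_sin_sq_nonneg (a b : ℝ) :
    0 ≤ ∫ x in Set.Icc a b, sin x ^ 2 := by
  apply MeasureTheory.integral_nonneg
  intro x; positivity

lemma sin_sq_reflect (a b : ℝ) (hab : a ≤ b) :
    ∫ x in Set.Icc a b, sin x ^ 2 = ∫ x in Set.Icc (π - b) (π - a), sin x ^ 2 := by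
  rw [integral_sin_sq_Icc a b hab, integral_sin_sq_Icc (π - b) (π - a) (by linarith),
    Real.sin_pi_sub, Real.sin_pi_sub, Real.cos_pi_sub, Real.cos_pi_sub]
  ring

lemma double_int (I₁ I₂ : Set ℝ) :
    (∫ t₁ in I₁, ∫ t₂ in I₂, sin t₁ ^ 2 * sin t₂ ^ 2)
      = (∫ t in I₁, sin t ^ 2) * (∫ t in I₂, sin t ^ 2) := by
  have h : ∀ t₁ : ℝ, (∫ t₂ in I₂, sin t₁ ^ 2 * sin t₂ ^ 2)
      = sin t₁ ^ 2 * ∫ t₂ in I₂, sin t₂ ^ 2 := fun t₁ => MeasureTheory.integral_const_mul _ _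
  simp_rw [h]
  exact MeasureTheory.integral_mul_const _ _

def cnt (Q : ℕ → Prop) [DecidablePred Q] (x : ℕ) : Finset ℕ :=
  (Finset.range (x+1)).filter (fun p => p.Prime ∧ Q p)

lemma mem_cnt {Q : ℕ → Prop} [DecidablePred Q] {x p : ℕ} :
    p ∈ cnt Q x ↔ p ≤ x ∧ p.Prime ∧ Q p := by
  simp [cnt, Nat.lt_succ_iff, and_comm, and_assoc]

lemma cnt_card (x : ℕ) (Q : ℕ → Prop) [DecidablePred Q] :
    Nat.card {p : ℕ | p ≤ x ∧ p.Prime ∧ Q p} = (cnt Q x).card := by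
  have h : {p : ℕ | p ≤ x ∧ p.Prime ∧ Q p} = ↑(cnt Q x) := by
    ext p; simp [mem_cnt]
  rw [h, Nat.card_coe_set_eq, Set.ncard_coe_finset]

lemma cnt_subset {Q R : ℕ → Prop} [DecidablePred Q] [DecidablePred R]
    (h : ∀ p, p.Prime → Q p → R p) (x : ℕ) : cnt Q x ⊆ cnt R x := by
  intro p hp
  rw [mem_cnt] at *
  exact ⟨hp.1, hp.2.1, h p hp.2.1 hp.2.2⟩

/-- Analytic core of Theorem 1.3 (positive case): with pair Sato-Tate equidistributed angles
`θᵢ(p) ∈ (0,π)` and `bᵢ(p) = sin((ν+1)θᵢ(p)) − (cᵢ(p)/√p)·sin(νθᵢ(p))`, the set of primes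
`p` with `b₁(p)b₂(p) < 0` has natural density `1/2`, and `b₁(p)b₂(p) = 0` has density `0`. -/
theorem half_integral_sign_density_neg_zero
    (θ₁ θ₂ : ℕ → ℝ)
    (hθ₁ : ∀ p : ℕ, p.Prime → θ₁ p ∈ Set.Ioo 0 π)
    (hθ₂ : ∀ p : ℕ, p.Prime → θ₂ p ∈ Set.Ioo 0 π)
    (hequi : ∀ a₁ b₁ a₂ b₂ : ℝ,
      0 ≤ a₁ → a₁ ≤ b₁ → b₁ ≤ π → 0 ≤ a₂ → a₂ ≤ b₂ → b₂ ≤ π →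
      Tendsto (fun x : ℕ =>
        (Nat.card {p : ℕ | p ≤ x ∧ p.Prime ∧
          θ₁ p ∈ Set.Icc a₁ b₁ ∧ θ₂ p ∈ Set.Icc a₂ b₂} : ℝ) /
        (Nat.card {p : ℕ | p ≤ x ∧ p.Prime} : ℝ)) atTop
        (nhds ((4 / π ^ 2) *
          ∫ t₁ in Set.Icc a₁ b₁, ∫ t₂ in Set.Icc a₂ b₂,
            Real.sin t₁ ^ 2 * Real.sin t₂ ^ 2)))
    (c₁ c₂ : ℕ → ℝ)
    (hc₁ : ∀ p : ℕ, p.Prime → c₁ p ∈ Set.Icc (-1 : ℝ) 1)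
    (hc₂ : ∀ p : ℕ, p.Prime → c₂ p ∈ Set.Icc (-1 : ℝ) 1)
    (ν : ℕ) (hν : Odd ν) (hν' : 0 < ν)
    (b₁ b₂ : ℕ → ℝ)
    (hb₁ : ∀ p : ℕ, b₁ p =
      Real.sin (((ν : ℝ) + 1) * θ₁ p) - (c₁ p / Real.sqrt p) * Real.sin ((ν : ℝ) * θ₁ p))
    (hb₂ : ∀ p : ℕ, b₂ p =
      Real.sin (((ν : ℝ) + 1) * θ₂ p) - (c₂ p / Real.sqrt p) * Real.sin ((ν : ℝ) * θ₂ p)) :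
    Tendsto (fun x : ℕ =>
      (Nat.card {p : ℕ | p ≤ x ∧ p.Prime ∧ b₁ p * b₂ p < 0} : ℝ) /
      (Nat.card {p : ℕ | p ≤ x ∧ p.Prime} : ℝ)) atTop (nhds (1 / 2)) ∧
    Tendsto (fun x : ℕ =>
      (Nat.card {p : ℕ | p ≤ x ∧ p.Prime ∧ b₁ p * b₂ p = 0} : ℝ) /
      (Nat.card {p : ℕ | p ≤ x ∧ p.Prime} : ℝ)) atTop (nhds 0) := by
  classical
  have hπ := Real.pi_pos
  set k := ν + 1 with hkdef
  have hk1 : 0 < k := by omega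
  have hkE : Even k := Odd.add_one hν
  have hkR : (0:ℝ) < k := by exact_mod_cast hk1
  set z : ℕ → ℝ := fun j => (j:ℝ) * π / k with hzdef
  have hz0 : z 0 = 0 := by simp [hzdef]
  have hzk : z k = π := by simp only [hzdef]; exact mul_div_cancel_left₀ π hkR.ne'
  have hzsucc : ∀ j : ℕ, z (j+1) = z j + π / k := by
    intro j; simp only [hzdef]; push_cast; ring
  have hzmono : ∀ {i j : ℕ}, i ≤ j → z i ≤ z j := by
    intro i j hij
    simp only [hzdef]
    gcongr
  have hznn : ∀ j : ℕ, 0 ≤ z j := fun j => by simp only [hzdef]; positivity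
  have hzleπ : ∀ j : ℕ, j ≤ k → z j ≤ π := fun j hj => hzk ▸ hzmono hj
  set D : ℕ → ℕ := fun x => ((Finset.range (x+1)).filter Nat.Prime).card with hDdef
  have hDtop : Tendsto (fun x => (D x : ℝ)) atTop atTop :=
    tendsto_natCast_atTop_atTop.comp primeCount_tendsto
  have hDeq : ∀ x : ℕ, Nat.card {p : ℕ | p ≤ x ∧ p.Prime} = D x := fun x =>
    natCard_filter x Nat.Prime
  -- replace Nat.card ratios by cnt ratios
  have hgoal : ∀ (Q : ℕ → Prop) [DecidablePred Q] (x : ℕ),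
      (Nat.card {p : ℕ | p ≤ x ∧ p.Prime ∧ Q p} : ℝ) /
        (Nat.card {p : ℕ | p ≤ x ∧ p.Prime} : ℝ)
      = ((cnt Q x).card : ℝ) / (D x : ℝ) := by
    intro Q inst x
    rw [cnt_card, hDeq x]
  -- the equidistribution hypothesis in cnt form
  have hequi' : ∀ aa bb cc dd : ℝ, 0 ≤ aa → aa ≤ bb → bb ≤ π → 0 ≤ cc → cc ≤ dd → dd ≤ π →
      Tendsto (fun x : ℕ =>
        ((cnt (fun p => θ₁ p ∈ Set.Icc aa bb ∧ θ₂ p ∈ Set.Icc cc dd) x).card : ℝ) / (D x : ℝ))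
        atTop
        (nhds ((4 / π ^ 2) *
          ((∫ t in Set.Icc aa bb, sin t ^ 2) * (∫ t in Set.Icc cc dd, sin t ^ 2)))) := by
    intro aa bb cc dd h1 h2 h3 h4 h5 h6
    have h := hequi aa bb cc dd h1 h2 h3 h4 h5 h6
    rw [double_int] at h
    refine (tendsto_congr fun x => ?_).1 h
    exact hgoal _ x
  -- the main quantitative estimate, for every small ε and tolerance δ
  have key : ∀ ε : ℝ, 0 < ε → ε ≤ π / (2*k) → ∀ δ : ℝ, 0 < δ → ∀ᶠ x : ℕ in atTop,
      (1/2 - 4*k*ε/π - δ ≤ ((cnt (fun p => b₁ p * b₂ p < 0) x).card : ℝ) / (D x : ℝ) ∧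
        ((cnt (fun p => b₁ p * b₂ p < 0) x).card : ℝ) / (D x : ℝ) ≤ 1/2 + (k+1)*(8*ε/π) + δ) ∧
      (((cnt (fun p => b₁ p * b₂ p = 0) x).card : ℝ) / (D x : ℝ) ≤ (k+1)*(8*ε/π) + δ) := by
    intro ε hε hεk δ hδ
    have hπk : 2*ε ≤ π / k := by
      have h : π/(2*k)*2 = π/k := by field_simp
      linarith
    have hkε2 : (k:ℝ) * ε ≤ π / 2 := by
      have h2 : 2*ε*k ≤ π := by rw [le_div_iff₀ hkR] at hπk; exact hπk
      nlinarith
    set s := Real.sin (k * ε) with hsdef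
    have hs : 0 < s := Real.sin_pos_of_pos_of_lt_pi (by positivity) (by nlinarith)
    have hs1 : s ≤ 1 := Real.sin_le_one _
    set P₀ : ℕ := ⌈(1/s)^2⌉₊ with hP₀def
    have hP : ∀ p : ℕ, p.Prime → P₀ < p → 1 / Real.sqrt p < s := by
      intro p hp hpP
      have hp2 : (1/s)^2 < (p:ℝ) := by
        calc (1/s)^2 ≤ (P₀ : ℝ) := Nat.le_ceil _
        _ < p := by exact_mod_cast hpP
      have hsq : 1/s < Real.sqrt p := by
        rw [show (1/s : ℝ) = Real.sqrt ((1/s)^2) from (Real.sqrt_sq (by positivity)).symm]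
        exact Real.sqrt_lt_sqrt (by positivity) hp2
      have hsp : 0 < Real.sqrt p := lt_trans (by positivity) hsq
      rw [div_lt_iff₀ hsp]
      rw [div_lt_iff₀ hs] at hsq
      nlinarith
    -- good intervals facts
    have hgood0 : ∀ j : ℕ, 0 ≤ z j + ε := fun j => by
      have := hznn j; linarith
    have hgood1 : ∀ j : ℕ, z j + ε ≤ z (j+1) - ε := fun j => by
      have := hzsucc j; linarith
    have hgood2 : ∀ j : ℕ, j < k → z (j+1) - ε ≤ π := fun j hj => by
      have := hzleπ (j+1) hj; linarith
    -- sign of b on good intervals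
    have bsign : ∀ (θ c bb : ℕ → ℝ), (∀ p, p.Prime → θ p ∈ Set.Ioo 0 π) →
        (∀ p, p.Prime → c p ∈ Set.Icc (-1:ℝ) 1) →
        (∀ p, bb p = Real.sin (((ν:ℝ)+1) * θ p) - (c p / Real.sqrt p) * Real.sin ((ν:ℝ) * θ p)) →
        ∀ j p, p.Prime → P₀ < p → θ p ∈ Set.Icc (z j + ε) (z (j+1) - ε) →
        0 < (-1:ℝ)^j * bb p := by
      intro θ c bb hθ hc hbb j p hp hpP hmem
      have hkcast : ((ν:ℝ)+1) = (k:ℝ) := by rw [hkdef]; push_cast; ring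
      have hmem' : θ p ∈ Set.Icc ((j : ℝ) * π / k + ε) (((j : ℝ) + 1) * π / k - ε) := by
        refine ⟨?_, ?_⟩
        · have := hmem.1; simp only [hzdef] at this; exact this
        · have := hmem.2; simp only [hzdef, Nat.cast_add, Nat.cast_one] at this; exact this
      have hsig : s ≤ (-1:ℝ)^j * Real.sin (k * θ p) := sign_good k hk1 j ε (θ p) hε hεk hmem'
      have hq : |c p / Real.sqrt p * Real.sin ((ν:ℝ) * θ p)| ≤ 1 / Real.sqrt p := by
        rw [abs_mul, abs_div]
        have h1 : |c p| ≤ 1 := abs_le.2 (hc p hp)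
        have h2 : |Real.sin ((ν:ℝ) * θ p)| ≤ 1 := Real.abs_sin_le_one _
        have h3 : (0:ℝ) < Real.sqrt p := Real.sqrt_pos.2 (by exact_mod_cast hp.pos)
        have h4 : |Real.sqrt p| = Real.sqrt p := abs_of_pos h3
        rw [h4]
        calc |c p| / Real.sqrt p * |Real.sin ((ν:ℝ) * θ p)| ≤ 1 / Real.sqrt p * 1 := by
              gcongr
        _ = 1 / Real.sqrt p := by ring
      have hqs : (-1:ℝ)^j * (c p / Real.sqrt p * Real.sin ((ν:ℝ) * θ p)) < s := by
        have h5 : (-1:ℝ)^j * (c p / Real.sqrt p * Real.sin ((ν:ℝ) * θ p)) ≤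
            |c p / Real.sqrt p * Real.sin ((ν:ℝ) * θ p)| := by
          rcases Nat.even_or_odd j with he | ho
          · rw [he.neg_one_pow, one_mul]; exact le_abs_self _
          · rw [ho.neg_one_pow]; rw [neg_one_mul]; exact neg_le_abs _
        calc (-1:ℝ)^j * (c p / Real.sqrt p * Real.sin ((ν:ℝ) * θ p)) ≤ _ := h5
        _ ≤ 1 / Real.sqrt p := hq
        _ < s := hP p hp hpP
      rw [hbb p, mul_sub, hkcast]
      linarith
    -- measure quantities
    set M : ℕ → ℝ := fun j => ∫ t in Set.Icc (z j + ε) (z (j+1) - ε), Real.sin t ^ 2 with hMdef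
    set OP : Finset (ℕ × ℕ) := ((Finset.range k) ×ˢ (Finset.range k)).filter
      (fun jl => ¬ Even (jl.1 + jl.2)) with hOPdef
    set G : ℕ × ℕ → ℕ → Finset ℕ := fun jl x => cnt (fun p =>
      θ₁ p ∈ Set.Icc (z jl.1 + ε) (z (jl.1+1) - ε) ∧
      θ₂ p ∈ Set.Icc (z jl.2 + ε) (z (jl.2+1) - ε)) x with hGdef
    set B1 : ℕ → ℕ → Finset ℕ := fun j x => cnt (fun p =>
      θ₁ p ∈ Set.Icc (max 0 (z j - ε)) (min π (z j + ε)) ∧ θ₂ p ∈ Set.Icc 0 π) x with hB1def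
    set B2 : ℕ → ℕ → Finset ℕ := fun j x => cnt (fun p =>
      θ₁ p ∈ Set.Icc 0 π ∧ θ₂ p ∈ Set.Icc (max 0 (z j - ε)) (min π (z j + ε))) x with hB2def
    have hI0π : (∫ t in Set.Icc (0:ℝ) π, Real.sin t ^ 2) = π/2 := by
      rw [integral_sin_sq_Icc 0 π hπ.le]; simp
    have hmaxmin : ∀ j : ℕ, j ≤ k → max 0 (z j - ε) ≤ min π (z j + ε) := by
      intro j hj
      have h1 := hzleπ j hj
      have h2 := hznn j
      exact le_min (max_le hπ.le (by linarith)) (max_le (by linarith) (by linarith))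
    -- limits of the good counts
    have hGlim : ∀ jl ∈ OP, Tendsto (fun x => ((G jl x).card : ℝ) / (D x : ℝ)) atTop
        (nhds ((4/π^2) * (M jl.1 * M jl.2))) := by
      intro jl hjl
      simp only [hOPdef, Finset.mem_filter, Finset.mem_product, Finset.mem_range] at hjl
      exact hequi' _ _ _ _ (hgood0 _) (hgood1 _) (hgood2 _ hjl.1.1)
        (hgood0 _) (hgood1 _) (hgood2 _ hjl.1.2)
    have hSumGlim : Tendsto (fun x => (∑ jl ∈ OP, ((G jl x).card : ℝ)) / (D x : ℝ)) atTop
        (nhds (∑ jl ∈ OP, (4/π^2) * (M jl.1 * M jl.2))) := by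
      simp only [Finset.sum_div]
      exact tendsto_finset_sum _ hGlim
    -- limits of the bad counts
    have hB1lim : ∀ j ∈ Finset.range (k+1), Tendsto (fun x => ((B1 j x).card : ℝ) / (D x : ℝ))
        atTop (nhds ((4/π^2) * ((∫ t in Set.Icc (max 0 (z j - ε)) (min π (z j + ε)), Real.sin t ^ 2) * (π/2)))) := by
      intro j hj
      rw [Finset.mem_range] at hj
      have h := hequi' (max 0 (z j - ε)) (min π (z j + ε)) 0 π (le_max_left _ _)
        (hmaxmin j (by omega)) (min_le_left _ _) le_rfl hπ.le le_rfl
      rw [hI0π] at h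
      exact h
    have hB2lim : ∀ j ∈ Finset.range (k+1), Tendsto (fun x => ((B2 j x).card : ℝ) / (D x : ℝ))
        atTop (nhds ((4/π^2) * ((π/2) * ∫ t in Set.Icc (max 0 (z j - ε)) (min π (z j + ε)), Real.sin t ^ 2))) := by
      intro j hj
      rw [Finset.mem_range] at hj
      have h := hequi' 0 π (max 0 (z j - ε)) (min π (z j + ε)) le_rfl hπ.le le_rfl
        (le_max_left _ _) (hmaxmin j (by omega)) (min_le_left _ _)
      rw [hI0π] at h
      exact h
    set SB : ℝ := ∑ j ∈ Finset.range (k+1),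
      ((4/π^2) * ((∫ t in Set.Icc (max 0 (z j - ε)) (min π (z j + ε)), Real.sin t ^ 2) * (π/2)) +
       (4/π^2) * ((π/2) * ∫ t in Set.Icc (max 0 (z j - ε)) (min π (z j + ε)), Real.sin t ^ 2)) with hSBdef
    have hBlim : Tendsto (fun x => (∑ j ∈ Finset.range (k+1), (((B1 j x).card:ℝ) + ((B2 j x).card:ℝ))) / (D x : ℝ))
        atTop (nhds SB) := by
      simp only [Finset.sum_div, add_div]
      exact tendsto_finset_sum _ (fun j hj => ((hB1lim j hj).add (hB2lim j hj)))
    have hclipInt : ∀ j : ℕ, j ≤ k →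
        (0 ≤ ∫ t in Set.Icc (max 0 (z j - ε)) (min π (z j + ε)), Real.sin t ^ 2) ∧
        (∫ t in Set.Icc (max 0 (z j - ε)) (min π (z j + ε)), Real.sin t ^ 2) ≤ 2*ε := by
      intro j hj
      refine ⟨integral_sin_sq_nonneg _ _, ?_⟩
      have h1 := integral_sin_sq_le _ _ (hmaxmin j hj)
      have h2 : min π (z j + ε) ≤ z j + ε := min_le_right _ _
      have h3 : z j - ε ≤ max 0 (z j - ε) := le_max_right _ _
      linarith
    have hSBub : SB ≤ (k+1)*(8*ε/π) := by
      rw [hSBdef]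
      calc ∑ j ∈ Finset.range (k+1), ((4/π^2) * ((∫ t in Set.Icc (max 0 (z j - ε)) (min π (z j + ε)), Real.sin t ^ 2) * (π/2)) +
            (4/π^2) * ((π/2) * ∫ t in Set.Icc (max 0 (z j - ε)) (min π (z j + ε)), Real.sin t ^ 2))
          ≤ ∑ _j ∈ Finset.range (k+1), (8*ε/π) := by
            apply Finset.sum_le_sum
            intro j hj
            rw [Finset.mem_range] at hj
            obtain ⟨hnn, hub⟩ := hclipInt j (by omega)
            set I := ∫ t in Set.Icc (max 0 (z j - ε)) (min π (z j + ε)), Real.sin t ^ 2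
            have he : (4/π^2) * (I * (π/2)) + (4/π^2) * ((π/2) * I) = 4*I/π := by
              field_simp; ring
            rw [he]
            rw [div_le_div_iff₀ hπ hπ]
            nlinarith
        _ = (k+1)*(8*ε/π) := by
            rw [Finset.sum_const, Finset.card_range, nsmul_eq_mul]
            push_cast; ring
    have hSBnn : 0 ≤ SB := by
      rw [hSBdef]
      apply Finset.sum_nonneg
      intro j hj
      rw [Finset.mem_range] at hj
      obtain ⟨hnn, _⟩ := hclipInt j (by omega)
      exact add_nonneg (mul_nonneg (by positivity) (mul_nonneg hnn (by positivity)))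
        (mul_nonneg (by positivity) (mul_nonneg (by positivity) hnn))
    have hPlim : Tendsto (fun x : ℕ => ((P₀:ℝ)+1) / (D x : ℝ)) atTop (nhds 0) :=
      Tendsto.div_atTop tendsto_const_nhds hDtop
    -- injectivity of good intervals
    have hginj : ∀ (j j' : ℕ) (t : ℝ), t ∈ Set.Icc (z j + ε) (z (j+1) - ε) →
        t ∈ Set.Icc (z j' + ε) (z (j'+1) - ε) → j = j' := by
      intro j j' t h h'
      by_contra hne
      rcases Nat.lt_or_ge j j' with hlt | hge
      · have hz1 : z (j+1) ≤ z j' := hzmono hlt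
        have h2 := h.2; have h3 := h'.1; linarith
      · have hlt : j' < j := by omega
        have hz1 : z (j'+1) ≤ z j := hzmono hlt
        have h2 := h.1; have h3 := h'.2; linarith
    -- classification of large primes
    have hclassify : ∀ p, p.Prime → P₀ < p →
        (∃ j ≤ k, θ₁ p ∈ Set.Icc (max 0 (z j - ε)) (min π (z j + ε))) ∨
        (∃ j ≤ k, θ₂ p ∈ Set.Icc (max 0 (z j - ε)) (min π (z j + ε))) ∨
        (∃ j, j < k ∧ ∃ l, l < k ∧ θ₁ p ∈ Set.Icc (z j + ε) (z (j+1) - ε) ∧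
          θ₂ p ∈ Set.Icc (z l + ε) (z (l+1) - ε) ∧ 0 < (-1:ℝ)^(j+l) * (b₁ p * b₂ p)) := by
      intro p hp hpP
      by_cases h1 : ∃ j ≤ k, θ₁ p ∈ Set.Icc (z j - ε) (z j + ε)
      · obtain ⟨j, hj, hm⟩ := h1
        exact Or.inl ⟨j, hj, ⟨max_le (hθ₁ p hp).1.le hm.1, le_min (hθ₁ p hp).2.le hm.2⟩⟩
      by_cases h2 : ∃ j ≤ k, θ₂ p ∈ Set.Icc (z j - ε) (z j + ε)
      · obtain ⟨j, hj, hm⟩ := h2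
        exact Or.inr (Or.inl ⟨j, hj, ⟨max_le (hθ₂ p hp).1.le hm.1, le_min (hθ₂ p hp).2.le hm.2⟩⟩)
      push_neg at h1 h2
      have h1' : ∀ j ≤ k, θ₁ p ∉ Set.Icc ((j:ℝ) * π / k - ε) ((j:ℝ) * π / k + ε) := by
        intro j hj; have := h1 j hj; simpa [hzdef] using this
      have h2' : ∀ j ≤ k, θ₂ p ∉ Set.Icc ((j:ℝ) * π / k - ε) ((j:ℝ) * π / k + ε) := by
        intro j hj; have := h2 j hj; simpa [hzdef] using this
      obtain ⟨j, hj, hm1⟩ := covering k hk1 ε (θ₁ p) (hθ₁ p hp) h1'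
      obtain ⟨l, hl, hm2⟩ := covering k hk1 ε (θ₂ p) (hθ₂ p hp) h2'
      have hm1' : θ₁ p ∈ Set.Icc (z j + ε) (z (j+1) - ε) := by
        refine ⟨?_, ?_⟩
        · simpa [hzdef] using hm1.1
        · have := hm1.2; simp only [hzdef, Nat.cast_add, Nat.cast_one]; exact this
      have hm2' : θ₂ p ∈ Set.Icc (z l + ε) (z (l+1) - ε) := by
        refine ⟨?_, ?_⟩
        · simpa [hzdef] using hm2.1
        · have := hm2.2; simp only [hzdef, Nat.cast_add, Nat.cast_one]; exact this
      have hs1 := bsign θ₁ c₁ b₁ hθ₁ hc₁ hb₁ j p hp hpP hm1'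
      have hs2 := bsign θ₂ c₂ b₂ hθ₂ hc₂ hb₂ l p hp hpP hm2'
      have hre : ((-1:ℝ)^j * b₁ p) * ((-1:ℝ)^l * b₂ p) = (-1:ℝ)^(j+l) * (b₁ p * b₂ p) := by
        rw [pow_add]; ring
      exact Or.inr (Or.inr ⟨j, hj, l, hl, hm1', hm2', hre ▸ mul_pos hs1 hs2⟩)
    -- the value of the main term
    have hMnn : ∀ j : ℕ, 0 ≤ M j := fun j => integral_sin_sq_nonneg _ _
    have hcastk : ∀ j : ℕ, j < k → ((k - 1 - j : ℕ) : ℝ) = (k:ℝ) - 1 - j := by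
      intro j hj
      have h : (k - 1 - j) + (j + 1) = k := by omega
      have h2 : ((k - 1 - j : ℕ) : ℝ) + ((j:ℝ) + 1) = (k:ℝ) := by exact_mod_cast h
      linarith
    have hrefl : ∀ j : ℕ, j < k → M (k - 1 - j) = M j := by
      intro j hj
      have hc1 : z (k-1-j) + ε = π - (z (j+1) - ε) := by
        simp only [hzdef]
        rw [hcastk j hj]
        push_cast
        field_simp
        ring
      have hc2 : z ((k-1-j)+1) - ε = π - (z j + ε) := by
        have hc : ((k - 1 - j + 1 : ℕ) : ℝ) = (k:ℝ) - j := by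
          have h : (k - 1 - j + 1) + j = k := by omega
          have h2 : ((k - 1 - j + 1 : ℕ) : ℝ) + (j:ℝ) = (k:ℝ) := by exact_mod_cast h
          linarith
        simp only [hzdef]
        rw [hc]
        field_simp
        ring
      rw [hMdef]
      simp only []
      rw [hc1, hc2]
      exact (sin_sq_reflect _ _ (hgood1 j)).symm
    set A : ℝ := ∑ j ∈ (Finset.range k).filter (fun j => Even j), M j with hAdef
    have hk2 : k % 2 = 0 := Nat.even_iff.1 hkE
    have hOA : ∑ j ∈ (Finset.range k).filter (fun j => ¬ Even j), M j = A := by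
      rw [hAdef]
      refine Finset.sum_nbij' (fun j => k - 1 - j) (fun j => k - 1 - j) ?_ ?_ ?_ ?_ ?_
      · intro a ha
        simp only [Finset.mem_filter, Finset.mem_range, Nat.even_iff] at *
        omega
      · intro a ha
        simp only [Finset.mem_filter, Finset.mem_range, Nat.even_iff] at *
        omega
      · intro a ha
        simp only [Finset.mem_filter, Finset.mem_range] at ha
        show k - 1 - (k - 1 - a) = a
        omega
      · intro a ha
        simp only [Finset.mem_filter, Finset.mem_range] at ha
        show k - 1 - (k - 1 - a) = a
        omega
      · intro a ha
        simp only [Finset.mem_filter, Finset.mem_range] at ha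
        exact (hrefl a ha.1).symm
    have hAA : A + A = ∑ j ∈ Finset.range k, M j := by
      nth_rewrite 2 [← hOA]
      rw [hAdef]
      exact Finset.sum_filter_add_sum_filter_not _ _ _
    have hM0 : ∀ j : ℕ, (∫ t in Set.Icc (z j) (z (j+1)), Real.sin t ^ 2)
        = (∫ t in Set.Icc (z j) (z j + ε), Real.sin t ^ 2) + M j
          + (∫ t in Set.Icc (z (j+1) - ε) (z (j+1)), Real.sin t ^ 2) := by
      intro j
      have e1 : z j ≤ z j + ε := by linarith
      have e2 : z j + ε ≤ z (j+1) - ε := hgood1 j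
      have e3 : z (j+1) - ε ≤ z (j+1) := by linarith
      rw [hMdef]
      simp only []
      rw [integral_sin_sq_Icc _ _ (le_trans e1 (le_trans e2 e3)),
          integral_sin_sq_Icc _ _ e1, integral_sin_sq_Icc _ _ e2, integral_sin_sq_Icc _ _ e3]
      ring
    have hMlow : ∀ j : ℕ, (∫ t in Set.Icc (z j) (z (j+1)), Real.sin t ^ 2) - 2*ε ≤ M j := by
      intro j
      have h1 := integral_sin_sq_le (z j) (z j + ε) (by linarith)
      have h2 := integral_sin_sq_le (z (j+1) - ε) (z (j+1)) (by linarith)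
      have h3 := hM0 j
      linarith
    have hMhigh : ∀ j : ℕ, M j ≤ (∫ t in Set.Icc (z j) (z (j+1)), Real.sin t ^ 2) := by
      intro j
      have h1 := integral_sin_sq_nonneg (z j) (z j + ε)
      have h2 := integral_sin_sq_nonneg (z (j+1) - ε) (z (j+1))
      have h3 := hM0 j
      linarith
    have hsumM0 : ∑ j ∈ Finset.range k, (∫ t in Set.Icc (z j) (z (j+1)), Real.sin t ^ 2) = π/2 := by
      have hπk0 : (0:ℝ) < π / k := by positivity
      have hform : ∀ j : ℕ, (∫ t in Set.Icc (z j) (z (j+1)), Real.sin t ^ 2)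
          = (Real.sin (z j) * Real.cos (z j)/2 - Real.sin (z (j+1)) * Real.cos (z (j+1))/2) + (π/(k:ℝ))/2 := by
        intro j
        rw [integral_sin_sq_Icc _ _ (by have := hzsucc j; linarith), hzsucc j]
        ring
      simp only [hform]
      rw [Finset.sum_add_distrib, Finset.sum_const, Finset.card_range]
      have htel := Finset.sum_range_sub' (fun j => Real.sin (z j) * Real.cos (z j) / 2) k
      rw [htel, hz0, hzk]
      rw [nsmul_eq_mul]
      simp only [Real.sin_zero, Real.sin_pi]
      field_simp
      ring
    have hsumMlow : π/2 - 2*k*ε ≤ ∑ j ∈ Finset.range k, M j := by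
      have h := Finset.sum_le_sum (fun j (_ : j ∈ Finset.range k) => hMlow j)
      rw [Finset.sum_sub_distrib, hsumM0, Finset.sum_const, Finset.card_range, nsmul_eq_mul] at h
      linarith
    have hsumMhigh : ∑ j ∈ Finset.range k, M j ≤ π/2 := by
      have h := Finset.sum_le_sum (fun j (_ : j ∈ Finset.range k) => hMhigh j)
      rw [hsumM0] at h
      exact h
    have hAlow : π/4 - k*ε ≤ A := by linarith [hAA, hsumMlow]
    have hAhigh : A ≤ π/4 := by linarith [hAA, hsumMhigh]
    have hAnn : 0 ≤ A := by
      rw [hAdef]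
      exact Finset.sum_nonneg (fun j _ => hMnn j)
    have hOPsplit : OP = (((Finset.range k).filter (fun j => Even j)) ×ˢ ((Finset.range k).filter (fun j => ¬ Even j)))
        ∪ (((Finset.range k).filter (fun j => ¬ Even j)) ×ˢ ((Finset.range k).filter (fun j => Even j))) := by
      rw [hOPdef]
      ext jl
      simp only [Finset.mem_filter, Finset.mem_product, Finset.mem_union, Finset.mem_range,
        Nat.even_add, Nat.even_iff]
      omega
    have hdisjEO : Disjoint
        (((Finset.range k).filter (fun j => Even j)) ×ˢ ((Finset.range k).filter (fun j => ¬ Even j)))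
        (((Finset.range k).filter (fun j => ¬ Even j)) ×ˢ ((Finset.range k).filter (fun j => Even j))) := by
      rw [Finset.disjoint_left]
      rintro ⟨j, l⟩ h h'
      simp only [Finset.mem_filter, Finset.mem_product, Finset.mem_range] at h h'
      exact h'.1.2 h.1.2
    have hSGval : (∑ jl ∈ OP, (4/π^2) * (M jl.1 * M jl.2)) = (4/π^2) * (2 * (A * A)) := by
      rw [← Finset.mul_sum]
      congr 1
      rw [hOPsplit, Finset.sum_union hdisjEO, Finset.sum_product, Finset.sum_product]
      rw [← Finset.sum_mul_sum, ← Finset.sum_mul_sum, hOA, ← hAdef]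
      ring
    have hSGub : (∑ jl ∈ OP, (4/π^2) * (M jl.1 * M jl.2)) ≤ 1/2 := by
      rw [hSGval]
      have h1 : A*A ≤ (π/4)*(π/4) := mul_le_mul hAhigh hAhigh hAnn (by positivity)
      calc (4/π^2) * (2 * (A*A)) ≤ (4/π^2) * (2 * ((π/4)*(π/4))) := by gcongr <;> positivity
      _ = 1/2 := by field_simp; ring
    have hSGlb : 1/2 - 4*k*ε/π ≤ (∑ jl ∈ OP, (4/π^2) * (M jl.1 * M jl.2)) := by
      rw [hSGval]
      have h1 : π/4 - A ≤ (k:ℝ)*ε := by linarith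
      have h2 : π/4 + A ≤ π/2 := by linarith
      have h3 : 0 ≤ π/4 - A := by linarith
      have h4 : (π/4)*(π/4) - A*A ≤ ((k:ℝ)*ε)*(π/2) := by nlinarith
      have h5 : (4/π^2) * (2*(A*A)) = 8*(A*A)/π^2 := by ring
      rw [h5, le_div_iff₀ (by positivity : (0:ℝ) < π^2)]
      have h6 : (1/2 - 4*(k:ℝ)*ε/π) * π^2 = π^2/2 - 4*(k:ℝ)*ε*π := by field_simp
      rw [h6]
      nlinarith
    -- counting: upper bound for the negative set
    have hUpNegN : ∀ x : ℕ, (cnt (fun p => b₁ p * b₂ p < 0) x).card ≤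
        (∑ jl ∈ OP, (G jl x).card) +
        ((∑ j ∈ Finset.range (k+1), (B1 j x).card) + (∑ j ∈ Finset.range (k+1), (B2 j x).card) + (P₀+1)) := by
      intro x
      have hsub : cnt (fun p => b₁ p * b₂ p < 0) x ⊆
          ((OP.biUnion (fun jl => G jl x)) ∪ ((Finset.range (k+1)).biUnion (fun j => B1 j x)) ∪
            ((Finset.range (k+1)).biUnion (fun j => B2 j x))) ∪ Finset.range (P₀+1) := by
        intro p hp
        rw [mem_cnt] at hp
        obtain ⟨hpx, hpp, hneg⟩ := hp
        by_cases hpP : p ≤ P₀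
        · exact Finset.mem_union_right _ (Finset.mem_range.2 (by omega))
        push_neg at hpP
        apply Finset.mem_union_left
        rcases hclassify p hpp hpP with ⟨j, hj, hm⟩ | ⟨j, hj, hm⟩ | ⟨j, hj, l, hl, hm1, hm2, hsgn⟩
        · apply Finset.mem_union_left; apply Finset.mem_union_right
          refine Finset.mem_biUnion.2 ⟨j, Finset.mem_range.2 (by omega), ?_⟩
          rw [hB1def]; exact mem_cnt.2 ⟨hpx, hpp, hm, ⟨(hθ₂ p hpp).1.le, (hθ₂ p hpp).2.le⟩⟩
        · apply Finset.mem_union_right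
          refine Finset.mem_biUnion.2 ⟨j, Finset.mem_range.2 (by omega), ?_⟩
          rw [hB2def]; exact mem_cnt.2 ⟨hpx, hpp, ⟨(hθ₁ p hpp).1.le, (hθ₁ p hpp).2.le⟩, hm⟩
        · have hodd : ¬ Even (j + l) := by
            intro he
            rw [he.neg_one_pow, one_mul] at hsgn
            linarith
          apply Finset.mem_union_left; apply Finset.mem_union_left
          refine Finset.mem_biUnion.2 ⟨(j,l), ?_, ?_⟩
          · simp only [hOPdef, Finset.mem_filter, Finset.mem_product, Finset.mem_range]
            exact ⟨⟨hj, hl⟩, hodd⟩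
          · rw [hGdef]; exact mem_cnt.2 ⟨hpx, hpp, hm1, hm2⟩
      have h0 := Finset.card_le_card hsub
      have h1 := Finset.card_union_le ((OP.biUnion fun jl => G jl x) ∪ ((Finset.range (k+1)).biUnion fun j => B1 j x) ∪ ((Finset.range (k+1)).biUnion fun j => B2 j x)) (Finset.range (P₀+1))
      have h2 := Finset.card_union_le ((OP.biUnion fun jl => G jl x) ∪ ((Finset.range (k+1)).biUnion fun j => B1 j x)) ((Finset.range (k+1)).biUnion fun j => B2 j x)
      have h3 := Finset.card_union_le (OP.biUnion fun jl => G jl x) ((Finset.range (k+1)).biUnion fun j => B1 j x)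
      have h4 := Finset.card_biUnion_le (s := OP) (t := fun jl => G jl x)
      have h5 := Finset.card_biUnion_le (s := Finset.range (k+1)) (t := fun j => B1 j x)
      have h6 := Finset.card_biUnion_le (s := Finset.range (k+1)) (t := fun j => B2 j x)
      have h7 : (Finset.range (P₀+1)).card = P₀+1 := Finset.card_range _
      omega
    -- counting: upper bound for the zero set
    have hUpZeroN : ∀ x : ℕ, (cnt (fun p => b₁ p * b₂ p = 0) x).card ≤
        ((∑ j ∈ Finset.range (k+1), (B1 j x).card) + (∑ j ∈ Finset.range (k+1), (B2 j x).card) + (P₀+1)) := by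
      intro x
      have hsub : cnt (fun p => b₁ p * b₂ p = 0) x ⊆
          (((Finset.range (k+1)).biUnion (fun j => B1 j x)) ∪
            ((Finset.range (k+1)).biUnion (fun j => B2 j x))) ∪ Finset.range (P₀+1) := by
        intro p hp
        rw [mem_cnt] at hp
        obtain ⟨hpx, hpp, hzero⟩ := hp
        by_cases hpP : p ≤ P₀
        · exact Finset.mem_union_right _ (Finset.mem_range.2 (by omega))
        push_neg at hpP
        apply Finset.mem_union_left
        rcases hclassify p hpp hpP with ⟨j, hj, hm⟩ | ⟨j, hj, hm⟩ | ⟨j, hj, l, hl, hm1, hm2, hsgn⟩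
        · apply Finset.mem_union_left
          refine Finset.mem_biUnion.2 ⟨j, Finset.mem_range.2 (by omega), ?_⟩
          rw [hB1def]; exact mem_cnt.2 ⟨hpx, hpp, hm, ⟨(hθ₂ p hpp).1.le, (hθ₂ p hpp).2.le⟩⟩
        · apply Finset.mem_union_right
          refine Finset.mem_biUnion.2 ⟨j, Finset.mem_range.2 (by omega), ?_⟩
          rw [hB2def]; exact mem_cnt.2 ⟨hpx, hpp, ⟨(hθ₁ p hpp).1.le, (hθ₁ p hpp).2.le⟩, hm⟩
        · rw [hzero, mul_zero] at hsgn
          exact absurd hsgn (lt_irrefl 0)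
      have h0 := Finset.card_le_card hsub
      have h1 := Finset.card_union_le (((Finset.range (k+1)).biUnion fun j => B1 j x) ∪ ((Finset.range (k+1)).biUnion fun j => B2 j x)) (Finset.range (P₀+1))
      have h2 := Finset.card_union_le ((Finset.range (k+1)).biUnion fun j => B1 j x) ((Finset.range (k+1)).biUnion fun j => B2 j x)
      have h5 := Finset.card_biUnion_le (s := Finset.range (k+1)) (t := fun j => B1 j x)
      have h6 := Finset.card_biUnion_le (s := Finset.range (k+1)) (t := fun j => B2 j x)
      have h7 : (Finset.range (P₀+1)).card = P₀+1 := Finset.card_range _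
      omega
    -- counting: lower bound for the negative set
    have hLowNegN : ∀ x : ℕ, (∑ jl ∈ OP, (G jl x).card) ≤
        (cnt (fun p => b₁ p * b₂ p < 0) x).card + (P₀+1) := by
      intro x
      have hdisj : ∀ jl ∈ OP, ∀ jl' ∈ OP, jl ≠ jl' → Disjoint (G jl x) (G jl' x) := by
        intro jl _ jl' _ hne
        rw [Finset.disjoint_left]
        intro p hp hp'
        simp only [hGdef, mem_cnt] at hp hp'
        exact hne (Prod.ext (hginj _ _ _ hp.2.2.1 hp'.2.2.1) (hginj _ _ _ hp.2.2.2 hp'.2.2.2))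
      have hbu := Finset.card_biUnion hdisj
      have hsub : OP.biUnion (fun jl => G jl x) ⊆ (cnt (fun p => b₁ p * b₂ p < 0) x) ∪ Finset.range (P₀+1) := by
        intro p hp
        obtain ⟨jl, hjl, hpG⟩ := Finset.mem_biUnion.1 hp
        simp only [hGdef, mem_cnt] at hpG
        obtain ⟨hpx, hpp, hm1, hm2⟩ := hpG
        by_cases hpP : p ≤ P₀
        · exact Finset.mem_union_right _ (Finset.mem_range.2 (by omega))
        · push_neg at hpP
          apply Finset.mem_union_left
          have hs1 := bsign θ₁ c₁ b₁ hθ₁ hc₁ hb₁ jl.1 p hpp hpP hm1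
          have hs2 := bsign θ₂ c₂ b₂ hθ₂ hc₂ hb₂ jl.2 p hpp hpP hm2
          simp only [hOPdef, Finset.mem_filter, Finset.mem_product, Finset.mem_range] at hjl
          have hoddp : Odd (jl.1 + jl.2) := Nat.not_even_iff_odd.1 hjl.2
          have hre : ((-1:ℝ)^jl.1 * b₁ p) * ((-1:ℝ)^jl.2 * b₂ p) = (-1:ℝ)^(jl.1+jl.2) * (b₁ p * b₂ p) := by
            rw [pow_add]; ring
          have hpos := mul_pos hs1 hs2
          rw [hre, hoddp.neg_one_pow] at hpos
          rw [mem_cnt]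
          exact ⟨hpx, hpp, by linarith⟩
      have hle := Finset.card_le_card hsub
      have hcu := Finset.card_union_le (cnt (fun p => b₁ p * b₂ p < 0) x) (Finset.range (P₀+1))
      have h7 : (Finset.range (P₀+1)).card = P₀+1 := Finset.card_range _
      omega
    -- put everything together
    have hDpos : ∀ᶠ x : ℕ in atTop, 0 < (D x : ℝ) := hDtop.eventually_gt_atTop 0
    have hGclose := Metric.tendsto_nhds.1 hSumGlim (δ/3) (by linarith)
    have hBclose := Metric.tendsto_nhds.1 hBlim (δ/3) (by linarith)
    have hPclose := Metric.tendsto_nhds.1 hPlim (δ/3) (by linarith)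
    filter_upwards [hDpos, hGclose, hBclose, hPclose] with x hD hG hB hPc
    simp only [Real.dist_eq, abs_sub_lt_iff, sub_zero] at hG hB hPc
    have hdivle : ∀ a b : ℝ, a ≤ b → a / (D x : ℝ) ≤ b / (D x : ℝ) := by
      intro a b h
      exact div_le_div_of_nonneg_right h hD.le
    have hsplit : ∀ a b c : ℝ, (a + (b + c))/(D x:ℝ) = a/(D x:ℝ) + (b/(D x:ℝ) + c/(D x:ℝ)) := by
      intro a b c
      rw [add_div, add_div]
    -- real cast versions of counting bounds
    have hupR : ((cnt (fun p => b₁ p * b₂ p < 0) x).card : ℝ) ≤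
        (∑ jl ∈ OP, ((G jl x).card : ℝ)) +
          ((∑ j ∈ Finset.range (k+1), (((B1 j x).card:ℝ) + ((B2 j x).card:ℝ))) + ((P₀:ℝ)+1)) := by
      have h := hUpNegN x
      rw [Finset.sum_add_distrib]
      exact_mod_cast h
    have hupzR : ((cnt (fun p => b₁ p * b₂ p = 0) x).card : ℝ) ≤
        (0:ℝ) + ((∑ j ∈ Finset.range (k+1), (((B1 j x).card:ℝ) + ((B2 j x).card:ℝ))) + ((P₀:ℝ)+1)) := by
      have h := hUpZeroN x
      rw [Finset.sum_add_distrib, zero_add]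
      exact_mod_cast h
    have hlowR : (∑ jl ∈ OP, ((G jl x).card : ℝ)) ≤
        ((cnt (fun p => b₁ p * b₂ p < 0) x).card : ℝ) + ((P₀:ℝ)+1) := by
      have h := hLowNegN x
      exact_mod_cast h
    have hq1 := hdivle _ _ hupR
    rw [hsplit] at hq1
    have hq2 := hdivle _ _ hupzR
    rw [hsplit] at hq2
    have hq3 := hdivle _ _ hlowR
    rw [add_div] at hq3
    rw [zero_div, zero_add] at hq2
    have hsg1 := hSGlb
    have hsg2 := hSGub
    have hPc' : ((P₀:ℝ)+1) / (D x:ℝ) < δ/3 := lt_of_abs_lt hPc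
    refine ⟨⟨?_, ?_⟩, ?_⟩
    · linarith [hG.2, hPc', hq3]
    · linarith [hG.1, hB.1, hPc', hq1, hSBub]
    · linarith [hB.1, hPc', hq2, hSBub]
  -- choose ε appropriately for each δ'
  have hεchoice : ∀ δ' : ℝ, 0 < δ' → ∃ ε : ℝ, (0 < ε ∧ ε ≤ π/(2*(k:ℝ))) ∧
      4*(k:ℝ)*ε/π ≤ δ'/4 ∧ ((k:ℝ)+1)*(8*ε/π) ≤ δ'/4 := by
    intro δ' hδ'
    set ε := min (π/(2*(k:ℝ))) (δ'*π/(32*((k:ℝ)+1))) with hεdef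
    have hεpos : 0 < ε := lt_min (by positivity) (by positivity)
    have hεle : ε ≤ δ'*π/(32*((k:ℝ)+1)) := min_le_right _ _
    refine ⟨ε, ⟨hεpos, min_le_left _ _⟩, ?_, ?_⟩
    · have h1 : 4*(k:ℝ)*ε/π ≤ 4*((k:ℝ)+1)*ε/π := by
        apply div_le_div_of_nonneg_right _ hπ.le
        nlinarith
      have h2 : 4*((k:ℝ)+1)*ε/π ≤ 4*((k:ℝ)+1)*(δ'*π/(32*((k:ℝ)+1)))/π := by
        apply div_le_div_of_nonneg_right _ hπ.le
        have : (0:ℝ) < (k:ℝ)+1 := by positivity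
        nlinarith
      have h3 : 4*((k:ℝ)+1)*(δ'*π/(32*((k:ℝ)+1)))/π = δ'/8 := by
        field_simp
        ring
      linarith
    · have h2 : ((k:ℝ)+1)*(8*ε/π) ≤ ((k:ℝ)+1)*(8*(δ'*π/(32*((k:ℝ)+1)))/π) := by
        have h0 : (0:ℝ) ≤ (k:ℝ)+1 := by positivity
        apply mul_le_mul_of_nonneg_left _ h0
        apply div_le_div_of_nonneg_right _ hπ.le
        nlinarith
      have h3 : ((k:ℝ)+1)*(8*(δ'*π/(32*((k:ℝ)+1)))/π) = δ'/4 := by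
        field_simp
        ring
      linarith
  constructor
  · refine (tendsto_congr fun x => (hgoal (fun p => b₁ p * b₂ p < 0) x)).2 ?_
    rw [Metric.tendsto_nhds]
    intro δ' hδ'
    obtain ⟨ε, ⟨hε, hεk⟩, hεa, hεb⟩ := hεchoice δ' hδ'
    filter_upwards [key ε hε hεk (δ'/4) (by linarith)] with x hx
    obtain ⟨⟨hl, hu⟩, _⟩ := hx
    rw [Real.dist_eq, abs_sub_lt_iff]
    constructor <;> linarith
  · refine (tendsto_congr fun x => (hgoal (fun p => b₁ p * b₂ p = 0) x)).2 ?_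
    rw [Metric.tendsto_nhds]
    intro δ' hδ'
    obtain ⟨ε, ⟨hε, hεk⟩, hεa, hεb⟩ := hεchoice δ' hδ'
    filter_upwards [key ε hε hεk (δ'/4) (by linarith)] with x hx
    obtain ⟨_, hz⟩ := hx
    rw [Real.dist_eq, sub_zero, abs_lt]
    have hnn : (0:ℝ) ≤ ((cnt (fun p => b₁ p * b₂ p = 0) x).card : ℝ) / (D x : ℝ) :=
      div_nonneg (Nat.cast_nonneg _) (Nat.cast_nonneg _)
    constructor <;> linarith
end
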